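/- arXiv:2004.01557 — 5 statements merged into one kernel-verified Lean document; each statement's English description precedes it below -/
import Mathlib

section
/- Let G be a connected k-transmission regular graph on n vertices with distance signless Laplacian spectrum {2k = μ₁^Q, μ₂^Q, …, μₙ^Q}. Let G{K₁} be the cluster of G with a single rooted vertex, i.e., the graph obtained from G by attaching one pendant vertex to each vertex of G. Then the distance signless Laplacian spectrum of G{K₁} consists of: (a) the eigenvalues k + 2n − 2 + μᵢ^Q ± √((k − μᵢ^Q)² + (n − 2)²) for each distance signless Laplacian eigenvalue μᵢ^Q ≠ 2k of G; and (b) the two eigenvalues 3k + 3n − 2 ± √((k + n)² + (2n − 2)²). -/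
open Finset

/-- The distance matrix of a simple graph, with real entries. -/
noncomputable def distMatrix {V : Type*} [Fintype V] (G : SimpleGraph V) : Matrix V V ℝ :=
  Matrix.of fun u v => (G.dist u v : ℝ)

/-- The transmission of a vertex: the sum of distances to all other vertices. -/
noncomputable def transmission {V : Type*} [Fintype V] (G : SimpleGraph V) (u : V) : ℝ :=
  ∑ v, (G.dist u v : ℝ)

/-- The second transmission degree of a vertex: `T_i = ∑_j d(v_i, v_j) Tr_j`. -/
noncomputable def secondTransmission {V : Type*} [Fintype V] (G : SimpleGraph V) (u : V) : ℝ :=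
  ∑ v, (G.dist u v : ℝ) * transmission G v

/-- The distance Laplacian matrix `L(G) = Tr(G) - D(G)`. -/
noncomputable def distLaplacian {V : Type*} [Fintype V] [DecidableEq V] (G : SimpleGraph V) :
    Matrix V V ℝ :=
  Matrix.diagonal (transmission G) - distMatrix G

/-- The distance signless Laplacian matrix `Q(G) = Tr(G) + D(G)`. -/
noncomputable def distSignlessLaplacian {V : Type*} [Fintype V] [DecidableEq V]
    (G : SimpleGraph V) : Matrix V V ℝ :=
  Matrix.diagonal (transmission G) + distMatrix G

/-- The generalized distance matrix `D_α(G) = α Tr(G) + (1 - α) D(G)`. -/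
noncomputable def genDistMatrix {V : Type*} [Fintype V] [DecidableEq V] (a : ℝ)
    (G : SimpleGraph V) : Matrix V V ℝ :=
  a • Matrix.diagonal (transmission G) + (1 - a) • distMatrix G
/-- The cluster `G{K₁}`: attach one pendant vertex to each vertex of `G`.
The vertex `Sum.inr u` is the pendant vertex attached to `Sum.inl u`. -/
def cluster1 {V : Type*} (G : SimpleGraph V) : SimpleGraph (V ⊕ V) where
  Adj x y :=
    match x, y with
    | Sum.inl u, Sum.inl v => G.Adj u v
    | Sum.inl u, Sum.inr v => u = v
    | Sum.inr u, Sum.inl v => u = v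
    | Sum.inr _, Sum.inr _ => False
  symm := by
    constructor
    rintro (u | u) (v | v) h
    · exact G.adj_symm h
    · exact h.symm
    · exact h.symm
    · exact h.elim
  loopless := by
    constructor
    rintro (u | u) h
    · exact G.irrefl h
    · exact h

section Dist

variable {V : Type*} (G : SimpleGraph V)

@[simp] lemma cluster1_adj_inl_inl (u v : V) :
    (cluster1 G).Adj (Sum.inl u) (Sum.inl v) ↔ G.Adj u v := Iff.rfl

@[simp] lemma cluster1_adj_inr_inl (u v : V) :
    (cluster1 G).Adj (Sum.inr u) (Sum.inl v) ↔ u = v := Iff.rfl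

@[simp] lemma cluster1_adj_inl_inr (u v : V) :
    (cluster1 G).Adj (Sum.inl u) (Sum.inr v) ↔ u = v := Iff.rfl

@[simp] lemma cluster1_adj_inr_inr (u v : V) :
    ¬ (cluster1 G).Adj (Sum.inr u) (Sum.inr v) := fun h => h

/-- The embedding of `G` into `cluster1 G`. -/
def inlHom : G →g cluster1 G := ⟨Sum.inl, fun h => h⟩

lemma cluster1_walk_collapse {x y : V ⊕ V} (w : (cluster1 G).Walk x y) :
    ∃ w' : G.Walk (Sum.elim id id x) (Sum.elim id id y), w'.length ≤ w.length := by
  induction w with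
  | nil => exact ⟨SimpleGraph.Walk.nil, le_rfl⟩
  | @cons a b c h p ih =>
    obtain ⟨w', hw'⟩ := ih
    cases a with
    | inl u =>
      cases b with
      | inl v => exact ⟨SimpleGraph.Walk.cons h w', Nat.succ_le_succ hw'⟩
      | inr v =>
        have h' : u = v := h
        subst h'
        exact ⟨w', le_trans hw' (Nat.le_succ _)⟩
    | inr u =>
      cases b with
      | inl v =>
        have h' : u = v := h
        subst h'
        exact ⟨w', le_trans hw' (Nat.le_succ _)⟩
      | inr v => exact absurd h (by simp)

lemma cluster1_connected (hconn : G.Connected) : (cluster1 G).Connected := by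
  have hV : Nonempty V := hconn.nonempty
  have key : ∀ u v : V, (cluster1 G).Reachable (Sum.inl u) (Sum.inl v) := fun u v =>
    SimpleGraph.Reachable.map (inlHom G) (hconn.preconnected u v)
  have key2 : ∀ u : V, (cluster1 G).Reachable (Sum.inr u) (Sum.inl u) := fun u =>
    SimpleGraph.Adj.reachable (by simp)
  constructor
  rintro (u | u) (v | v)
  · exact key u v
  · exact (key u v).trans (key2 v).symm
  · exact (key2 u).trans (key u v)
  · exact ((key2 u).trans (key u v)).trans (key2 v).symm

lemma cluster1_dist_inl_inl (hconn : G.Connected) (u v : V) :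
    (cluster1 G).dist (Sum.inl u) (Sum.inl v) = G.dist u v := by
  apply le_antisymm
  · obtain ⟨p, hp⟩ := hconn.exists_walk_length_eq_dist u v
    calc (cluster1 G).dist (Sum.inl u) (Sum.inl v) ≤ (p.map (inlHom G)).length :=
          SimpleGraph.dist_le _
      _ = G.dist u v := by rw [SimpleGraph.Walk.length_map, hp]
  · obtain ⟨q, hq⟩ := (cluster1_connected G hconn).exists_walk_length_eq_dist
      (Sum.inl u) (Sum.inl v)
    obtain ⟨w', hw'⟩ := cluster1_walk_collapse G q
    calc G.dist u v ≤ w'.length := SimpleGraph.dist_le _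
      _ ≤ q.length := hw'
      _ = _ := hq

lemma cluster1_dist_inr (hconn : G.Connected) (u : V) (x : V ⊕ V) (hx : x ≠ Sum.inr u) :
    (cluster1 G).dist (Sum.inr u) x = (cluster1 G).dist (Sum.inl u) x + 1 := by
  have hc := cluster1_connected G hconn
  apply le_antisymm
  · calc (cluster1 G).dist (Sum.inr u) x
        ≤ (cluster1 G).dist (Sum.inr u) (Sum.inl u) + (cluster1 G).dist (Sum.inl u) x :=
          hc.dist_triangle
      _ = 1 + (cluster1 G).dist (Sum.inl u) x := by
          rw [SimpleGraph.dist_eq_one_iff_adj.2 (by simp)]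
      _ = _ := by omega
  · obtain ⟨q, hq⟩ := hc.exists_walk_length_eq_dist (Sum.inr u) x
    match q with
    | SimpleGraph.Walk.nil => exact absurd rfl hx
    | @SimpleGraph.Walk.cons _ _ _ b _ h p =>
      match b, h with
      | Sum.inl w, (h : u = w) =>
        subst h
        have : (cluster1 G).dist (Sum.inl u) x ≤ p.length := SimpleGraph.dist_le _
        have hq' : p.length + 1 = (cluster1 G).dist (Sum.inr u) x := hq
        omega

lemma cluster1_dist_inl_inr (hconn : G.Connected) (u v : V) :
    (cluster1 G).dist (Sum.inl u) (Sum.inr v) = G.dist u v + 1 := by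
  rw [SimpleGraph.dist_comm, cluster1_dist_inr G hconn v (Sum.inl u) (by simp),
    SimpleGraph.dist_comm, cluster1_dist_inl_inl G hconn, SimpleGraph.dist_comm]

lemma cluster1_dist_inr_inl (hconn : G.Connected) (u v : V) :
    (cluster1 G).dist (Sum.inr u) (Sum.inl v) = G.dist u v + 1 := by
  rw [cluster1_dist_inr G hconn u (Sum.inl v) (by simp), cluster1_dist_inl_inl G hconn]

lemma cluster1_dist_inr_inr (hconn : G.Connected) (u v : V) (huv : u ≠ v) :
    (cluster1 G).dist (Sum.inr u) (Sum.inr v) = G.dist u v + 2 := by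
  rw [cluster1_dist_inr G hconn u (Sum.inr v) (by simpa using (Ne.symm huv)),
    cluster1_dist_inl_inr G hconn]

end Dist

section Trans

variable {V : Type*} [Fintype V] [DecidableEq V] (G : SimpleGraph V)

lemma transmission_eq_sum (u : V) : transmission G u = ∑ v, (G.dist u v : ℝ) := rfl

lemma sum_dist_col (k : ℝ) (hreg : ∀ u, transmission G u = k) (v : V) :
    ∑ u, (G.dist u v : ℝ) = k := by
  rw [← hreg v, transmission_eq_sum]
  exact Finset.sum_congr rfl fun u _ => by rw [SimpleGraph.dist_comm]

lemma cluster1_transmission_inl (hconn : G.Connected) {n : ℕ} (hn : Fintype.card V = n)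
    {k : ℝ} (hreg : ∀ u, transmission G u = k) (u : V) :
    transmission (cluster1 G) (Sum.inl u) = 2 * k + n := by
  rw [transmission_eq_sum, Fintype.sum_sum_type]
  have h1 : ∀ v : V, ((cluster1 G).dist (Sum.inl u) (Sum.inl v) : ℝ) = (G.dist u v : ℝ) := by
    intro v; rw [cluster1_dist_inl_inl G hconn]
  have h2 : ∀ v : V, ((cluster1 G).dist (Sum.inl u) (Sum.inr v) : ℝ) = (G.dist u v : ℝ) + 1 := by
    intro v; rw [cluster1_dist_inl_inr G hconn]; push_cast; ring
  rw [Finset.sum_congr rfl fun v _ => h1 v, Finset.sum_congr rfl fun v _ => h2 v,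
    Finset.sum_add_distrib, Finset.sum_const, ← transmission_eq_sum, hreg u]
  simp [hn]; ring

lemma cluster1_transmission_inr (hconn : G.Connected) {n : ℕ} (hn : Fintype.card V = n)
    {k : ℝ} (hreg : ∀ u, transmission G u = k) (u : V) :
    transmission (cluster1 G) (Sum.inr u) = 2 * k + 3 * n - 2 := by
  have hn1 : 1 ≤ n := by
    have : Nonempty V := hconn.nonempty
    rw [← hn]; exact Fintype.card_pos
  rw [transmission_eq_sum, Fintype.sum_sum_type]
  have h1 : ∀ v : V, ((cluster1 G).dist (Sum.inr u) (Sum.inl v) : ℝ) = (G.dist u v : ℝ) + 1 := by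
    intro v; rw [cluster1_dist_inr_inl G hconn]; push_cast; ring
  have key : ∑ v, ((cluster1 G).dist (Sum.inr u) (Sum.inr v) : ℝ)
      = ∑ v ∈ Finset.univ.erase u, ((G.dist u v : ℝ) + 2) := by
    rw [← Finset.add_sum_erase _ _ (Finset.mem_univ u)]
    rw [SimpleGraph.dist_self]
    rw [Nat.cast_zero, zero_add]
    exact Finset.sum_congr rfl fun v hv => by
      rw [cluster1_dist_inr_inr G hconn u v (Finset.ne_of_mem_erase hv).symm]; push_cast; ring
  have key2 : ∑ v ∈ Finset.univ.erase u, (G.dist u v : ℝ) = k := by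
    have := Finset.add_sum_erase Finset.univ (fun v => (G.dist u v : ℝ)) (Finset.mem_univ u)
    simp only [SimpleGraph.dist_self, Nat.cast_zero, zero_add] at this
    rw [← transmission_eq_sum, hreg u] at this
    exact this
  rw [Finset.sum_congr rfl fun v _ => h1 v, Finset.sum_add_distrib, Finset.sum_const,
    ← transmission_eq_sum, hreg u, key, Finset.sum_add_distrib, key2, Finset.sum_const,
    Finset.card_erase_of_mem (Finset.mem_univ u)]
  simp [hn]
  have : ((n - 1 : ℕ) : ℝ) = (n : ℝ) - 1 := by
    push_cast [hn1]; ring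
  rw [this]; ring

end Trans

/-- all-ones matrix -/
def allOnes (V : Type*) (F : Type*) [One F] : Matrix V V F := Matrix.of fun _ _ => 1

section Blocks

variable {V : Type*} [Fintype V] [DecidableEq V] (G : SimpleGraph V)

lemma Q_eq_smul_one_add {k : ℝ} (hreg : ∀ u, transmission G u = k) :
    distSignlessLaplacian G = k • 1 + distMatrix G := by
  rw [distSignlessLaplacian, Matrix.smul_one_eq_diagonal]
  congr 1
  exact congrArg _ (funext hreg)

lemma cluster1_Q_blocks (hconn : G.Connected) {n : ℕ} (hn : Fintype.card V = n)
    {k : ℝ} (hreg : ∀ u, transmission G u = k) :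
    distSignlessLaplacian (cluster1 G) = Matrix.fromBlocks
      ((2*k+(n:ℝ)) • 1 + distMatrix G) (distMatrix G + allOnes V ℝ)
      (distMatrix G + allOnes V ℝ) ((2*k+3*(n:ℝ)-4) • 1 + distMatrix G + 2 • allOnes V ℝ) := by
  ext x y
  rcases x with u | u <;> rcases y with v | v
  · by_cases huv : u = v
    · subst huv
      simp [distSignlessLaplacian, distMatrix, Matrix.add_apply, Matrix.diagonal_apply,
        cluster1_transmission_inl G hconn hn hreg, SimpleGraph.dist_self, allOnes,
        Matrix.smul_apply, Matrix.one_apply]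
    · simp [distSignlessLaplacian, distMatrix, Matrix.add_apply, Matrix.diagonal_apply,
        huv, cluster1_dist_inl_inl G hconn, allOnes, Matrix.smul_apply, Matrix.one_apply]
  · simp [distSignlessLaplacian, distMatrix, Matrix.add_apply, Matrix.diagonal_apply,
      cluster1_dist_inl_inr G hconn, allOnes, Matrix.smul_apply, Matrix.one_apply]
  · simp [distSignlessLaplacian, distMatrix, Matrix.add_apply, Matrix.diagonal_apply,
      cluster1_dist_inr_inl G hconn, allOnes, Matrix.smul_apply, Matrix.one_apply]
  · by_cases huv : u = v
    · subst huv
      simp [distSignlessLaplacian, distMatrix, Matrix.add_apply, Matrix.diagonal_apply,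
        cluster1_transmission_inr G hconn hn hreg, SimpleGraph.dist_self, allOnes,
        Matrix.smul_apply, Matrix.one_apply]
      ring
    · simp [distSignlessLaplacian, distMatrix, Matrix.add_apply, Matrix.diagonal_apply,
        huv, cluster1_dist_inr_inr G hconn u v huv, allOnes,
        Matrix.smul_apply, Matrix.one_apply]

end Blocks

section DetHelpers

open Polynomial

variable {W : Type*} [Fintype W] [DecidableEq W] {F : Type*}

lemma eval_charpoly' [CommRing F] (M : Matrix W W F) (r : F) :
    (M.charpoly).eval r = (r • 1 - M).det := by
  have h : ((Matrix.charmatrix M).map (evalRingHom r)) = r • 1 - M := by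
    ext i j
    by_cases hij : i = j
    · subst hij
      simp [Matrix.charmatrix_apply_eq, Matrix.sub_apply, Matrix.smul_apply, Matrix.one_apply]
    · simp [Matrix.charmatrix_apply_ne _ _ _ hij, Matrix.sub_apply, Matrix.smul_apply,
        Matrix.one_apply_ne hij]
  have h2 := RingHom.map_det (evalRingHom r) (Matrix.charmatrix M)
  rw [RingHom.mapMatrix_apply, h] at h2
  rw [Matrix.charpoly, ← h2]
  rfl

lemma det_c_one_sub_d_smul [Field F] (M : Matrix W W F) (μ' : W → F)
    (hM : M.charpoly = ((Finset.univ.val.map μ').map fun r => X - C r).prod)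
    (c d : F) (hd : d ≠ 0) :
    (c • (1 : Matrix W W F) - d • M).det = ∏ v, (c - d * μ' v) := by
  have h1 : c • (1 : Matrix W W F) - d • M = d • ((d⁻¹ * c) • 1 - M) := by
    rw [smul_sub, smul_smul, ← mul_assoc, mul_inv_cancel₀ hd, one_mul]
  rw [h1, Matrix.det_smul, ← eval_charpoly']
  rw [hM, eval_multiset_prod, Multiset.map_map, Multiset.map_map]
  rw [show ((eval (d⁻¹ * c) ∘ fun r => X - C r) ∘ μ') = fun v => d⁻¹ * c - μ' v from
    funext fun v => by simp]
  rw [← Finset.prod_eq_multiset_prod, ← Finset.card_univ, ← Finset.prod_const,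
    ← Finset.prod_mul_distrib]
  exact Finset.prod_congr rfl fun v _ => by field_simp

lemma det_one_sub_smul_allOnes [CommRing F] (t : F) :
    (1 - t • allOnes W F).det = 1 - (Fintype.card W : F) * t := by
  have h : (1 : Matrix W W F) - t • allOnes W F
      = (1 : Matrix W W F) + Matrix.replicateCol Unit (fun _ : W => -t) * Matrix.replicateRow Unit (fun _ : W => (1 : F)) := by
    ext i j
    simp [allOnes, Matrix.mul_apply, Matrix.replicateCol, Matrix.replicateRow, sub_eq_add_neg]
  rw [h, Matrix.det_one_add_replicateCol_mul_replicateRow]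
  simp [dotProduct]
  ring

lemma det_sub_smul_allOnes [Field F] (M : Matrix W W F) (g e : F) (hg : g ≠ 0)
    (hMJ : M * allOnes W F = g • allOnes W F) :
    (M - e • allOnes W F).det = M.det * (1 - (Fintype.card W : F) * (e / g)) := by
  have h1 : M - e • allOnes W F = M * (1 - (e / g) • allOnes W F) := by
    rw [Matrix.mul_sub, Matrix.mul_one, Matrix.mul_smul, hMJ, smul_smul, div_mul_cancel₀ _ hg]
  rw [h1, Matrix.det_mul, det_one_sub_smul_allOnes]

lemma det_fromBlocks_comm [Field F] (A B D : Matrix W W F) [Invertible A]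
    (hAB : A * B = B * A) :
    (Matrix.fromBlocks A B B D).det = (A * D - B * B).det := by
  rw [Matrix.det_fromBlocks₁₁, ← Matrix.det_mul, Matrix.mul_sub]
  congr 2
  calc A * (B * ⅟A * B) = B * A * ⅟A * B := by
        simp only [← Matrix.mul_assoc]
        rw [hAB]
    _ = B * (A * ⅟A) * B := by rw [Matrix.mul_assoc B A]
    _ = B * B := by rw [mul_invOf_self, Matrix.mul_one]

end DetHelpers

section Quad

lemma quad_factor {A : Type*} [CommRing A] (k n m s x : A)
    (hs : s ^ 2 = (k - m) ^ 2 + (n - 2) ^ 2) :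
    (x - (k + n)) * (x - (k + 3 * n - 4)) - k ^ 2
      - ((x - (k + n)) + (x - (k + 3 * n - 4)) - 2 * k) * m
    = (x - (k + 2 * n - 2 + m + s)) * (x - (k + 2 * n - 2 + m - s)) := by
  linear_combination hs

lemma quad_factor0 {A : Type*} [CommRing A] (k n s x : A)
    (hs : s ^ 2 = (k + n) ^ 2 + (2 * n - 2) ^ 2) :
    (x - (k + n)) * (x - (k + 3 * n - 4)) - k ^ 2
      - ((x - (k + n)) + (x - (k + 3 * n - 4)) - 2 * k) * (2 * k)
      - n * (2 * (x - (k + n)) - 2 * k + n)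
    = (x - (3 * k + 3 * n - 2 + s)) * (x - (3 * k + 3 * n - 2 - s)) := by
  linear_combination hs

end Quad

section MapCharpoly

open Polynomial

lemma map_charpoly_frac {W : Type*} [Fintype W] [DecidableEq W] {A B : Type*} [CommRing A]
    [CommRing B] (M : Matrix W W A) (φ : Polynomial A →+* B) :
    φ M.charpoly = ((φ X) • (1 : Matrix W W B) - M.map (φ.comp Polynomial.C)).det := by
  have h : (Matrix.charmatrix M).map φ = (φ X) • 1 - M.map (φ.comp Polynomial.C) := by
    ext i j
    by_cases hij : i = j
    · subst hij
      simp [Matrix.charmatrix_apply_eq, Matrix.sub_apply, Matrix.smul_apply, Matrix.one_apply,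
        Matrix.map_apply]
    · simp [Matrix.charmatrix_apply_ne _ _ _ hij, Matrix.sub_apply, Matrix.smul_apply,
        Matrix.one_apply_ne hij, Matrix.map_apply]
  have h2 := RingHom.map_det φ (Matrix.charmatrix M)
  rw [RingHom.mapMatrix_apply, h] at h2
  rw [Matrix.charpoly, h2]

lemma coeff_ne_imp_ne_zero {A : Type*} [CommRing A] {p : Polynomial A} {i : ℕ}
    (h : p.coeff i ≠ 0) : p ≠ 0 := fun h0 => h (by simp [h0])

end MapCharpoly

noncomputable def FR : Type := FractionRing (Polynomial ℝ)
noncomputable instance : Field FR := inferInstanceAs (Field (FractionRing (Polynomial ℝ)))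
noncomputable instance : Algebra (Polynomial ℝ) FR :=
  inferInstanceAs (Algebra (Polynomial ℝ) (FractionRing (Polynomial ℝ)))
instance : IsFractionRing (Polynomial ℝ) FR :=
  inferInstanceAs (IsFractionRing (Polynomial ℝ) (FractionRing (Polynomial ℝ)))

open Polynomial in
set_option maxHeartbeats 2000000 in
theorem stmt1 {V : Type*} [Fintype V] [DecidableEq V] (G : SimpleGraph V)
    (hconn : G.Connected) (n : ℕ) (hn : Fintype.card V = n) (k : ℝ)
    (hreg : ∀ u, transmission G u = k)
    (μ : V → ℝ)
    (hspec : (distSignlessLaplacian G).charpoly.roots = Finset.univ.val.map μ)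
    (v₀ : V) (hv₀ : μ v₀ = 2 * k) (hne : ∀ v, v ≠ v₀ → μ v ≠ 2 * k) :
    (distSignlessLaplacian (cluster1 G)).charpoly.roots =
      ((Finset.univ.erase v₀).val.bind fun v =>
        ({k + 2 * (n : ℝ) - 2 + μ v + Real.sqrt ((k - μ v) ^ 2 + ((n : ℝ) - 2) ^ 2),
          k + 2 * (n : ℝ) - 2 + μ v - Real.sqrt ((k - μ v) ^ 2 + ((n : ℝ) - 2) ^ 2)} :
            Multiset ℝ))
      + {3 * k + 3 * (n : ℝ) - 2 +
           Real.sqrt ((k + (n : ℝ)) ^ 2 + (2 * (n : ℝ) - 2) ^ 2),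
         3 * k + 3 * (n : ℝ) - 2 -
           Real.sqrt ((k + (n : ℝ)) ^ 2 + (2 * (n : ℝ) - 2) ^ 2)} := by
  classical
  -- abbreviations
  set Q : Matrix V V ℝ := distSignlessLaplacian G with hQdef
  set φ : Polynomial ℝ →+* FR := algebraMap (Polynomial ℝ) FR with hφdef
  set ψ : ℝ →+* FR := φ.comp (Polynomial.C : ℝ →+* Polynomial ℝ) with hψdef
  have hφ : Function.Injective φ := IsFractionRing.injective (Polynomial ℝ) FR
  set QF : Matrix V V FR := Q.map ψ with hQFdef
  set JF : Matrix V V FR := allOnes V FR with hJFdef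
  set xF : FR := φ X with hxFdef
  set kF : FR := ψ k with hkFdef
  set nF : FR := ψ (n : ℝ) with hnFdef
  -- the square roots
  set s : V → ℝ := fun v => Real.sqrt ((k - μ v) ^ 2 + ((n : ℝ) - 2) ^ 2) with hsdef
  set s₀ : ℝ := Real.sqrt ((k + (n : ℝ)) ^ 2 + (2 * (n : ℝ) - 2) ^ 2) with hs₀def
  have hs_sq : ∀ v, s v ^ 2 = (k - μ v) ^ 2 + ((n : ℝ) - 2) ^ 2 := fun v =>
    Real.sq_sqrt (by positivity)
  have hs₀_sq : s₀ ^ 2 = (k + (n : ℝ)) ^ 2 + (2 * (n : ℝ) - 2) ^ 2 :=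
    Real.sq_sqrt (by positivity)
  -- Step 1: charpoly of Q as a product
  have hQprod : Q.charpoly = ((Finset.univ.val.map μ).map fun r => X - C r).prod := by
    have hmonic : Q.charpoly.Monic := Q.charpoly_monic
    have hcard : Q.charpoly.roots.card = Q.charpoly.natDegree := by
      rw [hspec, Matrix.charpoly_natDegree_eq_dim]
      simp
    have hsplits := (Polynomial.splits_iff_card_roots).2 hcard
    have := (Polynomial.prod_multiset_X_sub_C_of_monic_of_roots_card_eq hmonic hcard).symm
    rwa [hspec] at this
  -- Step 2: charpoly of QF as a product
  have hQFprod : QF.charpoly = ((Finset.univ.val.map (fun v => ψ (μ v))).map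
      fun r => X - C r).prod := by
    rw [hQFdef, Matrix.charpoly_map, hQprod, ← Polynomial.coe_mapRingHom, map_multiset_prod,
      Multiset.map_map, Multiset.map_map, Multiset.map_map]
    congr 1
    apply Multiset.map_congr rfl
    intro v _
    simp
  -- Step 3: matrix relations
  have hrow : ∀ u, ∑ v, Q u v = 2 * k := by
    intro u
    have h2 : ∑ x, distMatrix G u x = transmission G u := rfl
    simp only [hQdef, distSignlessLaplacian, Matrix.add_apply, Finset.sum_add_distrib]
    rw [show ∑ v, Matrix.diagonal (transmission G) u v = transmission G u by
      simp [Matrix.diagonal_apply], h2, hreg]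
    ring
  have hcol : ∀ v, ∑ u, Q u v = 2 * k := by
    intro v
    simp only [hQdef, distSignlessLaplacian, Matrix.add_apply, Finset.sum_add_distrib]
    rw [show ∑ u, Matrix.diagonal (transmission G) u v = transmission G v by
      simp [Matrix.diagonal_apply], hreg]
    rw [show ∑ u, distMatrix G u v = k from sum_dist_col G k hreg v]
    ring
  have hQJ : QF * JF = (2 * kF) • JF := by
    ext u v
    simp only [Matrix.mul_apply, hJFdef, allOnes, Matrix.of_apply, Matrix.smul_apply, mul_one,
      hQFdef, Matrix.map_apply, smul_eq_mul]
    rw [← map_sum, hrow u, hkFdef, map_mul, map_ofNat]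
  have hJQ : JF * QF = (2 * kF) • JF := by
    ext u v
    simp only [Matrix.mul_apply, hJFdef, allOnes, Matrix.of_apply, Matrix.smul_apply, one_mul, mul_one,
      hQFdef, Matrix.map_apply, smul_eq_mul]
    rw [← map_sum, hcol v, hkFdef, map_mul, map_ofNat]
  have hJJ : JF * JF = nF • JF := by
    ext u v
    simp only [Matrix.mul_apply, hJFdef, allOnes, Matrix.of_apply, Matrix.smul_apply, mul_one,
      smul_eq_mul, Finset.sum_const, Finset.card_univ, hn, nsmul_eq_mul]
    rw [hnFdef]
    simp
  have hcardF : (Fintype.card V : FR) = nF := by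
    rw [hn, hnFdef]
    simp
  -- entrywise description of Q
  have hQe : ∀ u v : V, Q u v = (if u = v then k else 0) + distMatrix G u v := by
    intro u v
    rw [hQdef, distSignlessLaplacian, Matrix.add_apply, Matrix.diagonal_apply]
    congr 1
    split <;> simp [hreg]
  -- Step 4/5 : the mapped charmatrix of the cluster as a block matrix
  have hblocks : xF • (1 : Matrix (V ⊕ V) (V ⊕ V) FR) - (distSignlessLaplacian (cluster1 G)).map ψ
      = Matrix.fromBlocks ((xF - (kF + nF)) • 1 - QF) (kF • 1 - QF - JF)
        (kF • 1 - QF - JF) ((xF - (kF + 3 * nF - 4)) • 1 - QF - (2 : FR) • JF) := by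
    rw [cluster1_Q_blocks G hconn hn hreg]
    ext x y
    rcases x with u | u <;> rcases y with v | v <;>
      simp only [Matrix.sub_apply, Matrix.smul_apply, Matrix.one_apply, Matrix.map_apply,
        Matrix.fromBlocks_apply₁₁, Matrix.fromBlocks_apply₁₂, Matrix.fromBlocks_apply₂₁,
        Matrix.fromBlocks_apply₂₂, Matrix.add_apply, allOnes, Matrix.of_apply, hQFdef,
        Sum.inl.injEq, Sum.inr.injEq, smul_eq_mul, reduceCtorEq, if_false, hQe]
    all_goals
      by_cases huv : u = v
      · subst huv
        simp [hkFdef, hnFdef, hxFdef, hJFdef, allOnes, apply_ite ψ, map_ofNat]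
        try ring
      · simp [huv, hkFdef, hnFdef, hxFdef, hJFdef, allOnes, apply_ite ψ, map_ofNat]
        try ring
-- scalar abbreviations
  set α : FR := xF - (kF + nF) with hα
  set β : FR := xF - (kF + 3 * nF - 4) with hβ
  set cc : FR := α * β - kF ^ 2 with hcc
  set dd : FR := α + β - 2 * kF with hdd
  set ee : FR := 2 * α - 2 * kF + nF with hee
  set gg : FR := cc - dd * (2 * kF) with hgg
  have hφ_ne : ∀ p : Polynomial ℝ, p ≠ 0 → φ p ≠ 0 := fun p hp h =>
    hp (hφ (by rw [h, map_zero]))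
  have hCψ : ∀ a : ℝ, φ (C a) = ψ a := fun a => by rw [hψdef]; rfl
  have hlin : ∀ a : ℝ, xF - ψ a ≠ 0 := by
    intro a
    have h : xF - ψ a = φ (X - C a) := by rw [map_sub, hxFdef, hCψ]
    rw [h]
    exact hφ_ne _ (Polynomial.X_sub_C_ne_zero a)
  have hαfac : ∀ v : V, α - ψ (μ v) ≠ 0 := by
    intro v
    have h : α - ψ (μ v) = xF - ψ (k + (n : ℝ) + μ v) := by
      rw [hα, hkFdef, hnFdef, map_add, map_add]; ring
    rw [h]; exact hlin _
  have hdd0 : dd ≠ 0 := by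
    have h : dd = φ (2 * X - C (4 * k + 4 * (n : ℝ) - 4)) := by
      rw [map_sub, map_mul, map_ofNat, hCψ, hdd, hα, hβ, hkFdef, hnFdef, ← hxFdef]
      simp only [map_sub, map_add, map_mul, map_ofNat, map_natCast]
      ring
    rw [h]
    apply hφ_ne
    apply coeff_ne_imp_ne_zero (i := 1)
    simp [Polynomial.coeff_C]
  have hquad_ne : ∀ c1 c0 : ℝ, φ (X ^ 2 + C c1 * X + C c0) ≠ 0 := by
    intro c1 c0
    apply hφ_ne
    apply coeff_ne_imp_ne_zero (i := 2)
    simp [Polynomial.coeff_C]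
  have hqv : ∀ m : ℝ, cc - dd * ψ m
      = φ (X ^ 2 + C (-(2 * k + 4 * (n : ℝ) - 4) - 2 * m) * X
          + C ((k + (n : ℝ)) * (k + 3 * (n : ℝ) - 4) - k ^ 2 + (4 * k + 4 * (n : ℝ) - 4) * m)) := by
    intro m
    rw [map_add, map_add, map_mul, map_pow, hCψ, hCψ, hcc, hdd, hα, hβ, hkFdef, hnFdef, ← hxFdef]
    simp only [map_sub, map_add, map_mul, map_pow, map_neg, map_ofNat, map_natCast]
    ring
  have hqv_ne : ∀ m : ℝ, cc - dd * ψ m ≠ 0 := fun m => by rw [hqv m]; exact hquad_ne _ _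
  have hψ2k : ψ (2 * k) = 2 * kF := by rw [map_mul, map_ofNat, hkFdef]
  have hgg_eq : gg = cc - dd * ψ (μ v₀) := by rw [hv₀, hψ2k, hgg]
  have hgg0 : gg ≠ 0 := by rw [hgg_eq]; exact hqv_ne _
  -- commutation of the relevant blocks
  have hABcomm : ((xF - (kF + nF)) • (1 : Matrix V V FR) - QF) * (kF • 1 - QF - JF)
      = (kF • 1 - QF - JF) * ((xF - (kF + nF)) • 1 - QF) := by
    simp only [Matrix.sub_mul, Matrix.mul_sub, Matrix.smul_mul, Matrix.mul_smul,
      Matrix.one_mul, Matrix.mul_one, hQJ, hJQ]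
    module
  -- invertibility of the top-left block
  haveI hinv : Invertible (α • (1 : Matrix V V FR) - QF) := by
    apply Matrix.invertibleOfIsUnitDet
    rw [show α • (1 : Matrix V V FR) - QF = α • 1 - (1 : FR) • QF by rw [one_smul],
      det_c_one_sub_d_smul QF (fun v => ψ (μ v)) hQFprod α 1 one_ne_zero,
      isUnit_iff_ne_zero, Finset.prod_ne_zero_iff]
    intro v _
    rw [one_mul]
    exact hαfac v
  -- the determinant identity
  have hdet1 : φ ((distSignlessLaplacian (cluster1 G)).charpoly)
      = ((α • (1 : Matrix V V FR) - QF) * (β • 1 - QF - (2 : FR) • JF)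
        - (kF • 1 - QF - JF) * (kF • 1 - QF - JF)).det := by
    rw [map_charpoly_frac _ φ, ← hψdef, ← hxFdef, hblocks,
      det_fromBlocks_comm _ _ _ hABcomm]
  have hexpand : (α • (1 : Matrix V V FR) - QF) * (β • 1 - QF - (2 : FR) • JF)
      - (kF • 1 - QF - JF) * (kF • 1 - QF - JF)
      = cc • (1 : Matrix V V FR) - dd • QF - ee • JF := by
    rw [hcc, hdd, hee]
    simp only [Matrix.sub_mul, Matrix.mul_sub, Matrix.smul_mul, Matrix.mul_smul,
      Matrix.one_mul, Matrix.mul_one, hQJ, hJQ, hJJ, smul_smul]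
    module
  have hM0J : (cc • (1 : Matrix V V FR) - dd • QF) * allOnes V FR = gg • allOnes V FR := by
    rw [← hJFdef]
    simp only [Matrix.sub_mul, Matrix.smul_mul, Matrix.one_mul, hQJ, smul_smul, hgg]
    rw [← sub_smul]
  have hdetM0 : (cc • (1 : Matrix V V FR) - dd • QF).det = ∏ v, (cc - dd * ψ (μ v)) :=
    det_c_one_sub_d_smul QF (fun v => ψ (μ v)) hQFprod cc dd hdd0
  have hdetM : (cc • (1 : Matrix V V FR) - dd • QF - ee • JF).det
      = (∏ v ∈ Finset.univ.erase v₀, (cc - dd * ψ (μ v))) * (gg - nF * ee) := by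
    rw [hJFdef, det_sub_smul_allOnes _ gg ee hgg0 hM0J, hdetM0, hcardF,
      ← Finset.mul_prod_erase Finset.univ _ (Finset.mem_univ v₀), ← hgg_eq]
    rw [mul_comm gg, mul_assoc]
    congr 1
    field_simp
-- the target polynomial over ℝ
  set T : Polynomial ℝ := (∏ v ∈ Finset.univ.erase v₀,
      ((X - C (k + 2 * (n : ℝ) - 2 + μ v + s v)) * (X - C (k + 2 * (n : ℝ) - 2 + μ v - s v))))
      * ((X - C (3 * k + 3 * (n : ℝ) - 2 + s₀)) * (X - C (3 * k + 3 * (n : ℝ) - 2 - s₀)))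
      with hT
  have hφT : φ T = (∏ v ∈ Finset.univ.erase v₀, (cc - dd * ψ (μ v))) * (gg - nF * ee) := by
    rw [hT, map_mul, map_prod]
    congr 1
    · refine Finset.prod_congr rfl fun v _ => ?_
      have hsFR : (ψ (s v)) ^ 2 = (kF - ψ (μ v)) ^ 2 + (nF - 2) ^ 2 := by
        rw [← map_pow, hs_sq v, hkFdef, hnFdef]
        simp only [map_add, map_pow, map_sub, map_ofNat]
      have hq := quad_factor kF nF (ψ (μ v)) (ψ (s v)) xF hsFR
      rw [hkFdef, hnFdef] at hq
      simp only [map_natCast] at hq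
      rw [map_mul, map_sub, map_sub, hCψ, hCψ, ← hxFdef, hcc, hdd, hα, hβ, hkFdef, hnFdef]
      simp only [map_add, map_sub, map_mul, map_pow, map_ofNat, map_natCast]
      linear_combination -hq
    · have hs₀FR : (ψ s₀) ^ 2 = (kF + nF) ^ 2 + (2 * nF - 2) ^ 2 := by
        rw [← map_pow, hs₀_sq, hkFdef, hnFdef]
        simp only [map_add, map_pow, map_sub, map_mul, map_ofNat, map_natCast]
      have hq0 := quad_factor0 kF nF (ψ s₀) xF hs₀FR
      rw [hkFdef, hnFdef] at hq0
      simp only [map_natCast] at hq0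
      rw [map_mul, map_sub, map_sub, hCψ, hCψ, ← hxFdef, hgg, hcc, hdd, hee, hα, hβ,
        hkFdef, hnFdef]
      simp only [map_add, map_sub, map_mul, map_pow, map_ofNat, map_natCast]
      linear_combination -hq0
  have hcharT : (distSignlessLaplacian (cluster1 G)).charpoly = T := by
    apply hφ
    rw [hdet1, hexpand, hdetM, hφT]
  rw [hcharT, hT]
  have hne2 : ∀ a b : ℝ, (X - C a) * (X - C b) ≠ 0 := fun a b =>
    mul_ne_zero (Polynomial.X_sub_C_ne_zero a) (Polynomial.X_sub_C_ne_zero b)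
  rw [Polynomial.roots_mul (mul_ne_zero (Finset.prod_ne_zero_iff.2 fun v _ => hne2 _ _)
      (hne2 _ _)),
    Polynomial.roots_prod _ _ (Finset.prod_ne_zero_iff.2 fun v _ => hne2 _ _)]
  congr 1
  · refine Multiset.bind_congr fun v _ => ?_
    rw [Polynomial.roots_mul (hne2 _ _), Polynomial.roots_X_sub_C, Polynomial.roots_X_sub_C,
      Multiset.singleton_add]
    rfl
  · rw [Polynomial.roots_mul (hne2 _ _), Polynomial.roots_X_sub_C, Polynomial.roots_X_sub_C,
      Multiset.singleton_add]
    rfl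
end

section
/- For i = 1, 2, let Gᵢ be an rᵢ-regular graph on nᵢ vertices with adjacency spectrum {r₁ = λ₁, λ₂, …, λ_{n₁}} for G₁ and {r₂ = μ₁, μ₂, …, μ_{n₂}} for G₂. Then the distance Laplacian spectrum of the join G₁∇G₂ consists of the eigenvalues 0, n₁ + n₂, the eigenvalues 2n₁ + n₂ − r₁ + λⱼ for j = 2, 3, …, n₁, and the eigenvalues 2n₂ + n₁ − r₂ + μⱼ for j = 2, 3, …, n₂. -/
set_option linter.unusedSectionVars false


open Finset

/-- The join `G₁ ∇ G₂`: disjoint union of `G₁` and `G₂` together with all edges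
between the two parts. -/
def joinGraph {V₁ V₂ : Type*} (G₁ : SimpleGraph V₁) (G₂ : SimpleGraph V₂) :
    SimpleGraph (V₁ ⊕ V₂) where
  Adj x y :=
    match x, y with
    | Sum.inl u, Sum.inl v => G₁.Adj u v
    | Sum.inr u, Sum.inr v => G₂.Adj u v
    | Sum.inl _, Sum.inr _ => True
    | Sum.inr _, Sum.inl _ => True
  symm := by
    constructor
    rintro (u | u) (v | v) h
    · exact G₁.adj_symm h
    · exact h
    · exact h
    · exact G₂.adj_symm h
  loopless := by
    constructor
    rintro (u | u) h
    · exact G₁.irrefl h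
    · exact G₂.irrefl h

section MainProof

open Matrix Polynomial

variable {V₁ V₂ : Type*} [Fintype V₁] [DecidableEq V₁] [Fintype V₂] [DecidableEq V₂]

private lemma charpoly_eval' {n : Type*} [Fintype n] [DecidableEq n] (A : Matrix n n ℝ) (t : ℝ) :
    A.charpoly.eval t = (t • (1 : Matrix n n ℝ) - A).det := by
  rw [Matrix.charpoly, ← Polynomial.coe_evalRingHom, RingHom.map_det]
  congr 1
  ext i j
  by_cases h : i = j
  · subst h; simp [Matrix.charmatrix_apply_eq, Matrix.one_apply]
  · simp [Matrix.charmatrix_apply_ne _ _ _ h, Matrix.one_apply_ne h]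

private lemma outer_mulVec {n : Type*} [Fintype n] (u v w : n → ℝ) :
    (Matrix.replicateCol Unit u * Matrix.replicateRow Unit v) *ᵥ w = (v ⬝ᵥ w) • u := by
  ext i
  simp [Matrix.mulVec, Matrix.mul_apply, dotProduct, Finset.mul_sum, Finset.sum_mul,
    mul_assoc, mul_comm, mul_left_comm]

private lemma det_add_outer {n : Type*} [Fintype n] [DecidableEq n] (M : Matrix n n ℝ)
    (u : n → ℝ) (β : ℝ) (hβ : β ≠ 0) (h : M *ᵥ u = β • u) :
    (M + Matrix.replicateCol Unit u * Matrix.replicateRow Unit u).det = M.det * (1 + β⁻¹ * (u ⬝ᵥ u)) := by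
  have key : M + Matrix.replicateCol Unit u * Matrix.replicateRow Unit u
      = M * (1 + Matrix.replicateCol Unit (β⁻¹ • u) * Matrix.replicateRow Unit u) := by
    rw [Matrix.mul_add, Matrix.mul_one, ← Matrix.mul_assoc, ← Matrix.replicateCol_mulVec,
      Matrix.mulVec_smul, h, smul_smul, inv_mul_cancel₀ hβ, one_smul]
  rw [key, Matrix.det_mul, Matrix.det_one_add_replicateCol_mul_replicateRow]
  congr 1
  simp [dotProduct_smul, dotProduct_comm, mul_comm]

private lemma charpoly_prod_of_roots {n : Type*} [Fintype n] [DecidableEq n]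
    (A : Matrix n n ℝ) (lam : n → ℝ)
    (h : A.charpoly.roots = Finset.univ.val.map lam) :
    A.charpoly = ((Finset.univ.val.map lam).map fun a => X - C a).prod := by
  have hm := A.charpoly_monic
  have hcard : Multiset.card A.charpoly.roots = A.charpoly.natDegree := by
    rw [h, Multiset.card_map, ← Finset.card_def, Finset.card_univ,
      Matrix.charpoly_natDegree_eq_dim]
  have := Polynomial.C_leadingCoeff_mul_prod_multiset_X_sub_C hcard
  rw [hm.leadingCoeff, Polynomial.C_1, one_mul, h] at this
  exact this.symm

variable (G₁ : SimpleGraph V₁) (G₂ : SimpleGraph V₂)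

private lemma join_adj_lr (u : V₁) (v : V₂) : (joinGraph G₁ G₂).Adj (Sum.inl u) (Sum.inr v) :=
  trivial

private lemma join_adj_rl (u : V₂) (v : V₁) : (joinGraph G₁ G₂).Adj (Sum.inr u) (Sum.inl v) :=
  trivial

private lemma join_dist_lr (u : V₁) (v : V₂) :
    (joinGraph G₁ G₂).dist (Sum.inl u) (Sum.inr v) = 1 :=
  (SimpleGraph.dist_eq_one_iff_adj).mpr (join_adj_lr G₁ G₂ u v)

private lemma join_dist_rl (u : V₂) (v : V₁) :
    (joinGraph G₁ G₂).dist (Sum.inr u) (Sum.inl v) = 1 :=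
  (SimpleGraph.dist_eq_one_iff_adj).mpr (join_adj_rl G₁ G₂ u v)

private lemma join_dist_ll (w : V₂) (u v : V₁) (huv : u ≠ v) (hadj : ¬ G₁.Adj u v) :
    (joinGraph G₁ G₂).dist (Sum.inl u) (Sum.inl v) = 2 := by
  set G := joinGraph G₁ G₂
  have h1 : G.Adj (Sum.inl u) (Sum.inr w) := trivial
  have h2 : G.Adj (Sum.inr w) (Sum.inl v) := trivial
  let p : G.Walk (Sum.inl u) (Sum.inl v) := .cons h1 (.cons h2 .nil)
  have hle : G.dist (Sum.inl u) (Sum.inl v) ≤ 2 := by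
    simpa [p] using SimpleGraph.dist_le p
  have hne0 : G.dist (Sum.inl u) (Sum.inl v) ≠ 0 := by
    rw [SimpleGraph.dist_ne_zero_iff_ne_and_reachable]
    exact ⟨by simpa using huv, ⟨p⟩⟩
  have hne1 : G.dist (Sum.inl u) (Sum.inl v) ≠ 1 := fun h => by
    have := SimpleGraph.dist_eq_one_iff_adj.mp h
    exact hadj this
  omega

private lemma join_dist_ll_adj (u v : V₁) (hadj : G₁.Adj u v) :
    (joinGraph G₁ G₂).dist (Sum.inl u) (Sum.inl v) = 1 :=
  (SimpleGraph.dist_eq_one_iff_adj).mpr hadj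

private lemma join_dist_rr_adj (u v : V₂) (hadj : G₂.Adj u v) :
    (joinGraph G₁ G₂).dist (Sum.inr u) (Sum.inr v) = 1 :=
  (SimpleGraph.dist_eq_one_iff_adj).mpr hadj

private lemma join_dist_rr (w : V₁) (u v : V₂) (huv : u ≠ v) (hadj : ¬ G₂.Adj u v) :
    (joinGraph G₁ G₂).dist (Sum.inr u) (Sum.inr v) = 2 := by
  set G := joinGraph G₁ G₂
  have h1 : G.Adj (Sum.inr u) (Sum.inl w) := trivial
  have h2 : G.Adj (Sum.inl w) (Sum.inr v) := trivial
  let p : G.Walk (Sum.inr u) (Sum.inr v) := .cons h1 (.cons h2 .nil)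
  have hle : G.dist (Sum.inr u) (Sum.inr v) ≤ 2 := by
    simpa [p] using SimpleGraph.dist_le p
  have hne0 : G.dist (Sum.inr u) (Sum.inr v) ≠ 0 := by
    rw [SimpleGraph.dist_ne_zero_iff_ne_and_reachable]
    exact ⟨by simpa using huv, ⟨p⟩⟩
  have hne1 : G.dist (Sum.inr u) (Sum.inr v) ≠ 1 := fun h => by
    have := SimpleGraph.dist_eq_one_iff_adj.mp h
    exact hadj this
  omega

private lemma join_dist_ll_real [DecidableRel G₁.Adj] (w : V₂) (u v : V₁) :
    ((joinGraph G₁ G₂).dist (Sum.inl u) (Sum.inl v) : ℝ)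
      = 2 - (G₁.adjMatrix ℝ) u v - 2 * (if u = v then 1 else 0) := by
  by_cases huv : u = v
  · subst huv; simp [SimpleGraph.dist_self]
  · by_cases hadj : G₁.Adj u v
    · rw [join_dist_ll_adj G₁ G₂ u v hadj]; simp [hadj, huv]; norm_num
    · rw [join_dist_ll G₁ G₂ w u v huv hadj]; simp [hadj, huv]

private lemma join_dist_rr_real [DecidableRel G₂.Adj] (w : V₁) (u v : V₂) :
    ((joinGraph G₁ G₂).dist (Sum.inr u) (Sum.inr v) : ℝ)
      = 2 - (G₂.adjMatrix ℝ) u v - 2 * (if u = v then 1 else 0) := by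
  by_cases huv : u = v
  · subst huv; simp [SimpleGraph.dist_self]
  · by_cases hadj : G₂.Adj u v
    · rw [join_dist_rr_adj G₁ G₂ u v hadj]; simp [hadj, huv]; norm_num
    · rw [join_dist_rr G₁ G₂ w u v huv hadj]; simp [hadj, huv]

end MainProof

open Matrix Polynomial in
theorem stmt4 {V₁ V₂ : Type*} [Fintype V₁] [DecidableEq V₁] [Fintype V₂] [DecidableEq V₂]
    (G₁ : SimpleGraph V₁) (G₂ : SimpleGraph V₂)
    [DecidableRel G₁.Adj] [DecidableRel G₂.Adj]
    (n₁ n₂ : ℕ) (hn₁ : Fintype.card V₁ = n₁) (hn₂ : Fintype.card V₂ = n₂)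
    (r₁ r₂ : ℕ) (hreg₁ : G₁.IsRegularOfDegree r₁) (hreg₂ : G₂.IsRegularOfDegree r₂)
    (lam : V₁ → ℝ) (mu : V₂ → ℝ)
    (hlam : (G₁.adjMatrix ℝ).charpoly.roots = Finset.univ.val.map lam)
    (hmu : (G₂.adjMatrix ℝ).charpoly.roots = Finset.univ.val.map mu)
    (w₁ : V₁) (hw₁ : lam w₁ = r₁) (w₂ : V₂) (hw₂ : mu w₂ = r₂) :
    (distLaplacian (joinGraph G₁ G₂)).charpoly.roots =
      ({0, (n₁ : ℝ) + (n₂ : ℝ)} : Multiset ℝ)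
      + ((Finset.univ.erase w₁).val.map fun v =>
          2 * (n₁ : ℝ) + (n₂ : ℝ) - (r₁ : ℝ) + lam v)
      + ((Finset.univ.erase w₂).val.map fun v =>
          2 * (n₂ : ℝ) + (n₁ : ℝ) - (r₂ : ℝ) + mu v) := by
  subst hn₁
  subst hn₂
  classical
  set na : ℝ := (Fintype.card V₁ : ℝ) with hna
  set nb : ℝ := (Fintype.card V₂ : ℝ) with hnb
  set c₁ : ℝ := 2 * na + nb - r₁ with hc₁
  set c₂ : ℝ := 2 * nb + na - r₂ with hc₂
  set sS : ℝ := na + nb with hsS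
  -- the vectors
  set u₁ : V₁ ⊕ V₂ → ℝ := Sum.elim (fun _ => 1) (fun _ => 0) with hu₁
  set u₂ : V₁ ⊕ V₂ → ℝ := Sum.elim (fun _ => 0) (fun _ => 1) with hu₂
  -- row sums of adjacency matrices
  have hrow₁ : ∀ u : V₁, ∑ v, (G₁.adjMatrix ℝ) u v = (r₁ : ℝ) := by
    intro u
    simp only [SimpleGraph.adjMatrix_apply]
    rw [Finset.sum_boole, ← SimpleGraph.neighborFinset_eq_filter]
    rw [← SimpleGraph.degree, hreg₁ u]
  have hrow₂ : ∀ u : V₂, ∑ v, (G₂.adjMatrix ℝ) u v = (r₂ : ℝ) := by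
    intro u
    simp only [SimpleGraph.adjMatrix_apply]
    rw [Finset.sum_boole, ← SimpleGraph.neighborFinset_eq_filter]
    rw [← SimpleGraph.degree, hreg₂ u]
  -- transmissions
  have htr₁ : ∀ u : V₁, transmission (joinGraph G₁ G₂) (Sum.inl u) = c₁ - 2 := by
    intro u
    rw [transmission, Fintype.sum_sum_type]
    have h2 : ∑ v : V₂, (((joinGraph G₁ G₂).dist (Sum.inl u) (Sum.inr v) : ℕ) : ℝ) = nb := by
      simp [join_dist_lr, hnb]
    have h1 : ∑ v : V₁, (((joinGraph G₁ G₂).dist (Sum.inl u) (Sum.inl v) : ℕ) : ℝ)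
        = 2 * na - r₁ - 2 := by
      rw [Finset.sum_congr rfl (fun v _ => join_dist_ll_real G₁ G₂ w₂ u v)]
      rw [Finset.sum_sub_distrib, Finset.sum_sub_distrib, hrow₁ u]
      simp [Finset.card_univ, mul_comm, hna]
    rw [h1, h2, hc₁]
    ring
  have htr₂ : ∀ u : V₂, transmission (joinGraph G₁ G₂) (Sum.inr u) = c₂ - 2 := by
    intro u
    rw [transmission, Fintype.sum_sum_type]
    have h2 : ∑ v : V₁, (((joinGraph G₁ G₂).dist (Sum.inr u) (Sum.inl v) : ℕ) : ℝ) = na := by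
      simp [join_dist_rl, hna]
    have h1 : ∑ v : V₂, (((joinGraph G₁ G₂).dist (Sum.inr u) (Sum.inr v) : ℕ) : ℝ)
        = 2 * nb - r₂ - 2 := by
      rw [Finset.sum_congr rfl (fun v _ => join_dist_rr_real G₁ G₂ w₁ u v)]
      rw [Finset.sum_sub_distrib, Finset.sum_sub_distrib, hrow₂ u]
      simp [Finset.card_univ, mul_comm, hnb]
    rw [h1, h2, hc₂]
    ring
  -- the block diagonal part
  set D₁ : ℝ → Matrix V₁ V₁ ℝ := fun x => (x - c₁) • (1 : Matrix V₁ V₁ ℝ) - G₁.adjMatrix ℝ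
    with hD₁
  set D₂ : ℝ → Matrix V₂ V₂ ℝ := fun x => (x - c₂) • (1 : Matrix V₂ V₂ ℝ) - G₂.adjMatrix ℝ
    with hD₂
  set M : ℝ → Matrix (V₁ ⊕ V₂) (V₁ ⊕ V₂) ℝ := fun x => Matrix.fromBlocks (D₁ x) 0 0 (D₂ x) with hM
  have houter : ∀ (f g : V₁ ⊕ V₂ → ℝ) a b,
      (Matrix.replicateCol Unit f * Matrix.replicateRow Unit g) a b = f a * g b := by
    intro f g a b
    simp [Matrix.mul_apply]
  -- the decomposition of x•1 - L
  have hdecomp : ∀ x : ℝ, x • (1 : Matrix (V₁ ⊕ V₂) (V₁ ⊕ V₂) ℝ)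
      - distLaplacian (joinGraph G₁ G₂)
      = M x + Matrix.replicateCol Unit u₁ * Matrix.replicateRow Unit u₁
        + Matrix.replicateCol Unit u₂ * Matrix.replicateRow Unit u₂
        + Matrix.replicateCol Unit (u₁ + u₂) * Matrix.replicateRow Unit (u₁ + u₂) := by
    intro x
    ext a b
    rcases a with a | a <;> rcases b with b | b <;>
      simp only [Matrix.sub_apply, Matrix.add_apply, Matrix.smul_apply, Matrix.one_apply,
        distLaplacian, distMatrix, Matrix.of_apply, Matrix.diagonal_apply, houter, hM,
        Matrix.fromBlocks_apply₁₁, Matrix.fromBlocks_apply₁₂, Matrix.fromBlocks_apply₂₁,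
        Matrix.fromBlocks_apply₂₂, Matrix.zero_apply, hu₁, hu₂, Sum.elim_inl, Sum.elim_inr,
        Pi.add_apply, smul_eq_mul, Sum.inl.injEq, Sum.inr.injEq, reduceCtorEq, if_false, hD₁, hD₂]
    · rw [join_dist_ll_real G₁ G₂ w₂ a b, htr₁ a]
      split_ifs <;> ring
    · rw [join_dist_lr G₁ G₂ a b]
      norm_num
    · rw [join_dist_rl G₁ G₂ a b]
      norm_num
    · rw [join_dist_rr_real G₁ G₂ w₁ a b, htr₂ a]
      split_ifs <;> ring
  -- eigen equations
  have hadj₁ : G₁.adjMatrix ℝ *ᵥ (fun _ => (1 : ℝ)) = fun _ => (r₁ : ℝ) := by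
    ext v
    simp only [Matrix.mulVec, dotProduct, mul_one]
    exact hrow₁ v
  have hadj₂ : G₂.adjMatrix ℝ *ᵥ (fun _ => (1 : ℝ)) = fun _ => (r₂ : ℝ) := by
    ext v
    simp only [Matrix.mulVec, dotProduct, mul_one]
    exact hrow₂ v
  have hMu₁ : ∀ x : ℝ, M x *ᵥ u₁ = (x - c₁ - r₁) • u₁ := by
    intro x
    rw [hM, hu₁]
    rw [show (Sum.elim (fun _ : V₁ => (1:ℝ)) (fun _ : V₂ => (0:ℝ)))
        = Sum.elim (fun _ : V₁ => (1:ℝ)) (fun _ : V₂ => (0:ℝ)) from rfl]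
    rw [Matrix.fromBlocks_mulVec]
    ext (a | a)
    · simp [hD₁, Matrix.sub_mulVec, Matrix.smul_mulVec, Matrix.one_mulVec, hadj₁]
    · simp [hD₂, Matrix.sub_mulVec, Matrix.smul_mulVec, Matrix.one_mulVec]
  have hMu₂ : ∀ x : ℝ, M x *ᵥ u₂ = (x - c₂ - r₂) • u₂ := by
    intro x
    rw [hM, hu₂, Matrix.fromBlocks_mulVec]
    ext (a | a)
    · simp [hD₁, Matrix.sub_mulVec, Matrix.smul_mulVec, Matrix.one_mulVec]
    · simp [hD₂, Matrix.sub_mulVec, Matrix.smul_mulVec, Matrix.one_mulVec, hadj₂]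
  -- dot products
  have hd₁₁ : u₁ ⬝ᵥ u₁ = na := by
    simp [hu₁, dotProduct, Fintype.sum_sum_type, Finset.card_univ, hna]
  have hd₁₂ : u₁ ⬝ᵥ u₂ = 0 := by
    simp [hu₁, hu₂, dotProduct, Fintype.sum_sum_type]
  have hd₂₁ : u₂ ⬝ᵥ u₁ = 0 := by
    simp [hu₁, hu₂, dotProduct, Fintype.sum_sum_type]
  have hd₂₂ : u₂ ⬝ᵥ u₂ = nb := by
    simp [hu₂, dotProduct, Fintype.sum_sum_type, Finset.card_univ, hnb]
  have hdww : (u₁ + u₂) ⬝ᵥ (u₁ + u₂) = sS := by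
    rw [add_dotProduct, dotProduct_add, dotProduct_add,
      hd₁₁, hd₁₂, hd₂₁, hd₂₂, hsS]
    ring
  -- determinant of the blocks via the given spectra
  set P₁ : ℝ → ℝ := fun x =>
    ((Finset.univ.erase w₁).val.map fun v => x - (2 * na + nb - r₁ + lam v)).prod with hP₁
  set P₂ : ℝ → ℝ := fun x =>
    ((Finset.univ.erase w₂).val.map fun v => x - (2 * nb + na - r₂ + mu v)).prod with hP₂
  have hsplit₁ : Finset.univ.val = w₁ ::ₘ (Finset.univ.erase w₁).val := by
    rw [Finset.erase_val]
    exact (Multiset.cons_erase (Finset.mem_val.mpr (Finset.mem_univ w₁))).symm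
  have hsplit₂ : Finset.univ.val = w₂ ::ₘ (Finset.univ.erase w₂).val := by
    rw [Finset.erase_val]
    exact (Multiset.cons_erase (Finset.mem_val.mpr (Finset.mem_univ w₂))).symm
  have hdetD₁ : ∀ x : ℝ, (D₁ x).det = (x - c₁ - r₁) * P₁ x := by
    intro x
    have h1 : (D₁ x).det = (G₁.adjMatrix ℝ).charpoly.eval (x - c₁) := (charpoly_eval' _ _).symm
    rw [h1, charpoly_prod_of_roots _ _ hlam, Polynomial.eval_multiset_prod, Multiset.map_map,
      Multiset.map_map, hsplit₁, Multiset.map_cons, Multiset.prod_cons]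
    simp only [Function.comp_apply, Polynomial.eval_sub, Polynomial.eval_X, Polynomial.eval_C,
      hw₁]
    rw [hP₁]
    have hm : Multiset.map (fun v => x - c₁ - lam v) (Finset.univ.erase w₁).val
        = Multiset.map (fun v => x - (2 * na + nb - (r₁ : ℝ) + lam v))
          (Finset.univ.erase w₁).val :=
      Multiset.map_congr rfl (fun v _ => by rw [hc₁]; ring)
    rw [hm]
  have hdetD₂ : ∀ x : ℝ, (D₂ x).det = (x - c₂ - r₂) * P₂ x := by
    intro x
    have h1 : (D₂ x).det = (G₂.adjMatrix ℝ).charpoly.eval (x - c₂) := (charpoly_eval' _ _).symm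
    rw [h1, charpoly_prod_of_roots _ _ hmu, Polynomial.eval_multiset_prod, Multiset.map_map,
      Multiset.map_map, hsplit₂, Multiset.map_cons, Multiset.prod_cons]
    simp only [Function.comp_apply, Polynomial.eval_sub, Polynomial.eval_X, Polynomial.eval_C,
      hw₂]
    rw [hP₂]
    have hm : Multiset.map (fun v => x - c₂ - mu v) (Finset.univ.erase w₂).val
        = Multiset.map (fun v => x - (2 * nb + na - (r₂ : ℝ) + mu v))
          (Finset.univ.erase w₂).val :=
      Multiset.map_congr rfl (fun v _ => by rw [hc₂]; ring)
    rw [hm]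
  -- the target multiset and polynomial
  set rhs : Multiset ℝ :=
    ({0, na + nb} : Multiset ℝ)
      + ((Finset.univ.erase w₁).val.map fun v => 2 * na + nb - r₁ + lam v)
      + ((Finset.univ.erase w₂).val.map fun v => 2 * nb + na - r₂ + mu v) with hrhs
  set Q : Polynomial ℝ := (rhs.map fun a => Polynomial.X - Polynomial.C a).prod with hQ
  have hQeval : ∀ x : ℝ, Q.eval x = x * (x - sS) * P₁ x * P₂ x := by
    intro x
    rw [hQ, hrhs, Polynomial.eval_multiset_prod]
    simp only [Multiset.map_add, Multiset.prod_add, Multiset.map_map, Multiset.insert_eq_cons,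
      Multiset.map_cons, Multiset.prod_cons, Multiset.map_singleton, Multiset.prod_singleton,
      Function.comp_apply, Polynomial.eval_sub, Polynomial.eval_X, Polynomial.eval_C,
      hP₁, hP₂, hsS]
    ring
  -- bad set
  set Bad : Set ℝ := {sS} ∪ Set.range (fun v : V₁ => c₁ + lam v)
      ∪ Set.range (fun v : V₂ => c₂ + mu v) with hBad
  have hBadFin : Bad.Finite := by
    apply Set.Finite.union
    apply Set.Finite.union
    · exact Set.finite_singleton _
    · exact Set.finite_range _
    · exact Set.finite_range _
  have hinf : Badᶜ.Infinite := hBadFin.infinite_compl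
  -- evaluation identity off the bad set
  have hkey : ∀ x : ℝ, x ∈ Badᶜ →
      (distLaplacian (joinGraph G₁ G₂)).charpoly.eval x = Q.eval x := by
    intro x hx
    simp only [hBad, Set.mem_compl_iff, Set.mem_union, Set.mem_singleton_iff, Set.mem_range,
      not_or, not_exists] at hx
    obtain ⟨⟨hxs, hx1⟩, hx2⟩ := hx
    have hβ₁ : x - c₁ - (r₁ : ℝ) ≠ 0 := by
      have := hx1 w₁
      rw [hw₁] at this
      intro h
      apply this
      linarith
    have hβ₂ : x - c₂ - (r₂ : ℝ) ≠ 0 := by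
      have := hx2 w₂
      rw [hw₂] at this
      intro h
      apply this
      linarith
    have hγ : x - sS ≠ 0 := sub_ne_zero.mpr (fun h => hxs h)
    -- eigen equation for the accumulated matrices
    have hB₁u₂ : (M x + Matrix.replicateCol Unit u₁ * Matrix.replicateRow Unit u₁) *ᵥ u₂
        = (x - c₂ - r₂) • u₂ := by
      rw [Matrix.add_mulVec, hMu₂ x, outer_mulVec, hd₁₂, zero_smul, add_zero]
    have hB₂w : (M x + Matrix.replicateCol Unit u₁ * Matrix.replicateRow Unit u₁
        + Matrix.replicateCol Unit u₂ * Matrix.replicateRow Unit u₂) *ᵥ (u₁ + u₂) = (x - sS) • (u₁ + u₂) := by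
      rw [Matrix.add_mulVec, Matrix.add_mulVec, Matrix.mulVec_add, Matrix.mulVec_add,
        Matrix.mulVec_add, hMu₁ x, hMu₂ x, outer_mulVec, outer_mulVec, outer_mulVec,
        outer_mulVec, hd₁₁, hd₁₂, hd₂₁, hd₂₂]
      ext (i | i) <;>
        (simp [hu₁, hu₂, hc₁, hc₂, hsS]; try ring)
    rw [charpoly_eval', hdecomp x, det_add_outer _ _ _ hγ hB₂w,
      det_add_outer _ _ _ hβ₂ hB₁u₂, det_add_outer _ _ _ hβ₁ (hMu₁ x), hdww, hd₁₁, hd₂₂,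
      hM, Matrix.det_fromBlocks_zero₁₂, hdetD₁ x, hdetD₂ x, hQeval x]
    simp only [hc₁, hc₂, hsS] at hβ₁ hβ₂ hγ ⊢
    field_simp
    ring
  -- conclude the polynomial identity
  have hpoly : (distLaplacian (joinGraph G₁ G₂)).charpoly = Q := by
    apply Polynomial.eq_of_infinite_eval_eq
    apply hinf.mono
    intro x hx
    exact hkey x hx
  rw [hpoly, hQ, Polynomial.roots_multiset_prod_X_sub_C]
end

section
/- The distance Laplacian spectrum of the complete bipartite graph K_{n₁,n₂} consists of the simple eigenvalues 0 and n₁ + n₂, the eigenvalue 2n₁ + n₂ with multiplicity n₁ − 1, and the eigenvalue n₁ + 2n₂ with multiplicity n₂ − 1. -/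
open Finset

namespace Stmt5Aux

open Polynomial Matrix Sum

/-- charpoly is invariant under conjugation. -/
lemma charpoly_conj {n : Type*} [DecidableEq n] [Fintype n] {R : Type*} [CommRing R]
    (P Q M : Matrix n n R) (h : P * Q = 1) : (P * M * Q).charpoly = M.charpoly := by
  have key : charmatrix (P * M * Q) = (P.map C) * charmatrix M * (Q.map C) := by
    have hPQ : (P.map C) * (Q.map C) = 1 := by
      rw [← Matrix.map_mul, h, Matrix.map_one _ (map_zero C) (map_one C)]
    calc charmatrix (P * M * Q)
        = Matrix.scalar n (X : R[X]) - (P * M * Q).map C := rfl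
      _ = (P.map C) * charmatrix M * (Q.map C) := by
          have hcm : charmatrix M = Matrix.scalar n (X : R[X]) - M.map C := rfl
          have hs : Matrix.scalar n (X : R[X]) = (X : R[X]) • (1 : Matrix n n R[X]) := by
            ext i j
            by_cases hij : i = j <;>
              simp [hij, Matrix.scalar_apply, Matrix.one_apply, Matrix.diagonal_apply]
          rw [hcm, mul_sub, sub_mul, Matrix.map_mul, Matrix.map_mul, hs, mul_smul_comm,
            smul_mul_assoc, mul_one, hPQ]
  unfold Matrix.charpoly
  rw [key, Matrix.det_mul, Matrix.det_mul]
  have : (P.map C).det * (Q.map C).det = 1 := by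
    rw [← Matrix.det_mul, ← Matrix.map_mul, h, Matrix.map_one _ (map_zero C) (map_one C),
      Matrix.det_one]
  calc (P.map C).det * (charmatrix M).det * (Q.map C).det
      = (P.map C).det * (Q.map C).det * (charmatrix M).det := by ring
    _ = (charmatrix M).det := by rw [this, one_mul]

lemma charpoly_diagonal {n : Type*} [DecidableEq n] [Fintype n] {R : Type*} [CommRing R]
    (d : n → R) : (Matrix.diagonal d).charpoly = ∏ i, (X - C (d i)) := by
  unfold Matrix.charpoly
  have : charmatrix (Matrix.diagonal d) = Matrix.diagonal fun i => X - C (d i) := by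
    ext i j
    by_cases hij : i = j
    · subst hij; simp
    · simp [hij, charmatrix_apply_ne _ _ _ hij, Matrix.diagonal_apply_ne _ hij]
  rw [this, Matrix.det_diagonal]

lemma roots_charpoly_diagonal {n : Type*} [DecidableEq n] [Fintype n] (d : n → ℝ) :
    (Matrix.diagonal d).charpoly.roots = Multiset.map d Finset.univ.val := by
  have hmm : Multiset.map (fun i => X - C (d i)) Finset.univ.val
      = Multiset.map (fun a => X - C a) (Multiset.map d Finset.univ.val) := by
    rw [Multiset.map_map]; rfl
  rw [charpoly_diagonal, Finset.prod_eq_multiset_prod, hmm,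
    Polynomial.roots_multiset_prod_X_sub_C]

section Graph

variable (m k : ℕ)

abbrev G := completeBipartiteGraph (Fin (m + 1)) (Fin (k + 1))

lemma dist_inl_inr (a : Fin (m + 1)) (b : Fin (k + 1)) :
    (G m k).dist (inl a) (inr b) = 1 := by
  rw [SimpleGraph.dist_eq_one_iff_adj]
  simp

lemma dist_inr_inl (a : Fin (m + 1)) (b : Fin (k + 1)) :
    (G m k).dist (inr b) (inl a) = 1 := by
  rw [SimpleGraph.dist_eq_one_iff_adj]
  simp

lemma dist_inl_inl (a a' : Fin (m + 1)) (h : a ≠ a') :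
    (G m k).dist (inl a) (inl a') = 2 := by
  have hadj1 : (G m k).Adj (inl a) (inr 0) := by simp
  have hadj2 : (G m k).Adj (inr (0 : Fin (k+1))) (inl a') := by simp
  have hw : ((hadj1.toWalk.append hadj2.toWalk) : (G m k).Walk (inl a) (inl a')).length = 2 := by
    simp
  have hle : (G m k).dist (inl a) (inl a') ≤ 2 := hw ▸ SimpleGraph.dist_le _
  have hne0 : (G m k).dist (inl a) (inl a') ≠ 0 := by
    rw [Ne, SimpleGraph.dist_eq_zero_iff_eq_or_not_reachable]
    push_neg
    exact ⟨by simp [h], ⟨hadj1.toWalk.append hadj2.toWalk⟩⟩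
  have hne1 : (G m k).dist (inl a) (inl a') ≠ 1 := by
    rw [Ne, SimpleGraph.dist_eq_one_iff_adj]
    simp
  omega

lemma dist_inr_inr (b b' : Fin (k + 1)) (h : b ≠ b') :
    (G m k).dist (inr b) (inr b') = 2 := by
  have hadj1 : (G m k).Adj (inr b) (inl 0) := by simp
  have hadj2 : (G m k).Adj (inl (0 : Fin (m+1))) (inr b') := by simp
  have hw : ((hadj1.toWalk.append hadj2.toWalk) : (G m k).Walk (inr b) (inr b')).length = 2 := by
    simp
  have hle : (G m k).dist (inr b) (inr b') ≤ 2 := hw ▸ SimpleGraph.dist_le _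
  have hne0 : (G m k).dist (inr b) (inr b') ≠ 0 := by
    rw [Ne, SimpleGraph.dist_eq_zero_iff_eq_or_not_reachable]
    push_neg
    exact ⟨by simp [h], ⟨hadj1.toWalk.append hadj2.toWalk⟩⟩
  have hne1 : (G m k).dist (inr b) (inr b') ≠ 1 := by
    rw [Ne, SimpleGraph.dist_eq_one_iff_adj]
    simp
  omega

lemma dist_real_inl_inl (a a' : Fin (m + 1)) :
    ((G m k).dist (inl a) (inl a') : ℝ) = if a = a' then 0 else 2 := by
  by_cases h : a = a'
  · subst h; simp
  · rw [dist_inl_inl m k a a' h]; simp [h]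

lemma dist_real_inr_inr (b b' : Fin (k + 1)) :
    ((G m k).dist (inr b) (inr b') : ℝ) = if b = b' then 0 else 2 := by
  by_cases h : b = b'
  · subst h; simp
  · rw [dist_inr_inr m k b b' h]; simp [h]

lemma sum_ite_zero_two {n : ℕ} (a : Fin (n + 1)) :
    ∑ x : Fin (n + 1), (if a = x then (0 : ℝ) else 2) = 2 * (n + 1) - 2 := by
  have h : ∀ x : Fin (n + 1), (if a = x then (0 : ℝ) else 2)
      = 2 - (if a = x then (2 : ℝ) else 0) := by
    intro x; split <;> ring
  simp only [h]
  rw [Finset.sum_sub_distrib, Finset.sum_const, Finset.sum_ite_eq]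
  simp
  ring

lemma transmission_inl (a : Fin (m + 1)) :
    transmission (G m k) (inl a) = 2 * (m + 1) + (k + 1) - 2 := by
  unfold transmission
  rw [Fintype.sum_sum_type]
  have h1 : ∑ a' : Fin (m+1), ((G m k).dist (inl a) (inl a') : ℝ) = 2 * (m + 1) - 2 := by
    simp only [dist_real_inl_inl]
    exact sum_ite_zero_two a
  have h2 : ∑ b : Fin (k+1), ((G m k).dist (inl a) (inr b) : ℝ) = k + 1 := by
    simp [dist_inl_inr]
  rw [h1, h2]; ring

lemma transmission_inr (b : Fin (k + 1)) :
    transmission (G m k) (inr b) = (m + 1) + 2 * (k + 1) - 2 := by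
  unfold transmission
  rw [Fintype.sum_sum_type]
  have h1 : ∑ a : Fin (m+1), ((G m k).dist (inr b) (inl a) : ℝ) = m + 1 := by
    simp [dist_inr_inl]
  have h2 : ∑ b' : Fin (k+1), ((G m k).dist (inr b) (inr b') : ℝ) = 2 * (k + 1) - 2 := by
    simp only [dist_real_inr_inr]
    exact sum_ite_zero_two b
  rw [h1, h2]; ring


noncomputable def Pm : Matrix (Fin (m+1) ⊕ Fin (k+1)) (Fin (m+1) ⊕ Fin (k+1)) ℝ :=
  Matrix.of fun u v =>
    match u, v with
    | inl a, inl i => if i = 0 then 1 else (if a = i then 1 else 0) - (if a = 0 then 1 else 0)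
    | inl _, inr j => if j = 0 then ((k : ℝ) + 1) else 0
    | inr _, inl i => if i = 0 then 1 else 0
    | inr b, inr j => if j = 0 then -((m : ℝ) + 1)
        else (if b = j then 1 else 0) - (if b = 0 then 1 else 0)

noncomputable def Qm : Matrix (Fin (m+1) ⊕ Fin (k+1)) (Fin (m+1) ⊕ Fin (k+1)) ℝ :=
  Matrix.of fun u v =>
    match u, v with
    | inl i, inl a => if i = 0 then 1 / ((m : ℝ) + 1 + ((k : ℝ) + 1))
        else (if a = i then 1 else 0) - 1 / ((m : ℝ) + 1)
    | inl i, inr _ => if i = 0 then 1 / ((m : ℝ) + 1 + ((k : ℝ) + 1)) else 0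
    | inr j, inl _ => if j = 0 then 1 / (((m : ℝ) + 1) * ((m : ℝ) + 1 + ((k : ℝ) + 1))) else 0
    | inr j, inr b => if j = 0 then -(1 / (((k : ℝ) + 1) * ((m : ℝ) + 1 + ((k : ℝ) + 1))))
        else (if b = j then 1 else 0) - 1 / ((k : ℝ) + 1)

noncomputable def dv : Fin (m+1) ⊕ Fin (k+1) → ℝ
  | inl i => if i = 0 then 0 else 2 * ((m : ℝ) + 1) + ((k : ℝ) + 1)
  | inr j => if j = 0 then ((m : ℝ) + 1) + ((k : ℝ) + 1)
      else ((m : ℝ) + 1) + 2 * ((k : ℝ) + 1)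

lemma hQP : Qm m k * Pm m k = 1 := by
  have hm1 : ((m : ℝ) + 1) ≠ 0 := by positivity
  have hk1 : ((k : ℝ) + 1) ≠ 0 := by positivity
  have hN : ((m : ℝ) + 1 + ((k : ℝ) + 1)) ≠ 0 := by positivity
  ext u v
  rw [Matrix.mul_apply, Fintype.sum_sum_type]
  obtain (i | j) := u <;> obtain (i' | j') := v <;>
    simp only [Pm, Qm, Matrix.of_apply, Matrix.one_apply, Sum.inl.injEq, Sum.inr.injEq,
      reduceCtorEq]
  · rcases eq_or_ne i 0 with rfl | hi
    · rcases eq_or_ne i' 0 with rfl | hi'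
      · simp [ite_mul, mul_ite, sub_mul, mul_sub, Finset.sum_sub_distrib, Finset.mul_sum,
          Finset.sum_ite_eq, Finset.sum_ite_eq', Finset.card_univ]
        field_simp
      · simp [hi', Ne.symm hi', ite_mul, mul_ite, sub_mul, mul_sub, Finset.sum_sub_distrib,
          Finset.mul_sum, Finset.sum_ite_eq, Finset.sum_ite_eq', Finset.card_univ]
    · rcases eq_or_ne i' 0 with rfl | hi'
      · simp [hi, Ne.symm hi, ite_mul, mul_ite, sub_mul, mul_sub, Finset.sum_sub_distrib,
          Finset.mul_sum, Finset.sum_ite_eq, Finset.sum_ite_eq', Finset.card_univ]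
        field_simp
        simp
      · simp [hi, hi', Ne.symm hi, Ne.symm hi', ite_mul, mul_ite, sub_mul, mul_sub,
          Finset.sum_sub_distrib, Finset.mul_sum, Finset.sum_ite_eq, Finset.sum_ite_eq',
          Finset.card_univ, eq_comm]
  · rcases eq_or_ne i 0 with rfl | h1 <;> rcases eq_or_ne j' 0 with rfl | h2
    · simp [ite_mul, mul_ite, sub_mul, mul_sub, Finset.sum_sub_distrib, Finset.mul_sum, Finset.sum_ite_eq, Finset.sum_ite_eq', Finset.card_univ]
      try field_simp
      try ring
      try (split <;> ring)
    · simp [h2, Ne.symm h2, ite_mul, mul_ite, sub_mul, mul_sub, Finset.sum_sub_distrib, Finset.mul_sum, Finset.sum_ite_eq, Finset.sum_ite_eq', Finset.card_univ]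
      try field_simp
      try ring
      try (split <;> ring)
    · simp [h1, Ne.symm h1, ite_mul, mul_ite, sub_mul, mul_sub, Finset.sum_sub_distrib, Finset.mul_sum, Finset.sum_ite_eq, Finset.sum_ite_eq', Finset.card_univ]
      try field_simp
      try ring
      try (split <;> ring)
    · simp [h1, h2, Ne.symm h1, Ne.symm h2, ite_mul, mul_ite, sub_mul, mul_sub, Finset.sum_sub_distrib, Finset.mul_sum, Finset.sum_ite_eq, Finset.sum_ite_eq', Finset.card_univ]
      try field_simp
      try ring
      try (split <;> ring)
  · rcases eq_or_ne j 0 with rfl | h1 <;> rcases eq_or_ne i' 0 with rfl | h2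
    · simp [ite_mul, mul_ite, sub_mul, mul_sub, Finset.sum_sub_distrib, Finset.mul_sum, Finset.sum_ite_eq, Finset.sum_ite_eq', Finset.card_univ]
      try field_simp
      try ring
      try (split <;> ring)
    · simp [h2, Ne.symm h2, ite_mul, mul_ite, sub_mul, mul_sub, Finset.sum_sub_distrib, Finset.mul_sum, Finset.sum_ite_eq, Finset.sum_ite_eq', Finset.card_univ]
      try field_simp
      try ring
      try (split <;> ring)
    · simp [h1, Ne.symm h1, ite_mul, mul_ite, sub_mul, mul_sub, Finset.sum_sub_distrib, Finset.mul_sum, Finset.sum_ite_eq, Finset.sum_ite_eq', Finset.card_univ]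
      try field_simp
      try ring
      try (split <;> ring)
    · simp [h1, h2, Ne.symm h1, Ne.symm h2, ite_mul, mul_ite, sub_mul, mul_sub, Finset.sum_sub_distrib, Finset.mul_sum, Finset.sum_ite_eq, Finset.sum_ite_eq', Finset.card_univ]
      try field_simp
      try ring
      try (split <;> ring)
  · rcases eq_or_ne j 0 with rfl | h1 <;> rcases eq_or_ne j' 0 with rfl | h2
    · simp [ite_mul, mul_ite, sub_mul, mul_sub, Finset.sum_sub_distrib, Finset.mul_sum, Finset.sum_ite_eq, Finset.sum_ite_eq', Finset.card_univ, eq_comm]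
      try field_simp
      try ring
      try (split <;> ring)
    · simp [h2, Ne.symm h2, ite_mul, mul_ite, sub_mul, mul_sub, Finset.sum_sub_distrib, Finset.mul_sum, Finset.sum_ite_eq, Finset.sum_ite_eq', Finset.card_univ, eq_comm]
      try field_simp
      try ring
      try (split <;> ring)
    · simp [h1, Ne.symm h1, ite_mul, mul_ite, sub_mul, mul_sub, Finset.sum_sub_distrib, Finset.mul_sum, Finset.sum_ite_eq, Finset.sum_ite_eq', Finset.card_univ, eq_comm]
      try field_simp
      try ring
      try (split <;> ring)
    · simp [h1, h2, Ne.symm h1, Ne.symm h2, ite_mul, mul_ite, sub_mul, mul_sub, Finset.sum_sub_distrib, Finset.mul_sum, Finset.sum_ite_eq, Finset.sum_ite_eq', Finset.card_univ, eq_comm]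
      try field_simp
      try ring
      try (split <;> ring)

noncomputable def Lent : (Fin (m+1) ⊕ Fin (k+1)) → (Fin (m+1) ⊕ Fin (k+1)) → ℝ := fun u v =>
  match u, v with
  | inl a, inl a' => -2 + (if a = a' then 2 * ((m : ℝ) + 1) + ((k : ℝ) + 1) else 0)
  | inl _, inr _ => -1
  | inr _, inl _ => -1
  | inr b, inr b' => -2 + (if b = b' then ((m : ℝ) + 1) + 2 * ((k : ℝ) + 1) else 0)

lemma L_eq : distLaplacian (G m k) = Matrix.of (Lent m k) := by
  ext u v
  obtain (a | b) := u <;> obtain (a' | b') := v <;>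
    simp only [distLaplacian, distMatrix, Matrix.sub_apply, Matrix.of_apply,
      Matrix.diagonal_apply, Lent, Sum.inl.injEq, Sum.inr.injEq, reduceCtorEq, if_false,
      transmission_inl, transmission_inr, dist_real_inl_inl, dist_real_inr_inr,
      dist_inl_inr, dist_inr_inl]
  · by_cases h : a = a' <;> simp [h] <;> ring
  · simp
  · simp
  · by_cases h : b = b' <;> simp [h] <;> ring

lemma hLP : distLaplacian (G m k) * Pm m k = Pm m k * Matrix.diagonal (dv m k) := by
  rw [L_eq]
  ext u v
  rw [Matrix.mul_apply, Matrix.mul_diagonal, Fintype.sum_sum_type]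
  obtain (a | b) := u <;> obtain (i | j) := v <;>
    simp only [Lent, Pm, dv, Matrix.of_apply]
  · rcases eq_or_ne i 0 with rfl | h1 <;> rcases eq_or_ne a 0 with rfl | h2
    · simp [ite_mul, mul_ite, sub_mul, mul_sub, add_mul, mul_add, Finset.sum_add_distrib, Finset.sum_sub_distrib, Finset.mul_sum, Finset.sum_ite_eq, Finset.sum_ite_eq', Finset.card_univ]
      try field_simp
      try ring
      try (split <;> ring)
    · simp [h2, Ne.symm h2, ite_mul, mul_ite, sub_mul, mul_sub, add_mul, mul_add, Finset.sum_add_distrib, Finset.sum_sub_distrib, Finset.mul_sum, Finset.sum_ite_eq, Finset.sum_ite_eq', Finset.card_univ]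
      try field_simp
      try ring
      try (split <;> ring)
    · simp [h1, Ne.symm h1, ite_mul, mul_ite, sub_mul, mul_sub, add_mul, mul_add, Finset.sum_add_distrib, Finset.sum_sub_distrib, Finset.mul_sum, Finset.sum_ite_eq, Finset.sum_ite_eq', Finset.card_univ]
      try field_simp
      try ring
      try (split <;> ring)
    · simp [h1, h2, Ne.symm h1, Ne.symm h2, ite_mul, mul_ite, sub_mul, mul_sub, add_mul, mul_add, Finset.sum_add_distrib, Finset.sum_sub_distrib, Finset.mul_sum, Finset.sum_ite_eq, Finset.sum_ite_eq', Finset.card_univ]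
      try field_simp
      try ring
      try (split <;> ring)
  · rcases eq_or_ne a 0 with rfl | h1 <;> rcases eq_or_ne j 0 with rfl | h2
    · simp [ite_mul, mul_ite, sub_mul, mul_sub, add_mul, mul_add, Finset.sum_add_distrib, Finset.sum_sub_distrib, Finset.mul_sum, Finset.sum_ite_eq, Finset.sum_ite_eq', Finset.card_univ]
      try field_simp
      try ring
      try (split <;> ring)
    · simp [h2, Ne.symm h2, ite_mul, mul_ite, sub_mul, mul_sub, add_mul, mul_add, Finset.sum_add_distrib, Finset.sum_sub_distrib, Finset.mul_sum, Finset.sum_ite_eq, Finset.sum_ite_eq', Finset.card_univ]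
      try field_simp
      try ring
      try (split <;> ring)
    · simp [h1, Ne.symm h1, ite_mul, mul_ite, sub_mul, mul_sub, add_mul, mul_add, Finset.sum_add_distrib, Finset.sum_sub_distrib, Finset.mul_sum, Finset.sum_ite_eq, Finset.sum_ite_eq', Finset.card_univ]
      try field_simp
      try ring
      try (split <;> ring)
    · simp [h1, h2, Ne.symm h1, Ne.symm h2, ite_mul, mul_ite, sub_mul, mul_sub, add_mul, mul_add, Finset.sum_add_distrib, Finset.sum_sub_distrib, Finset.mul_sum, Finset.sum_ite_eq, Finset.sum_ite_eq', Finset.card_univ]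
      try field_simp
      try ring
      try (split <;> ring)
  · rcases eq_or_ne b 0 with rfl | h1 <;> rcases eq_or_ne i 0 with rfl | h2
    · simp [ite_mul, mul_ite, sub_mul, mul_sub, add_mul, mul_add, Finset.sum_add_distrib, Finset.sum_sub_distrib, Finset.mul_sum, Finset.sum_ite_eq, Finset.sum_ite_eq', Finset.card_univ]
      try field_simp
      try ring
      try (split <;> ring)
    · simp [h2, Ne.symm h2, ite_mul, mul_ite, sub_mul, mul_sub, add_mul, mul_add, Finset.sum_add_distrib, Finset.sum_sub_distrib, Finset.mul_sum, Finset.sum_ite_eq, Finset.sum_ite_eq', Finset.card_univ]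
      try field_simp
      try ring
      try (split <;> ring)
    · simp [h1, Ne.symm h1, ite_mul, mul_ite, sub_mul, mul_sub, add_mul, mul_add, Finset.sum_add_distrib, Finset.sum_sub_distrib, Finset.mul_sum, Finset.sum_ite_eq, Finset.sum_ite_eq', Finset.card_univ]
      try field_simp
      try ring
      try (split <;> ring)
    · simp [h1, h2, Ne.symm h1, Ne.symm h2, ite_mul, mul_ite, sub_mul, mul_sub, add_mul, mul_add, Finset.sum_add_distrib, Finset.sum_sub_distrib, Finset.mul_sum, Finset.sum_ite_eq, Finset.sum_ite_eq', Finset.card_univ]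
      try field_simp
      try ring
      try (split <;> ring)
  · rcases eq_or_ne b 0 with rfl | h1 <;> rcases eq_or_ne j 0 with rfl | h2
    · simp [ite_mul, mul_ite, sub_mul, mul_sub, add_mul, mul_add, Finset.sum_add_distrib, Finset.sum_sub_distrib, Finset.mul_sum, Finset.sum_ite_eq, Finset.sum_ite_eq', Finset.card_univ]
      try field_simp
      try ring
      try (split <;> ring)
    · simp [h2, Ne.symm h2, ite_mul, mul_ite, sub_mul, mul_sub, add_mul, mul_add, Finset.sum_add_distrib, Finset.sum_sub_distrib, Finset.mul_sum, Finset.sum_ite_eq, Finset.sum_ite_eq', Finset.card_univ]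
      try field_simp
      try ring
      try (split <;> ring)
    · simp [h1, Ne.symm h1, ite_mul, mul_ite, sub_mul, mul_sub, add_mul, mul_add, Finset.sum_add_distrib, Finset.sum_sub_distrib, Finset.mul_sum, Finset.sum_ite_eq, Finset.sum_ite_eq', Finset.card_univ]
      try field_simp
      try ring
      try (split <;> ring)
    · simp [h1, h2, Ne.symm h1, Ne.symm h2, ite_mul, mul_ite, sub_mul, mul_sub, add_mul, mul_add, Finset.sum_add_distrib, Finset.sum_sub_distrib, Finset.mul_sum, Finset.sum_ite_eq, Finset.sum_ite_eq', Finset.card_univ]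
      try field_simp
      try ring
      try (split <;> ring)



lemma map_fin_val {n : ℕ} (f : Fin (n+1) → ℝ) (c : ℝ) (h0 : ∀ i : Fin (n+1), i ≠ 0 → f i = c) :
    Multiset.map f (Finset.univ.val : Multiset (Fin (n+1))) = f 0 ::ₘ Multiset.replicate n c := by
  rw [Fin.univ_succ, Finset.cons_val, Multiset.map_cons, Finset.map_val, Multiset.map_map]
  congr 1
  have : Multiset.map (f ∘ ⇑(⟨Fin.succ, Fin.succ_injective n⟩ : Fin n ↪ Fin (n+1)))
      (Finset.univ.val : Multiset (Fin n)) = Multiset.map (fun _ => c) (Finset.univ.val : Multiset (Fin n)) := by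
    apply Multiset.map_congr rfl
    intro x _
    exact h0 _ (Fin.succ_ne_zero x)
  rw [this, Multiset.map_const']
  congr 1
  simp [Finset.card_univ]

end Graph

end Stmt5Aux


theorem stmt5 (n₁ n₂ : ℕ) (h₁ : 1 ≤ n₁) (h₂ : 1 ≤ n₂) :
    (distLaplacian (completeBipartiteGraph (Fin n₁) (Fin n₂))).charpoly.roots =
      ({0, (n₁ : ℝ) + (n₂ : ℝ)} : Multiset ℝ)
      + Multiset.replicate (n₁ - 1) (2 * (n₁ : ℝ) + (n₂ : ℝ))
      + Multiset.replicate (n₂ - 1) ((n₁ : ℝ) + 2 * (n₂ : ℝ)) := by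
  obtain ⟨m, rfl⟩ : ∃ m, n₁ = m + 1 := ⟨n₁ - 1, by omega⟩
  obtain ⟨k, rfl⟩ : ∃ k, n₂ = k + 1 := ⟨n₂ - 1, by omega⟩
  open Stmt5Aux in
  have hPQ : Pm m k * Qm m k = 1 := mul_eq_one_comm.mp (hQP m k)
  have hL : distLaplacian (completeBipartiteGraph (Fin (m+1)) (Fin (k+1)))
      = Pm m k * Matrix.diagonal (Stmt5Aux.dv m k) * Qm m k := by
    calc distLaplacian (Stmt5Aux.G m k)
        = distLaplacian (Stmt5Aux.G m k) * (Pm m k * Qm m k) := by rw [hPQ, Matrix.mul_one]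
      _ = (distLaplacian (Stmt5Aux.G m k) * Pm m k) * Qm m k := by rw [Matrix.mul_assoc]
      _ = Pm m k * Matrix.diagonal (Stmt5Aux.dv m k) * Qm m k := by rw [Stmt5Aux.hLP]
  rw [hL, Stmt5Aux.charpoly_conj _ _ _ hPQ, Stmt5Aux.roots_charpoly_diagonal]
  rw [← Finset.univ_disjSum_univ, Finset.val_disjSum]
  have hds : (Finset.univ.val : Multiset (Fin (m+1))).disjSum (Finset.univ.val : Multiset (Fin (k+1)))
      = Multiset.map Sum.inl Finset.univ.val + Multiset.map Sum.inr Finset.univ.val := rfl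
  rw [hds, Multiset.map_add, Multiset.map_map, Multiset.map_map]
  rw [Stmt5Aux.map_fin_val (Stmt5Aux.dv m k ∘ Sum.inl) (2 * ((m : ℝ) + 1) + ((k : ℝ) + 1))
      (by intro i hi; simp [Stmt5Aux.dv, hi]),
    Stmt5Aux.map_fin_val (Stmt5Aux.dv m k ∘ Sum.inr) (((m : ℝ) + 1) + 2 * ((k : ℝ) + 1))
      (by intro i hi; simp [Stmt5Aux.dv, hi])]
  simp only [Function.comp_apply, Stmt5Aux.dv, if_pos rfl, Nat.add_sub_cancel]
  push_cast
  simp only [Multiset.insert_eq_cons, ← Multiset.singleton_add]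
  abel
end

section
/- For i = 1, 2, 3, let Gᵢ be an rᵢ-regular graph on nᵢ vertices with adjacency spectra {r₁ = λ₁, λ₂, …, λ_{n₁}}, {r₂ = μ₁, μ₂, …, μ_{n₂}}, and {r₃ = δ₁, δ₂, …, δ_{n₃}}, respectively. Then the distance Laplacian spectrum of G₁∇(G₂ ∪ G₃) consists of the eigenvalues 0, n₁ + n₂ + n₃, n₁ + 2n₂ + 2n₃, the eigenvalues 2n₁ + n₂ + n₃ − r₁ + λⱼ for j = 2, 3, …, n₁, the eigenvalues n₁ + 2n₂ + 2n₃ − r₂ + μⱼ for j = 2, 3, …, n₂, and the eigenvalues n₁ + 2n₂ + 2n₃ − r₃ + δⱼ for j = 2, 3, …, n₃. -/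
open Finset

/-- The disjoint union of two vertex-disjoint graphs. -/
def disjUnionGraph {V₂ V₃ : Type*} (G₂ : SimpleGraph V₂) (G₃ : SimpleGraph V₃) :
    SimpleGraph (V₂ ⊕ V₃) where
  Adj x y :=
    match x, y with
    | Sum.inl u, Sum.inl v => G₂.Adj u v
    | Sum.inr u, Sum.inr v => G₃.Adj u v
    | _, _ => False
  symm := by
    constructor
    rintro (u | u) (v | v) h
    · exact G₂.adj_symm h
    · exact h.elim
    · exact h.elim
    · exact G₃.adj_symm h
  loopless := by
    constructor
    rintro (u | u) h
    · exact G₂.irrefl h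
    · exact G₃.irrefl h

open Polynomial Matrix Sum

section helpers
variable {α : Type*} [Fintype α] [DecidableEq α] {β : Type*} [AddCommGroup β]

lemma sum_ite_double (w a : α) (f g : α → β) :
    (∑ k, if k = w then f k else if k = a then g k else 0)
      = f w + (if a = w then 0 else g a) := by
  have key : ∀ k : α, (if k = w then f k else if k = a then g k else 0)
      = (if k = w then f k - (if k = a then g k else 0) else 0) + (if k = a then g k else 0) := by
    intro k
    by_cases hk : k = w <;> simp [hk]
  rw [Finset.sum_congr rfl fun k _ => key k]
  rw [Finset.sum_add_distrib, Finset.sum_ite_eq' univ w, Finset.sum_ite_eq' univ a]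
  simp only [mem_univ, if_true]
  by_cases haw : a = w
  · subst haw; simp
  · rw [if_neg (fun h : w = a => haw h.symm), if_neg haw]
    abel

lemma sum_ite_single (a : α) (f g : α → β) :
    (∑ k, if k = a then f k else g k) = f a - g a + ∑ k, g k := by
  have key : ∀ k : α, (if k = a then f k else g k)
      = (if k = a then f k - g k else 0) + g k := by
    intro k
    by_cases hk : k = a <;> simp [hk]
  rw [Finset.sum_congr rfl fun k _ => key k, Finset.sum_add_distrib,
    Finset.sum_ite_eq' univ a]
  simp

lemma sum_ite_single' (a : α) (f g : α → β) :
    (∑ k, if a = k then f k else g k) = f a - g a + ∑ k, g k := by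
  rw [Finset.sum_congr rfl fun k _ => if_congr (eq_comm (a := a) (b := k)) rfl rfl]
  exact sum_ite_single a f g

lemma sum_ite_double' (w a : α) (f g : α → β) :
    (∑ k, if k = w then f k else if a = k then g k else 0)
      = f w + (if a = w then 0 else g a) := by
  rw [Finset.sum_congr rfl fun k _ => by
    rw [show (if a = k then g k else (0:β)) = (if k = a then g k else 0) from
      if_congr (eq_comm (a := a) (b := k)) rfl rfl]]
  exact sum_ite_double w a f g

end helpers

section genlemmas
variable {n R : Type*} [Fintype n] [DecidableEq n] [CommRing R] [IsDomain R]

lemma charpoly_smul_one_add (c : R) (B : Matrix n n R) (m : Multiset R)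
    (h : B.charpoly = (m.map fun a => X - C a).prod) :
    (c • (1 : Matrix n n R) + B).charpoly = ((m.map fun a => c + a).map fun a => X - C a).prod := by
  let φ : R[X] →+* R[X] := eval₂RingHom (C : R →+* R[X]) (X - C c)
  have hφX : φ X = X - C c := eval₂_X _ _
  have hφC : ∀ a : R, φ (C a) = C a := fun a => eval₂_C _ _
  have hmat : (c • (1 : Matrix n n R) + B).charmatrix = B.charmatrix.map φ := by
    ext i j
    by_cases hij : i = j
    · subst hij
      simp only [charmatrix_apply_eq, Matrix.add_apply, Matrix.smul_apply, Matrix.one_apply_eq,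
        smul_eq_mul, mul_one, Matrix.map_apply, map_sub, hφX, hφC]
      rw [map_add, sub_sub]
    · simp only [charmatrix_apply_ne _ _ _ hij, Matrix.add_apply, Matrix.smul_apply,
        Matrix.one_apply_ne hij, smul_eq_mul, mul_zero, zero_add, Matrix.map_apply, map_neg, hφC]
  have : (c • (1 : Matrix n n R) + B).charpoly = φ B.charpoly := by
    unfold Matrix.charpoly
    rw [hmat, ← RingHom.mapMatrix_apply, ← RingHom.map_det]
  rw [this, h, map_multiset_prod, Multiset.map_map, Multiset.map_map]
  congr 1
  apply Multiset.map_congr rfl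
  intro a _
  simp only [Function.comp_apply, map_sub, hφX, hφC, map_add]
  ring

end genlemmas

section defl
variable {R : Type*} [CommRing R] [IsDomain R]
variable {α : Type*} [Fintype α] [DecidableEq α]

lemma charpoly_of_mul_eq_mul (L P Q M : Matrix α α R) (hQP : Q * P = 1) (hLP : L * P = P * M) :
    L.charpoly = M.charpoly := by
  have hdP : Q.det * P.det = 1 := by rw [← Matrix.det_mul, hQP, Matrix.det_one]
  have hPne : (C : R →+* R[X]) P.det ≠ 0 := by
    simp only [ne_eq, Polynomial.C_eq_zero]
    intro h
    rw [h, mul_zero] at hdP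
    exact zero_ne_one hdP
  have key : L.charmatrix * P.map (C : R →+* R[X]) = P.map (C : R →+* R[X]) * M.charmatrix := by
    have h1 : (L * P).map (C : R →+* R[X]) = (P * M).map (C : R →+* R[X]) := by rw [hLP]
    rw [Matrix.map_mul, Matrix.map_mul] at h1
    unfold Matrix.charmatrix
    rw [sub_mul, mul_sub]
    rw [(Matrix.scalar_commute (X : R[X]) (fun r => Commute.all _ _)
      (P.map (C : R →+* R[X]))).eq]
    simp only [RingHom.mapMatrix_apply]
    rw [h1]
  have := congrArg Matrix.det key
  rw [Matrix.det_mul, Matrix.det_mul] at this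
  have hdet : (P.map (C : R →+* R[X])).det = (C : R →+* R[X]) P.det := by
    rw [← RingHom.mapMatrix_apply, ← RingHom.map_det]
  rw [hdet] at this
  unfold Matrix.charpoly
  rw [mul_comm] at this
  exact mul_left_cancel₀ hPne this

def deflate (A : Matrix α α R) (w : α) : Matrix {x : α // x ≠ w} {x : α // x ≠ w} R :=
  Matrix.of fun a v => A a.1 v.1 - A w v.1

def Pd (w : α) : Matrix α α R :=
  Matrix.of fun a c => if c = w then 1 else if a = c then 1 else 0

def Qd (w : α) : Matrix α α R :=
  Matrix.of fun a c =>
    if a = w then (if c = w then 1 else 0)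
    else ((if c = a then 1 else 0) - (if c = w then 1 else 0))

def Md (A : Matrix α α R) (w : α) (r : R) : Matrix α α R :=
  Matrix.of fun a c =>
    if c = w then (if a = w then r else 0)
    else (if a = w then A w c else A a c - A w c)

lemma Qd_mul_Pd (w : α) : (Qd w : Matrix α α R) * Pd w = 1 := by
  ext a c
  simp only [Matrix.mul_apply, Qd, Pd, Matrix.one_apply, Matrix.of_apply]
  by_cases ha : a = w <;> by_cases hc : c = w <;>
    simp [ha, hc, sub_mul, Finset.sum_sub_distrib, ite_mul, Finset.sum_ite_eq,
      Finset.sum_ite_eq', eq_comm (a := c)] <;>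
    first | exact Ne.symm hc | (split_ifs <;> simp_all)

lemma mul_Pd_eq (A : Matrix α α R) (w : α) (r : R) (hrow : ∀ a, ∑ v, A a v = r) :
    A * Pd w = Pd w * Md A w r := by
  ext a c
  simp only [Matrix.mul_apply, Pd, Md, Matrix.of_apply]
  by_cases hc : c = w
  · subst hc
    simp only [eq_self_iff_true, if_true, mul_one, hrow a]
    have h2 : ∀ k : α, (if k = c then (1 : R) else if a = k then 1 else 0)
        * (if k = c then r else 0) = if k = c then r else 0 := by
      intro k; by_cases hk : k = c <;> simp [hk]
    rw [Finset.sum_congr rfl fun k _ => h2 k, Finset.sum_ite_eq' univ c (fun _ => r)]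
    simp
  · have hL : ∀ k : α, A a k * (if c = w then (1 : R) else if k = c then 1 else 0)
        = if k = c then A a k else 0 := by
      intro k
      rw [if_neg hc]
      by_cases hkc : k = c <;> simp [hkc]
    have hR : ∀ k : α, (if k = w then (1 : R) else if a = k then 1 else 0) *
        (if c = w then (if k = w then r else 0) else (if k = w then A w c else A k c - A w c))
        = if k = w then A w c else if k = a then A k c - A w c else 0 := by
      intro k
      rw [if_neg hc]
      by_cases hk : k = w
      · simp [hk]
      · rw [if_neg hk, if_neg hk, if_neg hk]
        by_cases hak : k = a
        · rw [if_pos hak, if_pos hak.symm, one_mul]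
        · rw [if_neg (fun h : a = k => hak h.symm), if_neg hak, zero_mul]
    rw [Finset.sum_congr rfl fun k _ => hL k, Finset.sum_congr rfl fun k _ => hR k,
      Finset.sum_ite_eq' univ c (A a ·), sum_ite_double w a]
    by_cases haw : a = w <;> simp [haw] <;> abel

theorem charpoly_deflate (A : Matrix α α R) (w : α) (r : R) (hrow : ∀ a, ∑ v, A a v = r) :
    A.charpoly = (X - C r) * (deflate A w).charpoly := by
  rw [charpoly_of_mul_eq_mul A (Pd w) (Qd w) (Md A w r) (Qd_mul_Pd w) (mul_Pd_eq A w r hrow)]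
  unfold Matrix.charpoly
  rw [Matrix.twoBlockTriangular_det' (charmatrix (Md A w r)) (fun i => i ≠ w)
    (fun i hi j hj => by
      have hjw : j = w := not_not.mp hj
      rw [charmatrix_apply_ne _ _ _ (by rw [hjw]; exact hi)]
      simp [Md, hjw, hi])]
  rw [mul_comm]
  congr 1
  · haveI : Subsingleton {a : α // (fun i => ¬ i ≠ w) a} :=
      ⟨fun x y => Subtype.ext ((not_not.mp x.2).trans (not_not.mp y.2).symm)⟩
    refine (Matrix.det_eq_elem_of_subsingleton _ ⟨w, not_not_intro rfl⟩).trans ?_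
    show charmatrix (Md A w r) w w = _
    rw [charmatrix_apply_eq]
    simp [Md]
  · refine congrArg Matrix.det ?_
    refine Matrix.ext fun i j => ?_
    by_cases hij : i = j
    · subst hij
      show charmatrix (Md A w r) i.1 i.1 = _
      rw [charmatrix_apply_eq, charmatrix_apply_eq]
      simp [Md, deflate, i.2]
    · have hij' : (i : α) ≠ (j : α) := fun h => hij (Subtype.ext h)
      show charmatrix (Md A w r) i.1 j.1 = _
      rw [charmatrix_apply_ne _ _ _ hij', charmatrix_apply_ne _ _ _ hij]
      simp [Md, deflate, i.2, j.2]

end defl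


section main
variable {V₁ V₂ V₃ : Type*} [Fintype V₁] [DecidableEq V₁] [Fintype V₂] [DecidableEq V₂]
  [Fintype V₃] [DecidableEq V₃]

def PP (n₁ n₂ n₃ : ℝ) (w₁ : V₁) (w₂ : V₂) (w₃ : V₃) :
    Matrix (V₁ ⊕ (V₂ ⊕ V₃)) (V₁ ⊕ (V₂ ⊕ V₃)) ℝ := Matrix.of fun k c =>
  match k, c with
  | inl a, inl v => if v = w₁ then 1 else if a = v then 1 else 0
  | inl _, inr (inl v) => if v = w₂ then n₂ + n₃ else 0
  | inl _, inr (inr _) => 0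
  | inr (inl _), inl v => if v = w₁ then 1 else 0
  | inr (inl x), inr (inl v) => if v = w₂ then -n₁ else if x = v then 1 else 0
  | inr (inl _), inr (inr v) => if v = w₃ then n₃ else 0
  | inr (inr _), inl v => if v = w₁ then 1 else 0
  | inr (inr _), inr (inl v) => if v = w₂ then -n₁ else 0
  | inr (inr y), inr (inr v) => if v = w₃ then -n₂ else if y = v then 1 else 0

noncomputable def QQ (n₁ n₂ n₃ : ℝ) (w₁ : V₁) (w₂ : V₂) (w₃ : V₃) :
    Matrix (V₁ ⊕ (V₂ ⊕ V₃)) (V₁ ⊕ (V₂ ⊕ V₃)) ℝ := Matrix.of fun a k =>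
  match a, k with
  | inl v, inl u => if v = w₁ then (if u = w₁ then n₁/(n₁+n₂+n₃) else 0)
      else ((if u = v then 1 else 0) - (if u = w₁ then 1 else 0))
  | inl v, inr (inl u) => if v = w₁ then (if u = w₂ then n₂/(n₁+n₂+n₃) else 0) else 0
  | inl v, inr (inr u) => if v = w₁ then (if u = w₃ then n₃/(n₁+n₂+n₃) else 0) else 0
  | inr (inl x), inl u => if x = w₂ then (if u = w₁ then 1/(n₁+n₂+n₃) else 0) else 0
  | inr (inl x), inr (inl u) => if x = w₂ then
        (if u = w₂ then -n₂/((n₂+n₃)*(n₁+n₂+n₃)) else 0)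
      else ((if u = x then 1 else 0) - (if u = w₂ then 1 else 0))
  | inr (inl x), inr (inr u) => if x = w₂ then
        (if u = w₃ then -n₃/((n₂+n₃)*(n₁+n₂+n₃)) else 0) else 0
  | inr (inr _), inl _ => 0
  | inr (inr y), inr (inl u) => if y = w₃ then (if u = w₂ then 1/(n₂+n₃) else 0) else 0
  | inr (inr y), inr (inr u) => if y = w₃ then (if u = w₃ then -(1/(n₂+n₃)) else 0)
      else ((if u = y then 1 else 0) - (if u = w₃ then 1 else 0))

lemma QQ_mul_PP (n₁ n₂ n₃ : ℝ) (w₁ : V₁) (w₂ : V₂) (w₃ : V₃)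
    (hN : n₁ + n₂ + n₃ ≠ 0) (hs : n₂ + n₃ ≠ 0) :
    QQ n₁ n₂ n₃ w₁ w₂ w₃ * PP n₁ n₂ n₃ w₁ w₂ w₃ = 1 := by
  ext a c
  rcases a with v | x | y <;> rcases c with v' | v' | v' <;>
    simp only [Matrix.mul_apply, QQ, PP, Matrix.of_apply, Matrix.one_apply,
      Fintype.sum_sum_type, Sum.inl.injEq, Sum.inr.injEq, reduceCtorEq, if_false]
  · by_cases h1 : v = w₁ <;> by_cases h2 : v' = w₁ <;>
      simp [h1, h2, sub_mul, ite_mul, mul_ite, Finset.sum_sub_distrib,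
        Finset.sum_ite_eq', eq_comm] <;>
      (try field_simp) <;> (try ring) <;> (try (split_ifs <;> simp_all)) <;>
      intro h <;> exact absurd h.symm h2
  · by_cases h1 : v = w₁ <;> by_cases h2 : v' = w₂ <;>
      simp [h1, h2, sub_mul, ite_mul, mul_ite, Finset.sum_sub_distrib,
        Finset.sum_ite_eq', eq_comm] <;>
      (try field_simp) <;> (try ring) <;> (try (split_ifs <;> simp_all)) <;>
      intro h <;> exact absurd h.symm h2
  · by_cases h1 : v = w₁ <;> by_cases h2 : v' = w₃ <;>
      simp [h1, h2, sub_mul, ite_mul, mul_ite, Finset.sum_sub_distrib,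
        Finset.sum_ite_eq', eq_comm] <;>
      (try field_simp) <;> (try ring) <;> (try (split_ifs <;> simp_all)) <;>
      intro h <;> exact absurd h.symm h2
  · by_cases h1 : x = w₂ <;> by_cases h2 : v' = w₁ <;>
      simp [h1, h2, sub_mul, ite_mul, mul_ite, Finset.sum_sub_distrib,
        Finset.sum_ite_eq', eq_comm] <;>
      (try field_simp) <;> (try ring) <;> (try (split_ifs <;> simp_all)) <;>
      intro h <;> exact absurd h.symm h2
  · by_cases h1 : x = w₂ <;> by_cases h2 : v' = w₂ <;>
      simp [h1, h2, sub_mul, ite_mul, mul_ite, Finset.sum_sub_distrib,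
        Finset.sum_ite_eq', eq_comm] <;>
      (try field_simp) <;> (try ring) <;> (try (split_ifs <;> simp_all)) <;>
      intro h <;> exact absurd h.symm h2
  · by_cases h1 : x = w₂ <;> by_cases h2 : v' = w₃ <;>
      simp [h1, h2, sub_mul, ite_mul, mul_ite, Finset.sum_sub_distrib,
        Finset.sum_ite_eq', eq_comm] <;>
      (try field_simp) <;> (try ring) <;> (try (split_ifs <;> simp_all)) <;>
      intro h <;> exact absurd h.symm h2
  · by_cases h1 : y = w₃ <;> by_cases h2 : v' = w₁ <;>
      simp [h1, h2, sub_mul, ite_mul, mul_ite, Finset.sum_sub_distrib,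
        Finset.sum_ite_eq', eq_comm] <;>
      (try field_simp) <;> (try ring) <;> (try (split_ifs <;> simp_all)) <;>
      intro h <;> exact absurd h.symm h2
  · by_cases h1 : y = w₃ <;> by_cases h2 : v' = w₂ <;>
      simp [h1, h2, sub_mul, ite_mul, mul_ite, Finset.sum_sub_distrib,
        Finset.sum_ite_eq', eq_comm] <;>
      (try field_simp) <;> (try ring) <;> (try (split_ifs <;> simp_all)) <;>
      intro h <;> exact absurd h.symm h2
  · by_cases h1 : y = w₃ <;> by_cases h2 : v' = w₃ <;>
      simp [h1, h2, sub_mul, ite_mul, mul_ite, Finset.sum_sub_distrib,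
        Finset.sum_ite_eq', eq_comm] <;>
      (try field_simp) <;> (try ring) <;> (try (split_ifs <;> simp_all)) <;>
      intro h <;> exact absurd h.symm h2

noncomputable def MM (A₁ : Matrix V₁ V₁ ℝ) (A₂ : Matrix V₂ V₂ ℝ) (A₃ : Matrix V₃ V₃ ℝ)
    (n₁ n₂ n₃ r₁ r₂ r₃ : ℝ) (w₁ : V₁) (w₂ : V₂) (w₃ : V₃) :
    Matrix (V₁ ⊕ (V₂ ⊕ V₃)) (V₁ ⊕ (V₂ ⊕ V₃)) ℝ := Matrix.of fun a c =>
  match a, c with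
  | inl u, inl v =>
      if v = w₁ then 0
      else if u = w₁ then (n₁*(A₁ w₁ v - 2) - (n₂+n₃))/(n₁+n₂+n₃)
      else (if u = v then 2*n₁+n₂+n₃-r₁ else 0) + A₁ u v - A₁ w₁ v
  | inl u, inr (inl v) =>
      if v = w₂ then 0
      else if u = w₁ then (-n₁ + n₂*(A₂ w₂ v - 2) - 2*n₃)/(n₁+n₂+n₃)
      else 0
  | inl u, inr (inr v) =>
      if v = w₃ then 0
      else if u = w₁ then (-n₁ - 2*n₂ + n₃*(A₃ w₃ v - 2))/(n₁+n₂+n₃)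
      else 0
  | inr (inl x), inl v =>
      if v = w₁ then 0
      else if x = w₂ then (A₁ w₁ v - 1)/(n₁+n₂+n₃)
      else 0
  | inr (inl x), inr (inl v) =>
      if v = w₂ then (if x = w₂ then n₁+n₂+n₃ else 0)
      else if x = w₂ then (-(n₂+n₃) - n₂*(A₂ w₂ v - 2) + 2*n₃)/((n₂+n₃)*(n₁+n₂+n₃))
      else (if x = v then n₁+2*n₂+2*n₃-r₂ else 0) + A₂ x v - A₂ w₂ v
  | inr (inl x), inr (inr v) =>
      if v = w₃ then 0
      else if x = w₂ then (-(n₂+n₃) + 2*n₂ - n₃*(A₃ w₃ v - 2))/((n₂+n₃)*(n₁+n₂+n₃))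
      else 0
  | inr (inr _), inl _ => 0
  | inr (inr y), inr (inl v) =>
      if v = w₂ then 0
      else if y = w₃ then A₂ w₂ v/(n₂+n₃)
      else 0
  | inr (inr y), inr (inr v) =>
      if v = w₃ then (if y = w₃ then n₁+2*n₂+2*n₃ else 0)
      else if y = w₃ then -(A₃ w₃ v)/(n₂+n₃)
      else (if y = v then n₁+2*n₂+2*n₃-r₃ else 0) + A₃ y v - A₃ w₃ v

set_option maxHeartbeats 3200000 in
lemma LP_eq_PM (A₁ : Matrix V₁ V₁ ℝ) (A₂ : Matrix V₂ V₂ ℝ) (A₃ : Matrix V₃ V₃ ℝ)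
    (n₁ n₂ n₃ r₁ r₂ r₃ : ℝ) (w₁ : V₁) (w₂ : V₂) (w₃ : V₃)
    (hn₁ : (Fintype.card V₁ : ℝ) = n₁) (hn₂ : (Fintype.card V₂ : ℝ) = n₂)
    (hn₃ : (Fintype.card V₃ : ℝ) = n₃)
    (hN : n₁ + n₂ + n₃ ≠ 0) (hs : n₂ + n₃ ≠ 0)
    (hrow₁ : ∀ a, ∑ v, A₁ a v = r₁) (hrow₂ : ∀ a, ∑ v, A₂ a v = r₂)
    (hrow₃ : ∀ a, ∑ v, A₃ a v = r₃)
    (hdiag₁ : ∀ a, A₁ a a = 0) (hdiag₂ : ∀ a, A₂ a a = 0) (hdiag₃ : ∀ a, A₃ a a = 0)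
    (L : Matrix (V₁ ⊕ (V₂ ⊕ V₃)) (V₁ ⊕ (V₂ ⊕ V₃)) ℝ)
    (hL11 : ∀ a b, L (inl a) (inl b) = if a = b then 2*n₁-2-r₁+n₂+n₃ else A₁ a b - 2)
    (hL12 : ∀ a x, L (inl a) (inr x) = -1)
    (hL21 : ∀ x a, L (inr x) (inl a) = -1)
    (hL22 : ∀ x y, L (inr (inl x)) (inr (inl y)) =
      if x = y then n₁+2*n₂+2*n₃-2-r₂ else A₂ x y - 2)
    (hL23 : ∀ x y, L (inr (inl x)) (inr (inr y)) = -2)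
    (hL32 : ∀ y x, L (inr (inr y)) (inr (inl x)) = -2)
    (hL33 : ∀ x y, L (inr (inr x)) (inr (inr y)) =
      if x = y then n₁+2*n₂+2*n₃-2-r₃ else A₃ x y - 2) :
    L * PP n₁ n₂ n₃ w₁ w₂ w₃
      = PP n₁ n₂ n₃ w₁ w₂ w₃ * MM A₁ A₂ A₃ n₁ n₂ n₃ r₁ r₂ r₃ w₁ w₂ w₃ := by
  ext k c
  rcases k with a | x | y <;> rcases c with v' | v' | v' <;>
    simp only [Matrix.mul_apply, PP, MM, Matrix.of_apply, Fintype.sum_sum_type,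
      hL11, hL12, hL21, hL22, hL23, hL32, hL33]
  · by_cases h1 : a = w₁ <;> by_cases h2 : v' = w₁ <;>
      simp [h1, h2, mul_ite, ite_mul, mul_sub, sub_mul, Finset.sum_sub_distrib,
        sum_ite_single, sum_ite_single', sum_ite_double, sum_ite_double',
        Finset.sum_ite_eq, Finset.sum_ite_eq', Finset.sum_const, Finset.card_univ,
        nsmul_eq_mul, Finset.sum_add_distrib, ← Finset.mul_sum,
        hn₁, hn₂, hn₃, hrow₁, hrow₂, hrow₃, hdiag₁, hdiag₂, hdiag₃] <;>
      (try field_simp) <;> (try ring) <;> (try (split_ifs <;> simp_all)) <;>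
      (try field_simp) <;> (try ring) <;>
      (try (simp only [Finset.sum_add_distrib, ← Finset.mul_sum, hrow₁, hrow₂, hrow₃,
        Finset.sum_sub_distrib, Finset.sum_const, Finset.card_univ, nsmul_eq_mul,
        hn₁, hn₂, hn₃] <;> ring))
  · by_cases h1 : a = w₁ <;> by_cases h2 : v' = w₂ <;>
      simp [h1, h2, mul_ite, ite_mul, mul_sub, sub_mul, Finset.sum_sub_distrib,
        sum_ite_single, sum_ite_single', sum_ite_double, sum_ite_double',
        Finset.sum_ite_eq, Finset.sum_ite_eq', Finset.sum_const, Finset.card_univ,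
        nsmul_eq_mul, Finset.sum_add_distrib, ← Finset.mul_sum,
        hn₁, hn₂, hn₃, hrow₁, hrow₂, hrow₃, hdiag₁, hdiag₂, hdiag₃] <;>
      (try field_simp) <;> (try ring) <;> (try (split_ifs <;> simp_all)) <;>
      (try field_simp) <;> (try ring) <;>
      (try (simp only [Finset.sum_add_distrib, ← Finset.mul_sum, hrow₁, hrow₂, hrow₃,
        Finset.sum_sub_distrib, Finset.sum_const, Finset.card_univ, nsmul_eq_mul,
        hn₁, hn₂, hn₃] <;> ring))
  · by_cases h1 : a = w₁ <;> by_cases h2 : v' = w₃ <;>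
      simp [h1, h2, mul_ite, ite_mul, mul_sub, sub_mul, Finset.sum_sub_distrib,
        sum_ite_single, sum_ite_single', sum_ite_double, sum_ite_double',
        Finset.sum_ite_eq, Finset.sum_ite_eq', Finset.sum_const, Finset.card_univ,
        nsmul_eq_mul, Finset.sum_add_distrib, ← Finset.mul_sum,
        hn₁, hn₂, hn₃, hrow₁, hrow₂, hrow₃, hdiag₁, hdiag₂, hdiag₃] <;>
      (try field_simp) <;> (try ring) <;> (try (split_ifs <;> simp_all)) <;>
      (try field_simp) <;> (try ring) <;>
      (try (simp only [Finset.sum_add_distrib, ← Finset.mul_sum, hrow₁, hrow₂, hrow₃,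
        Finset.sum_sub_distrib, Finset.sum_const, Finset.card_univ, nsmul_eq_mul,
        hn₁, hn₂, hn₃] <;> ring))
  · by_cases h1 : x = w₂ <;> by_cases h2 : v' = w₁ <;>
      simp [h1, h2, mul_ite, ite_mul, mul_sub, sub_mul, Finset.sum_sub_distrib,
        sum_ite_single, sum_ite_single', sum_ite_double, sum_ite_double',
        Finset.sum_ite_eq, Finset.sum_ite_eq', Finset.sum_const, Finset.card_univ,
        nsmul_eq_mul, Finset.sum_add_distrib, ← Finset.mul_sum,
        hn₁, hn₂, hn₃, hrow₁, hrow₂, hrow₃, hdiag₁, hdiag₂, hdiag₃] <;>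
      (try field_simp) <;> (try ring) <;> (try (split_ifs <;> simp_all)) <;>
      (try field_simp) <;> (try ring) <;>
      (try (simp only [Finset.sum_add_distrib, ← Finset.mul_sum, hrow₁, hrow₂, hrow₃,
        Finset.sum_sub_distrib, Finset.sum_const, Finset.card_univ, nsmul_eq_mul,
        hn₁, hn₂, hn₃] <;> ring))
  · by_cases h1 : x = w₂ <;> by_cases h2 : v' = w₂ <;>
      simp [h1, h2, mul_ite, ite_mul, mul_sub, sub_mul, Finset.sum_sub_distrib,
        sum_ite_single, sum_ite_single', sum_ite_double, sum_ite_double',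
        Finset.sum_ite_eq, Finset.sum_ite_eq', Finset.sum_const, Finset.card_univ,
        nsmul_eq_mul, Finset.sum_add_distrib, ← Finset.mul_sum,
        hn₁, hn₂, hn₃, hrow₁, hrow₂, hrow₃, hdiag₁, hdiag₂, hdiag₃] <;>
      (try field_simp) <;> (try ring) <;> (try (split_ifs <;> simp_all)) <;>
      (try field_simp) <;> (try ring) <;>
      (try (simp only [Finset.sum_add_distrib, ← Finset.mul_sum, hrow₁, hrow₂, hrow₃,
        Finset.sum_sub_distrib, Finset.sum_const, Finset.card_univ, nsmul_eq_mul,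
        hn₁, hn₂, hn₃] <;> ring))
  · by_cases h1 : x = w₂ <;> by_cases h2 : v' = w₃ <;>
      simp [h1, h2, mul_ite, ite_mul, mul_sub, sub_mul, Finset.sum_sub_distrib,
        sum_ite_single, sum_ite_single', sum_ite_double, sum_ite_double',
        Finset.sum_ite_eq, Finset.sum_ite_eq', Finset.sum_const, Finset.card_univ,
        nsmul_eq_mul, Finset.sum_add_distrib, ← Finset.mul_sum,
        hn₁, hn₂, hn₃, hrow₁, hrow₂, hrow₃, hdiag₁, hdiag₂, hdiag₃] <;>
      (try field_simp) <;> (try ring) <;> (try (split_ifs <;> simp_all)) <;>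
      (try field_simp) <;> (try ring) <;>
      (try (simp only [Finset.sum_add_distrib, ← Finset.mul_sum, hrow₁, hrow₂, hrow₃,
        Finset.sum_sub_distrib, Finset.sum_const, Finset.card_univ, nsmul_eq_mul,
        hn₁, hn₂, hn₃] <;> ring))
  · by_cases h1 : y = w₃ <;> by_cases h2 : v' = w₁ <;>
      simp [h1, h2, mul_ite, ite_mul, mul_sub, sub_mul, Finset.sum_sub_distrib,
        sum_ite_single, sum_ite_single', sum_ite_double, sum_ite_double',
        Finset.sum_ite_eq, Finset.sum_ite_eq', Finset.sum_const, Finset.card_univ,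
        nsmul_eq_mul, Finset.sum_add_distrib, ← Finset.mul_sum,
        hn₁, hn₂, hn₃, hrow₁, hrow₂, hrow₃, hdiag₁, hdiag₂, hdiag₃] <;>
      (try field_simp) <;> (try ring) <;> (try (split_ifs <;> simp_all)) <;>
      (try field_simp) <;> (try ring) <;>
      (try (simp only [Finset.sum_add_distrib, ← Finset.mul_sum, hrow₁, hrow₂, hrow₃,
        Finset.sum_sub_distrib, Finset.sum_const, Finset.card_univ, nsmul_eq_mul,
        hn₁, hn₂, hn₃] <;> ring))
  · by_cases h1 : y = w₃ <;> by_cases h2 : v' = w₂ <;>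
      simp [h1, h2, mul_ite, ite_mul, mul_sub, sub_mul, Finset.sum_sub_distrib,
        sum_ite_single, sum_ite_single', sum_ite_double, sum_ite_double',
        Finset.sum_ite_eq, Finset.sum_ite_eq', Finset.sum_const, Finset.card_univ,
        nsmul_eq_mul, Finset.sum_add_distrib, ← Finset.mul_sum,
        hn₁, hn₂, hn₃, hrow₁, hrow₂, hrow₃, hdiag₁, hdiag₂, hdiag₃] <;>
      (try field_simp) <;> (try ring) <;> (try (split_ifs <;> simp_all)) <;>
      (try field_simp) <;> (try ring) <;>
      (try (simp only [Finset.sum_add_distrib, ← Finset.mul_sum, hrow₁, hrow₂, hrow₃,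
        Finset.sum_sub_distrib, Finset.sum_const, Finset.card_univ, nsmul_eq_mul,
        hn₁, hn₂, hn₃] <;> ring))
  · by_cases h1 : y = w₃ <;> by_cases h2 : v' = w₃ <;>
      simp [h1, h2, mul_ite, ite_mul, mul_sub, sub_mul, Finset.sum_sub_distrib,
        sum_ite_single, sum_ite_single', sum_ite_double, sum_ite_double',
        Finset.sum_ite_eq, Finset.sum_ite_eq', Finset.sum_const, Finset.card_univ,
        nsmul_eq_mul, Finset.sum_add_distrib, ← Finset.mul_sum,
        hn₁, hn₂, hn₃, hrow₁, hrow₂, hrow₃, hdiag₁, hdiag₂, hdiag₃] <;>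
      (try field_simp) <;> (try ring) <;> (try (split_ifs <;> simp_all)) <;>
      (try field_simp) <;> (try ring) <;>
      (try (simp only [Finset.sum_add_distrib, ← Finset.mul_sum, hrow₁, hrow₂, hrow₃,
        Finset.sum_sub_distrib, Finset.sum_const, Finset.card_univ, nsmul_eq_mul,
        hn₁, hn₂, hn₃] <;> ring))

def bfun (w₁ : V₁) (w₂ : V₂) (w₃ : V₃) : (V₁ ⊕ (V₂ ⊕ V₃)) → Fin 6
  | inl a => if a = w₁ then 0 else 3
  | inr (inl x) => if x = w₂ then 1 else 4
  | inr (inr y) => if y = w₃ then 2 else 5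

lemma MM_tri (A₁ : Matrix V₁ V₁ ℝ) (A₂ : Matrix V₂ V₂ ℝ) (A₃ : Matrix V₃ V₃ ℝ)
    (n₁ n₂ n₃ r₁ r₂ r₃ : ℝ) (w₁ : V₁) (w₂ : V₂) (w₃ : V₃) :
    ∀ i j, bfun w₁ w₂ w₃ j < bfun w₁ w₂ w₃ i →
      MM A₁ A₂ A₃ n₁ n₂ n₃ r₁ r₂ r₃ w₁ w₂ w₃ i j = 0 := by
  intro i j hij
  rcases i with u | x | y <;> rcases j with v | v | v <;>
    simp only [bfun, MM, Matrix.of_apply] at hij ⊢ <;>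
    split_ifs at hij ⊢ <;>
    first
      | rfl
      | exact absurd hij (by decide)
      | simp_all

lemma MM_charmatrix_blockTriangular (A₁ : Matrix V₁ V₁ ℝ) (A₂ : Matrix V₂ V₂ ℝ)
    (A₃ : Matrix V₃ V₃ ℝ) (n₁ n₂ n₃ r₁ r₂ r₃ : ℝ) (w₁ : V₁) (w₂ : V₂) (w₃ : V₃) :
    Matrix.BlockTriangular
      (Matrix.charmatrix (MM A₁ A₂ A₃ n₁ n₂ n₃ r₁ r₂ r₃ w₁ w₂ w₃)) (bfun w₁ w₂ w₃) := by
  intro i j hij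
  have hne : i ≠ j := fun h => by subst h; exact lt_irrefl _ hij
  rw [Matrix.charmatrix_apply_ne _ _ _ hne,
    MM_tri A₁ A₂ A₃ n₁ n₂ n₃ r₁ r₂ r₃ w₁ w₂ w₃ i j hij, map_zero, neg_zero]

lemma det_eq_det_of_bij {β γ R : Type*} [Fintype β] [DecidableEq β] [Fintype γ]
    [DecidableEq γ] [CommRing R] (Mγ : Matrix γ γ R) (Mβ : Matrix β β R) (f : β → γ)
    (hf : Function.Bijective f) (h : ∀ i j, Mγ (f i) (f j) = Mβ i j) : Mγ.det = Mβ.det := by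
  rw [← Matrix.det_submatrix_equiv_self (Equiv.ofBijective f hf) Mγ]
  congr 1
  refine Matrix.ext fun i j => ?_
  simpa [Matrix.submatrix_apply] using h i j

set_option maxHeartbeats 1600000 in
theorem charpoly_join_abs (A₁ : Matrix V₁ V₁ ℝ) (A₂ : Matrix V₂ V₂ ℝ) (A₃ : Matrix V₃ V₃ ℝ)
    (n₁ n₂ n₃ r₁ r₂ r₃ : ℝ) (w₁ : V₁) (w₂ : V₂) (w₃ : V₃)
    (hn₁ : (Fintype.card V₁ : ℝ) = n₁) (hn₂ : (Fintype.card V₂ : ℝ) = n₂)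
    (hn₃ : (Fintype.card V₃ : ℝ) = n₃)
    (hN : n₁ + n₂ + n₃ ≠ 0) (hs : n₂ + n₃ ≠ 0)
    (hrow₁ : ∀ a, ∑ v, A₁ a v = r₁) (hrow₂ : ∀ a, ∑ v, A₂ a v = r₂)
    (hrow₃ : ∀ a, ∑ v, A₃ a v = r₃)
    (hdiag₁ : ∀ a, A₁ a a = 0) (hdiag₂ : ∀ a, A₂ a a = 0) (hdiag₃ : ∀ a, A₃ a a = 0)
    (L : Matrix (V₁ ⊕ (V₂ ⊕ V₃)) (V₁ ⊕ (V₂ ⊕ V₃)) ℝ)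
    (hL11 : ∀ a b, L (inl a) (inl b) = if a = b then 2*n₁-2-r₁+n₂+n₃ else A₁ a b - 2)
    (hL12 : ∀ a x, L (inl a) (inr x) = -1)
    (hL21 : ∀ x a, L (inr x) (inl a) = -1)
    (hL22 : ∀ x y, L (inr (inl x)) (inr (inl y)) =
      if x = y then n₁+2*n₂+2*n₃-2-r₂ else A₂ x y - 2)
    (hL23 : ∀ x y, L (inr (inl x)) (inr (inr y)) = -2)
    (hL32 : ∀ y x, L (inr (inr y)) (inr (inl x)) = -2)
    (hL33 : ∀ x y, L (inr (inr x)) (inr (inr y)) =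
      if x = y then n₁+2*n₂+2*n₃-2-r₃ else A₃ x y - 2) :
    L.charpoly = X * (X - C (n₁+n₂+n₃)) * (X - C (n₁+2*n₂+2*n₃))
      * ((2*n₁+n₂+n₃-r₁) • (1 : Matrix {v : V₁ // v ≠ w₁} {v : V₁ // v ≠ w₁} ℝ)
          + deflate A₁ w₁).charpoly
      * ((n₁+2*n₂+2*n₃-r₂) • (1 : Matrix {v : V₂ // v ≠ w₂} {v : V₂ // v ≠ w₂} ℝ)
          + deflate A₂ w₂).charpoly
      * ((n₁+2*n₂+2*n₃-r₃) • (1 : Matrix {v : V₃ // v ≠ w₃} {v : V₃ // v ≠ w₃} ℝ)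
          + deflate A₃ w₃).charpoly := by
  rw [charpoly_of_mul_eq_mul L (PP n₁ n₂ n₃ w₁ w₂ w₃) (QQ n₁ n₂ n₃ w₁ w₂ w₃)
    (MM A₁ A₂ A₃ n₁ n₂ n₃ r₁ r₂ r₃ w₁ w₂ w₃)
    (QQ_mul_PP n₁ n₂ n₃ w₁ w₂ w₃ hN hs)
    (LP_eq_PM A₁ A₂ A₃ n₁ n₂ n₃ r₁ r₂ r₃ w₁ w₂ w₃ hn₁ hn₂ hn₃ hN hs hrow₁ hrow₂ hrow₃
      hdiag₁ hdiag₂ hdiag₃ L hL11 hL12 hL21 hL22 hL23 hL32 hL33)]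
  rw [show (MM A₁ A₂ A₃ n₁ n₂ n₃ r₁ r₂ r₃ w₁ w₂ w₃).charpoly
    = (Matrix.charmatrix (MM A₁ A₂ A₃ n₁ n₂ n₃ r₁ r₂ r₃ w₁ w₂ w₃)).det from rfl]
  rw [(MM_charmatrix_blockTriangular A₁ A₂ A₃ n₁ n₂ n₃ r₁ r₂ r₃ w₁ w₂ w₃).det]
  rw [Finset.prod_subset (Finset.subset_univ _) (fun k _ hk => by
    haveI : IsEmpty {i : V₁ ⊕ (V₂ ⊕ V₃) // bfun w₁ w₂ w₃ i = k} :=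
      ⟨fun i => hk (Finset.mem_image.mpr ⟨i.1, Finset.mem_univ _, i.2⟩)⟩
    exact Matrix.det_isEmpty)]
  rw [Fin.prod_univ_six]
  have e0 : ((Matrix.charmatrix (MM A₁ A₂ A₃ n₁ n₂ n₃ r₁ r₂ r₃ w₁ w₂ w₃)).toSquareBlock
      (bfun w₁ w₂ w₃) 0).det = X := by
    haveI : Subsingleton {i : V₁ ⊕ (V₂ ⊕ V₃) // bfun w₁ w₂ w₃ i = 0} := by
      constructor
      rintro ⟨(u | x | y), hi⟩ ⟨(u' | x' | y'), hj⟩ <;>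
        simp only [bfun] at hi hj <;> split_ifs at hi hj <;>
        first
          | (exact absurd hi (by decide))
          | (exact absurd hj (by decide))
          | (subst_vars; rfl)
    refine (Matrix.det_eq_elem_of_subsingleton _ ⟨inl w₁, by simp [bfun]⟩).trans ?_
    show Matrix.charmatrix (MM A₁ A₂ A₃ n₁ n₂ n₃ r₁ r₂ r₃ w₁ w₂ w₃) (inl w₁) (inl w₁) = X
    rw [Matrix.charmatrix_apply_eq]
    simp [MM]
  have e1 : ((Matrix.charmatrix (MM A₁ A₂ A₃ n₁ n₂ n₃ r₁ r₂ r₃ w₁ w₂ w₃)).toSquareBlock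
      (bfun w₁ w₂ w₃) 1).det = X - C (n₁+n₂+n₃) := by
    haveI : Subsingleton {i : V₁ ⊕ (V₂ ⊕ V₃) // bfun w₁ w₂ w₃ i = 1} := by
      constructor
      rintro ⟨(u | x | y), hi⟩ ⟨(u' | x' | y'), hj⟩ <;>
        simp only [bfun] at hi hj <;> split_ifs at hi hj <;>
        first
          | (exact absurd hi (by decide))
          | (exact absurd hj (by decide))
          | (subst_vars; rfl)
    refine (Matrix.det_eq_elem_of_subsingleton _ ⟨inr (inl w₂), by simp [bfun]⟩).trans ?_
    show Matrix.charmatrix (MM A₁ A₂ A₃ n₁ n₂ n₃ r₁ r₂ r₃ w₁ w₂ w₃)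
      (inr (inl w₂)) (inr (inl w₂)) = X - C (n₁+n₂+n₃)
    rw [Matrix.charmatrix_apply_eq]
    simp [MM]
  have e2 : ((Matrix.charmatrix (MM A₁ A₂ A₃ n₁ n₂ n₃ r₁ r₂ r₃ w₁ w₂ w₃)).toSquareBlock
      (bfun w₁ w₂ w₃) 2).det = X - C (n₁+2*n₂+2*n₃) := by
    haveI : Subsingleton {i : V₁ ⊕ (V₂ ⊕ V₃) // bfun w₁ w₂ w₃ i = 2} := by
      constructor
      rintro ⟨(u | x | y), hi⟩ ⟨(u' | x' | y'), hj⟩ <;>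
        simp only [bfun] at hi hj <;> split_ifs at hi hj <;>
        first
          | (exact absurd hi (by decide))
          | (exact absurd hj (by decide))
          | (subst_vars; rfl)
    refine (Matrix.det_eq_elem_of_subsingleton _ ⟨inr (inr w₃), by simp [bfun]⟩).trans ?_
    show Matrix.charmatrix (MM A₁ A₂ A₃ n₁ n₂ n₃ r₁ r₂ r₃ w₁ w₂ w₃)
      (inr (inr w₃)) (inr (inr w₃)) = X - C (n₁+2*n₂+2*n₃)
    rw [Matrix.charmatrix_apply_eq]
    simp [MM]
  have e3 : ((Matrix.charmatrix (MM A₁ A₂ A₃ n₁ n₂ n₃ r₁ r₂ r₃ w₁ w₂ w₃)).toSquareBlock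
      (bfun w₁ w₂ w₃) 3).det
      = ((2*n₁+n₂+n₃-r₁) • (1 : Matrix {v : V₁ // v ≠ w₁} {v : V₁ // v ≠ w₁} ℝ)
          + deflate A₁ w₁).charpoly := by
    unfold Matrix.charpoly
    refine det_eq_det_of_bij _ _
      (fun v => ⟨inl v.1, by simp [bfun, v.2]⟩) ⟨?_, ?_⟩ ?_
    · intro i j hij
      have h' := congrArg Subtype.val hij
      simp only [Sum.inl.injEq] at h'
      exact Subtype.ext h' 
    · rintro ⟨(u | x | y), hi⟩ <;> simp only [bfun] at hi <;> split_ifs at hi with hh <;>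
        first
          | (exact absurd hi (by decide))
          | exact ⟨⟨u, hh⟩, Subtype.ext rfl⟩
    · intro i j
      show Matrix.charmatrix (MM A₁ A₂ A₃ n₁ n₂ n₃ r₁ r₂ r₃ w₁ w₂ w₃)
        (inl i.1) (inl j.1) = _
      by_cases hij : i = j
      · subst hij
        rw [Matrix.charmatrix_apply_eq, Matrix.charmatrix_apply_eq]
        simp only [MM, Matrix.of_apply, if_neg i.2, Matrix.add_apply, Matrix.smul_apply,
          Matrix.one_apply_eq, smul_eq_mul, mul_one, deflate, eq_self_iff_true, if_true]
        ring_nf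
      · have hij' : (inl i.1 : V₁ ⊕ (V₂ ⊕ V₃)) ≠ inl j.1 :=
          fun h => hij (Subtype.ext (by injection h))
        rw [Matrix.charmatrix_apply_ne _ _ _ hij', Matrix.charmatrix_apply_ne _ _ _ hij]
        simp only [MM, Matrix.of_apply, if_neg j.2, if_neg i.2, Matrix.add_apply,
          Matrix.smul_apply, Matrix.one_apply_ne hij, smul_eq_mul, mul_zero, deflate,
          if_neg (fun h : i.1 = j.1 => hij (Subtype.ext h))]
        ring_nf
  have e4 : ((Matrix.charmatrix (MM A₁ A₂ A₃ n₁ n₂ n₃ r₁ r₂ r₃ w₁ w₂ w₃)).toSquareBlock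
      (bfun w₁ w₂ w₃) 4).det
      = ((n₁+2*n₂+2*n₃-r₂) • (1 : Matrix {v : V₂ // v ≠ w₂} {v : V₂ // v ≠ w₂} ℝ)
          + deflate A₂ w₂).charpoly := by
    unfold Matrix.charpoly
    refine det_eq_det_of_bij _ _
      (fun v => ⟨inr (inl v.1), by simp [bfun, v.2]⟩) ⟨?_, ?_⟩ ?_
    · intro i j hij
      have h' := congrArg Subtype.val hij
      simp only [Sum.inr.injEq, Sum.inl.injEq] at h'
      exact Subtype.ext h' 
    · rintro ⟨(u | x | y), hi⟩ <;> simp only [bfun] at hi <;> split_ifs at hi with hh <;>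
        first
          | (exact absurd hi (by decide))
          | exact ⟨⟨x, hh⟩, Subtype.ext rfl⟩
    · intro i j
      show Matrix.charmatrix (MM A₁ A₂ A₃ n₁ n₂ n₃ r₁ r₂ r₃ w₁ w₂ w₃)
        (inr (inl i.1)) (inr (inl j.1)) = _
      by_cases hij : i = j
      · subst hij
        rw [Matrix.charmatrix_apply_eq, Matrix.charmatrix_apply_eq]
        simp only [MM, Matrix.of_apply, if_neg i.2, Matrix.add_apply, Matrix.smul_apply,
          Matrix.one_apply_eq, smul_eq_mul, mul_one, deflate, eq_self_iff_true, if_true]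
        ring_nf
      · have hij' : (inr (inl i.1) : V₁ ⊕ (V₂ ⊕ V₃)) ≠ inr (inl j.1) := by
          simp only [ne_eq, Sum.inr.injEq, Sum.inl.injEq]
          exact fun h => hij (Subtype.ext h)
        rw [Matrix.charmatrix_apply_ne _ _ _ hij', Matrix.charmatrix_apply_ne _ _ _ hij]
        simp only [MM, Matrix.of_apply, if_neg j.2, if_neg i.2, Matrix.add_apply,
          Matrix.smul_apply, Matrix.one_apply_ne hij, smul_eq_mul, mul_zero, deflate,
          if_neg (fun h : i.1 = j.1 => hij (Subtype.ext h))]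
        ring_nf
  have e5 : ((Matrix.charmatrix (MM A₁ A₂ A₃ n₁ n₂ n₃ r₁ r₂ r₃ w₁ w₂ w₃)).toSquareBlock
      (bfun w₁ w₂ w₃) 5).det
      = ((n₁+2*n₂+2*n₃-r₃) • (1 : Matrix {v : V₃ // v ≠ w₃} {v : V₃ // v ≠ w₃} ℝ)
          + deflate A₃ w₃).charpoly := by
    unfold Matrix.charpoly
    refine det_eq_det_of_bij _ _
      (fun v => ⟨inr (inr v.1), by simp [bfun, v.2]⟩) ⟨?_, ?_⟩ ?_
    · intro i j hij
      have h' := congrArg Subtype.val hij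
      simp only [Sum.inr.injEq, Sum.inl.injEq] at h'
      exact Subtype.ext h' 
    · rintro ⟨(u | x | y), hi⟩ <;> simp only [bfun] at hi <;> split_ifs at hi with hh <;>
        first
          | (exact absurd hi (by decide))
          | exact ⟨⟨y, hh⟩, Subtype.ext rfl⟩
    · intro i j
      show Matrix.charmatrix (MM A₁ A₂ A₃ n₁ n₂ n₃ r₁ r₂ r₃ w₁ w₂ w₃)
        (inr (inr i.1)) (inr (inr j.1)) = _
      by_cases hij : i = j
      · subst hij
        rw [Matrix.charmatrix_apply_eq, Matrix.charmatrix_apply_eq]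
        simp only [MM, Matrix.of_apply, if_neg i.2, Matrix.add_apply, Matrix.smul_apply,
          Matrix.one_apply_eq, smul_eq_mul, mul_one, deflate, eq_self_iff_true, if_true]
        ring_nf
      · have hij' : (inr (inr i.1) : V₁ ⊕ (V₂ ⊕ V₃)) ≠ inr (inr j.1) := by
          simp only [ne_eq, Sum.inr.injEq]
          exact fun h => hij (Subtype.ext h)
        rw [Matrix.charmatrix_apply_ne _ _ _ hij', Matrix.charmatrix_apply_ne _ _ _ hij]
        simp only [MM, Matrix.of_apply, if_neg j.2, if_neg i.2, Matrix.add_apply,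
          Matrix.smul_apply, Matrix.one_apply_ne hij, smul_eq_mul, mul_zero, deflate,
          if_neg (fun h : i.1 = j.1 => hij (Subtype.ext h))]
        ring_nf
  rw [e0, e1, e2, e3, e4, e5]

lemma defl_charpoly_prod {α : Type*} [Fintype α] [DecidableEq α]
    (A : Matrix α α ℝ) (w : α) (r c : ℝ)
    (hrow : ∀ a, ∑ v, A a v = r) (lam : α → ℝ)
    (hlam : A.charpoly.roots = Finset.univ.val.map lam) (hw : lam w = r) :
    (c • (1 : Matrix {v : α // v ≠ w} {v : α // v ≠ w} ℝ) + deflate A w).charpoly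
      = (((Finset.univ.erase w).val.map fun v => c + lam v).map fun a => X - C a).prod := by
  have hmonic := A.charpoly_monic
  have hcard : A.charpoly.roots.card = A.charpoly.natDegree := by
    rw [hlam, Multiset.card_map, A.charpoly_natDegree_eq_dim]
    simp
  have hfact := Polynomial.prod_multiset_X_sub_C_of_monic_of_roots_card_eq hmonic hcard
  rw [hlam] at hfact
  have hsplit : (Finset.univ.val : Multiset α) = w ::ₘ (Finset.univ.erase w).val := by
    rw [Finset.erase_val]
    exact (Multiset.cons_erase (by simp : w ∈ (Finset.univ.val : Multiset α))).symm
  rw [hsplit, Multiset.map_cons, Multiset.map_cons, Multiset.prod_cons, hw,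
    charpoly_deflate A w r hrow] at hfact
  have hcancel : (deflate A w).charpoly
      = (((Finset.univ.erase w).val.map lam).map fun a => X - C a).prod :=
    mul_left_cancel₀ (Polynomial.X_sub_C_ne_zero r) hfact.symm
  rw [charpoly_smul_one_add c (deflate A w) ((Finset.univ.erase w).val.map lam) hcancel,
    Multiset.map_map]
  simp only [Multiset.map_map]
  rfl

lemma roots_of_prod_form (b1 b2 : ℝ) (m1 m2 m3 : Multiset ℝ) :
    (X * (X - C b1) * (X - C b2) * ((m1.map fun a => X - C a).prod)
      * ((m2.map fun a => X - C a).prod) * ((m3.map fun a => X - C a).prod)).roots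
    = ({0, b1, b2} : Multiset ℝ) + m1 + m2 + m3 := by
  have key : X * (X - C b1) * (X - C b2) * ((m1.map fun a => X - C a).prod)
      * ((m2.map fun a => X - C a).prod) * ((m3.map fun a => X - C a).prod)
      = (((0 ::ₘ b1 ::ₘ b2 ::ₘ (m1 + m2 + m3)).map fun a => X - C a)).prod := by
    simp only [Multiset.map_cons, Multiset.prod_cons, Multiset.map_add, Multiset.prod_add,
      map_zero, sub_zero]
    ring
  rw [key, Polynomial.roots_multiset_prod_X_sub_C]
  have : ({0, b1, b2} : Multiset ℝ) = 0 ::ₘ b1 ::ₘ b2 ::ₘ 0 := rfl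
  rw [this]
  simp only [Multiset.cons_add, zero_add, add_assoc]

end main

section graphhelp

lemma dist_two {V : Type*} (G : SimpleGraph V) {u v m : V} (hne : u ≠ v) (hnadj : ¬G.Adj u v)
    (h1 : G.Adj u m) (h2 : G.Adj m v) : G.dist u v = 2 := by
  have hle := SimpleGraph.dist_le (SimpleGraph.Walk.cons h1 (SimpleGraph.Walk.cons h2
    SimpleGraph.Walk.nil))
  simp only [SimpleGraph.Walk.length_cons, SimpleGraph.Walk.length_nil, zero_add] at hle
  have h0 : G.dist u v ≠ 0 := by
    rw [ne_eq, SimpleGraph.dist_eq_zero_iff_eq_or_not_reachable]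
    push_neg
    exact ⟨hne, ⟨SimpleGraph.Walk.cons h1 (SimpleGraph.Walk.cons h2 SimpleGraph.Walk.nil)⟩⟩
  have h1' : G.dist u v ≠ 1 := fun h => hnadj (SimpleGraph.dist_eq_one_iff_adj.mp h)
  omega

lemma adj_row_sum {V : Type*} [Fintype V] [DecidableEq V] (G : SimpleGraph V)
    [DecidableRel G.Adj] {r : ℕ} (hreg : G.IsRegularOfDegree r) (a : V) :
    ∑ v, (G.adjMatrix ℝ) a v = (r : ℝ) := by
  rw [← hreg a]
  simp [SimpleGraph.adjMatrix_apply, Finset.sum_boole, SimpleGraph.degree,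
    SimpleGraph.neighborFinset_eq_filter]

section dists
variable {V₁ V₂ V₃ : Type*} [Fintype V₁] [DecidableEq V₁] [Fintype V₂] [DecidableEq V₂]
  [Fintype V₃] [DecidableEq V₃]
  (G₁ : SimpleGraph V₁) (G₂ : SimpleGraph V₂) (G₃ : SimpleGraph V₃)
  [DecidableRel G₁.Adj] [DecidableRel G₂.Adj] [DecidableRel G₃.Adj]

lemma jd_d12 (a : V₁) (x : V₂ ⊕ V₃) :
    (joinGraph G₁ (disjUnionGraph G₂ G₃)).dist (inl a) (inr x) = 1 :=
  SimpleGraph.dist_eq_one_iff_adj.mpr trivial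

lemma jd_d21 (x : V₂ ⊕ V₃) (a : V₁) :
    (joinGraph G₁ (disjUnionGraph G₂ G₃)).dist (inr x) (inl a) = 1 :=
  SimpleGraph.dist_eq_one_iff_adj.mpr trivial

lemma jd_d11 (w₂ : V₂) (a b : V₁) (hab : a ≠ b) :
    (joinGraph G₁ (disjUnionGraph G₂ G₃)).dist (inl a) (inl b)
      = if G₁.Adj a b then 1 else 2 := by
  by_cases h : G₁.Adj a b
  · rw [if_pos h]
    exact SimpleGraph.dist_eq_one_iff_adj.mpr h
  · rw [if_neg h]
    exact dist_two _ (m := inr (inl w₂)) (fun hh => hab (Sum.inl.inj hh)) (fun hh => h hh)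
      trivial trivial

lemma jd_d22 (w₁ : V₁) (x y : V₂) (hxy : x ≠ y) :
    (joinGraph G₁ (disjUnionGraph G₂ G₃)).dist (inr (inl x)) (inr (inl y))
      = if G₂.Adj x y then 1 else 2 := by
  by_cases h : G₂.Adj x y
  · rw [if_pos h]
    exact SimpleGraph.dist_eq_one_iff_adj.mpr h
  · rw [if_neg h]
    exact dist_two _ (m := inl w₁) (by simp [hxy]) (fun hh => h hh) trivial trivial

lemma jd_d33 (w₁ : V₁) (x y : V₃) (hxy : x ≠ y) :
    (joinGraph G₁ (disjUnionGraph G₂ G₃)).dist (inr (inr x)) (inr (inr y))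
      = if G₃.Adj x y then 1 else 2 := by
  by_cases h : G₃.Adj x y
  · rw [if_pos h]
    exact SimpleGraph.dist_eq_one_iff_adj.mpr h
  · rw [if_neg h]
    exact dist_two _ (m := inl w₁) (by simp [hxy]) (fun hh => h hh) trivial trivial

lemma jd_d23 (w₁ : V₁) (x : V₂) (y : V₃) :
    (joinGraph G₁ (disjUnionGraph G₂ G₃)).dist (inr (inl x)) (inr (inr y)) = 2 :=
  dist_two _ (m := inl w₁) (by simp) (fun hh => hh) trivial trivial

lemma jd_d32 (w₁ : V₁) (y : V₃) (x : V₂) :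
    (joinGraph G₁ (disjUnionGraph G₂ G₃)).dist (inr (inr y)) (inr (inl x)) = 2 :=
  dist_two _ (m := inl w₁) (by simp) (fun hh => hh) trivial trivial

end dists
end graphhelp

section entries
variable {V₁ V₂ V₃ : Type*} [Fintype V₁] [DecidableEq V₁] [Fintype V₂] [DecidableEq V₂]
  [Fintype V₃] [DecidableEq V₃]
  (G₁ : SimpleGraph V₁) (G₂ : SimpleGraph V₂) (G₃ : SimpleGraph V₃)
  [DecidableRel G₁.Adj] [DecidableRel G₂.Adj] [DecidableRel G₃.Adj]

lemma sum_ite_single'' {α : Type*} [Fintype α] [DecidableEq α] (a : α) (f g : α → ℝ) :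
    (∑ k, if a = k then f k else g k) = f a - g a + ∑ k, g k := by
  have key : ∀ k : α, (if a = k then f k else g k)
      = (if k = a then f k - g k else 0) + g k := by
    intro k
    by_cases hk : a = k
    · rw [← hk]; simp
    · rw [if_neg hk, if_neg (fun h : k = a => hk h.symm), zero_add]
  rw [Finset.sum_congr rfl fun k _ => key k, Finset.sum_add_distrib,
    Finset.sum_ite_eq' univ a]
  simp

lemma jtr1 (w₂ : V₂) {n₁ n₂ n₃ r₁ : ℕ} (hn₁ : Fintype.card V₁ = n₁)
    (hn₂ : Fintype.card V₂ = n₂) (hn₃ : Fintype.card V₃ = n₃)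
    (hreg₁ : G₁.IsRegularOfDegree r₁) (a : V₁) :
    transmission (joinGraph G₁ (disjUnionGraph G₂ G₃)) (inl a)
      = 2*(n₁:ℝ)-2-(r₁:ℝ)+(n₂:ℝ)+(n₃:ℝ) := by
  have hpt : ∀ b, (((joinGraph G₁ (disjUnionGraph G₂ G₃)).dist (inl a) (inl b) : ℕ) : ℝ)
      = if a = b then 0 else 2 - (G₁.adjMatrix ℝ) a b := by
    intro b
    by_cases hab : a = b
    · subst hab
      simp [SimpleGraph.dist_self]
    · rw [if_neg hab, jd_d11 G₁ G₂ G₃ w₂ a b hab]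
      by_cases h : G₁.Adj a b <;> simp [h] <;> norm_num
  rw [transmission, Fintype.sum_sum_type, Fintype.sum_sum_type]
  rw [Finset.sum_congr rfl fun b _ => hpt b, sum_ite_single'' a]
  have hdg : (G₁.adjMatrix ℝ) a a = 0 := by simp
  simp only [jd_d12, Nat.cast_one, Finset.sum_const, Finset.card_univ, nsmul_eq_mul, mul_one,
    Finset.sum_sub_distrib, adj_row_sum G₁ hreg₁, hdg, hn₁, hn₂, hn₃]
  push_cast
  ring

lemma jtr2 (w₁ : V₁) {n₁ n₂ n₃ r₂ : ℕ} (hn₁ : Fintype.card V₁ = n₁)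
    (hn₂ : Fintype.card V₂ = n₂) (hn₃ : Fintype.card V₃ = n₃)
    (hreg₂ : G₂.IsRegularOfDegree r₂) (x : V₂) :
    transmission (joinGraph G₁ (disjUnionGraph G₂ G₃)) (inr (inl x))
      = (n₁:ℝ)+2*(n₂:ℝ)+2*(n₃:ℝ)-2-(r₂:ℝ) := by
  have hpt : ∀ b, (((joinGraph G₁ (disjUnionGraph G₂ G₃)).dist (inr (inl x)) (inr (inl b)) : ℕ) : ℝ)
      = if x = b then 0 else 2 - (G₂.adjMatrix ℝ) x b := by
    intro b
    by_cases hxb : x = b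
    · subst hxb
      simp [SimpleGraph.dist_self]
    · rw [if_neg hxb, jd_d22 G₁ G₂ G₃ w₁ x b hxb]
      by_cases h : G₂.Adj x b <;> simp [h] <;> norm_num
  rw [transmission, Fintype.sum_sum_type, Fintype.sum_sum_type]
  rw [Finset.sum_congr rfl fun b _ => hpt b, sum_ite_single'' x]
  have hdg : (G₂.adjMatrix ℝ) x x = 0 := by simp
  simp only [jd_d21, jd_d23 G₁ G₂ G₃ w₁, Nat.cast_one, Nat.cast_ofNat, Finset.sum_const,
    Finset.card_univ, nsmul_eq_mul, mul_one, Finset.sum_sub_distrib, adj_row_sum G₂ hreg₂,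
    hdg, hn₁, hn₂, hn₃]
  push_cast
  ring

lemma jtr3 (w₁ : V₁) {n₁ n₂ n₃ r₃ : ℕ} (hn₁ : Fintype.card V₁ = n₁)
    (hn₂ : Fintype.card V₂ = n₂) (hn₃ : Fintype.card V₃ = n₃)
    (hreg₃ : G₃.IsRegularOfDegree r₃) (y : V₃) :
    transmission (joinGraph G₁ (disjUnionGraph G₂ G₃)) (inr (inr y))
      = (n₁:ℝ)+2*(n₂:ℝ)+2*(n₃:ℝ)-2-(r₃:ℝ) := by
  have hpt : ∀ b, (((joinGraph G₁ (disjUnionGraph G₂ G₃)).dist (inr (inr y)) (inr (inr b)) : ℕ) : ℝ)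
      = if y = b then 0 else 2 - (G₃.adjMatrix ℝ) y b := by
    intro b
    by_cases hyb : y = b
    · subst hyb
      simp [SimpleGraph.dist_self]
    · rw [if_neg hyb, jd_d33 G₁ G₂ G₃ w₁ y b hyb]
      by_cases h : G₃.Adj y b <;> simp [h] <;> norm_num
  rw [transmission, Fintype.sum_sum_type, Fintype.sum_sum_type]
  rw [Finset.sum_congr rfl fun b _ => hpt b, sum_ite_single'' y]
  have hdg : (G₃.adjMatrix ℝ) y y = 0 := by simp
  simp only [jd_d21, jd_d32 G₁ G₂ G₃ w₁, Nat.cast_one, Nat.cast_ofNat, Finset.sum_const,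
    Finset.card_univ, nsmul_eq_mul, mul_one, Finset.sum_sub_distrib, adj_row_sum G₃ hreg₃,
    hdg, hn₁, hn₂, hn₃]
  push_cast
  ring

end entries

theorem stmt8 {V₁ V₂ V₃ : Type*} [Fintype V₁] [DecidableEq V₁] [Fintype V₂] [DecidableEq V₂]
    [Fintype V₃] [DecidableEq V₃]
    (G₁ : SimpleGraph V₁) (G₂ : SimpleGraph V₂) (G₃ : SimpleGraph V₃)
    [DecidableRel G₁.Adj] [DecidableRel G₂.Adj] [DecidableRel G₃.Adj]
    (n₁ n₂ n₃ : ℕ) (hn₁ : Fintype.card V₁ = n₁) (hn₂ : Fintype.card V₂ = n₂)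
    (hn₃ : Fintype.card V₃ = n₃)
    (r₁ r₂ r₃ : ℕ) (hreg₁ : G₁.IsRegularOfDegree r₁) (hreg₂ : G₂.IsRegularOfDegree r₂)
    (hreg₃ : G₃.IsRegularOfDegree r₃)
    (lam : V₁ → ℝ) (mu : V₂ → ℝ) (del : V₃ → ℝ)
    (hlam : (G₁.adjMatrix ℝ).charpoly.roots = Finset.univ.val.map lam)
    (hmu : (G₂.adjMatrix ℝ).charpoly.roots = Finset.univ.val.map mu)
    (hdel : (G₃.adjMatrix ℝ).charpoly.roots = Finset.univ.val.map del)
    (w₁ : V₁) (hw₁ : lam w₁ = r₁) (w₂ : V₂) (hw₂ : mu w₂ = r₂) (w₃ : V₃) (hw₃ : del w₃ = r₃) :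
    (distLaplacian (joinGraph G₁ (disjUnionGraph G₂ G₃))).charpoly.roots =
      ({0, (n₁ : ℝ) + (n₂ : ℝ) + (n₃ : ℝ),
        (n₁ : ℝ) + 2 * (n₂ : ℝ) + 2 * (n₃ : ℝ)} : Multiset ℝ)
      + ((Finset.univ.erase w₁).val.map fun v =>
          2 * (n₁ : ℝ) + (n₂ : ℝ) + (n₃ : ℝ) - (r₁ : ℝ) + lam v)
      + ((Finset.univ.erase w₂).val.map fun v =>
          (n₁ : ℝ) + 2 * (n₂ : ℝ) + 2 * (n₃ : ℝ) - (r₂ : ℝ) + mu v)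
      + ((Finset.univ.erase w₃).val.map fun v =>
          (n₁ : ℝ) + 2 * (n₂ : ℝ) + 2 * (n₃ : ℝ) - (r₃ : ℝ) + del v) := by

  -- abbreviations for adjacency matrices
  have hrow1 : ∀ a, ∑ v, (G₁.adjMatrix ℝ) a v = (r₁ : ℝ) := adj_row_sum G₁ hreg₁
  have hrow2 : ∀ a, ∑ v, (G₂.adjMatrix ℝ) a v = (r₂ : ℝ) := adj_row_sum G₂ hreg₂
  have hrow3 : ∀ a, ∑ v, (G₃.adjMatrix ℝ) a v = (r₃ : ℝ) := adj_row_sum G₃ hreg₃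
  have hdiag1 : ∀ a, (G₁.adjMatrix ℝ) a a = 0 := fun a => by simp
  have hdiag2 : ∀ a, (G₂.adjMatrix ℝ) a a = 0 := fun a => by simp
  have hdiag3 : ∀ a, (G₃.adjMatrix ℝ) a a = 0 := fun a => by simp
  have hcn₁ : ((Fintype.card V₁ : ℕ) : ℝ) = (n₁ : ℝ) := by rw [hn₁]
  have hcn₂ : ((Fintype.card V₂ : ℕ) : ℝ) = (n₂ : ℝ) := by rw [hn₂]
  have hcn₃ : ((Fintype.card V₃ : ℕ) : ℝ) = (n₃ : ℝ) := by rw [hn₃]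
  have hpos₁ : (1:ℝ) ≤ (n₁ : ℝ) := by
    have h := Fintype.card_pos_iff.mpr ⟨w₁⟩
    rw [hn₁] at h
    exact_mod_cast h
  have hpos₂ : (1:ℝ) ≤ (n₂ : ℝ) := by
    have h := Fintype.card_pos_iff.mpr ⟨w₂⟩
    rw [hn₂] at h
    exact_mod_cast h
  have hpos₃ : (1:ℝ) ≤ (n₃ : ℝ) := by
    have h := Fintype.card_pos_iff.mpr ⟨w₃⟩
    rw [hn₃] at h
    exact_mod_cast h
  have hN : (n₁:ℝ) + (n₂:ℝ) + (n₃:ℝ) ≠ 0 := by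
    intro h
    linarith
  have hs : (n₂:ℝ) + (n₃:ℝ) ≠ 0 := by
    intro h
    linarith
  -- entries of the distance Laplacian
  have hL11 : ∀ a b, distLaplacian (joinGraph G₁ (disjUnionGraph G₂ G₃)) (Sum.inl a) (Sum.inl b)
      = if a = b then 2*(n₁:ℝ)-2-(r₁:ℝ)+(n₂:ℝ)+(n₃:ℝ) else (G₁.adjMatrix ℝ) a b - 2 := by
    intro a b
    by_cases hab : a = b
    · subst hab
      rw [if_pos rfl]
      simp [distLaplacian, distMatrix, SimpleGraph.dist_self,
        jtr1 G₁ G₂ G₃ w₂ hn₁ hn₂ hn₃ hreg₁ a]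
    · rw [if_neg hab]
      have hne : (Sum.inl a : V₁ ⊕ (V₂ ⊕ V₃)) ≠ Sum.inl b := by simp [hab]
      rw [distLaplacian, Matrix.sub_apply, Matrix.diagonal_apply_ne _ hne]
      show 0 - ((((joinGraph G₁ (disjUnionGraph G₂ G₃)).dist (Sum.inl a) (Sum.inl b) : ℕ)) : ℝ) = _
      rw [jd_d11 G₁ G₂ G₃ w₂ a b hab]
      by_cases h : G₁.Adj a b <;> simp [h] <;> norm_num
  have hL12 : ∀ a x, distLaplacian (joinGraph G₁ (disjUnionGraph G₂ G₃)) (Sum.inl a) (Sum.inr x)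
      = -1 := by
    intro a x
    have hne : (Sum.inl a : V₁ ⊕ (V₂ ⊕ V₃)) ≠ Sum.inr x := by simp
    rw [distLaplacian, Matrix.sub_apply, Matrix.diagonal_apply_ne _ hne]
    show 0 - ((((joinGraph G₁ (disjUnionGraph G₂ G₃)).dist (Sum.inl a) (Sum.inr x) : ℕ)) : ℝ) = _
    rw [jd_d12]
    norm_num
  have hL21 : ∀ x a, distLaplacian (joinGraph G₁ (disjUnionGraph G₂ G₃)) (Sum.inr x) (Sum.inl a)
      = -1 := by
    intro x a
    have hne : (Sum.inr x : V₁ ⊕ (V₂ ⊕ V₃)) ≠ Sum.inl a := by simp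
    rw [distLaplacian, Matrix.sub_apply, Matrix.diagonal_apply_ne _ hne]
    show 0 - ((((joinGraph G₁ (disjUnionGraph G₂ G₃)).dist (Sum.inr x) (Sum.inl a) : ℕ)) : ℝ) = _
    rw [jd_d21]
    norm_num
  have hL22 : ∀ x y, distLaplacian (joinGraph G₁ (disjUnionGraph G₂ G₃))
      (Sum.inr (Sum.inl x)) (Sum.inr (Sum.inl y))
      = if x = y then (n₁:ℝ)+2*(n₂:ℝ)+2*(n₃:ℝ)-2-(r₂:ℝ) else (G₂.adjMatrix ℝ) x y - 2 := by
    intro x y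
    by_cases hxy : x = y
    · subst hxy
      rw [if_pos rfl]
      simp [distLaplacian, distMatrix, SimpleGraph.dist_self,
        jtr2 G₁ G₂ G₃ w₁ hn₁ hn₂ hn₃ hreg₂ x]
    · rw [if_neg hxy]
      have hne : (Sum.inr (Sum.inl x) : V₁ ⊕ (V₂ ⊕ V₃)) ≠ Sum.inr (Sum.inl y) := by simp [hxy]
      rw [distLaplacian, Matrix.sub_apply, Matrix.diagonal_apply_ne _ hne]
      show 0 - ((((joinGraph G₁ (disjUnionGraph G₂ G₃)).dist (Sum.inr (Sum.inl x))
        (Sum.inr (Sum.inl y)) : ℕ)) : ℝ) = _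
      rw [jd_d22 G₁ G₂ G₃ w₁ x y hxy]
      by_cases h : G₂.Adj x y <;> simp [h] <;> norm_num
  have hL23 : ∀ x y, distLaplacian (joinGraph G₁ (disjUnionGraph G₂ G₃))
      (Sum.inr (Sum.inl x)) (Sum.inr (Sum.inr y)) = -2 := by
    intro x y
    have hne : (Sum.inr (Sum.inl x) : V₁ ⊕ (V₂ ⊕ V₃)) ≠ Sum.inr (Sum.inr y) := by simp
    rw [distLaplacian, Matrix.sub_apply, Matrix.diagonal_apply_ne _ hne]
    show 0 - ((((joinGraph G₁ (disjUnionGraph G₂ G₃)).dist (Sum.inr (Sum.inl x))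
      (Sum.inr (Sum.inr y)) : ℕ)) : ℝ) = _
    rw [jd_d23 G₁ G₂ G₃ w₁]
    norm_num
  have hL32 : ∀ y x, distLaplacian (joinGraph G₁ (disjUnionGraph G₂ G₃))
      (Sum.inr (Sum.inr y)) (Sum.inr (Sum.inl x)) = -2 := by
    intro y x
    have hne : (Sum.inr (Sum.inr y) : V₁ ⊕ (V₂ ⊕ V₃)) ≠ Sum.inr (Sum.inl x) := by simp
    rw [distLaplacian, Matrix.sub_apply, Matrix.diagonal_apply_ne _ hne]
    show 0 - ((((joinGraph G₁ (disjUnionGraph G₂ G₃)).dist (Sum.inr (Sum.inr y))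
      (Sum.inr (Sum.inl x)) : ℕ)) : ℝ) = _
    rw [jd_d32 G₁ G₂ G₃ w₁]
    norm_num
  have hL33 : ∀ x y, distLaplacian (joinGraph G₁ (disjUnionGraph G₂ G₃))
      (Sum.inr (Sum.inr x)) (Sum.inr (Sum.inr y))
      = if x = y then (n₁:ℝ)+2*(n₂:ℝ)+2*(n₃:ℝ)-2-(r₃:ℝ) else (G₃.adjMatrix ℝ) x y - 2 := by
    intro x y
    by_cases hxy : x = y
    · subst hxy
      rw [if_pos rfl]
      simp [distLaplacian, distMatrix, SimpleGraph.dist_self,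
        jtr3 G₁ G₂ G₃ w₁ hn₁ hn₂ hn₃ hreg₃ x]
    · rw [if_neg hxy]
      have hne : (Sum.inr (Sum.inr x) : V₁ ⊕ (V₂ ⊕ V₃)) ≠ Sum.inr (Sum.inr y) := by simp [hxy]
      rw [distLaplacian, Matrix.sub_apply, Matrix.diagonal_apply_ne _ hne]
      show 0 - ((((joinGraph G₁ (disjUnionGraph G₂ G₃)).dist (Sum.inr (Sum.inr x))
        (Sum.inr (Sum.inr y)) : ℕ)) : ℝ) = _
      rw [jd_d33 G₁ G₂ G₃ w₁ x y hxy]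
      by_cases h : G₃.Adj x y <;> simp [h] <;> norm_num
  have key := charpoly_join_abs (G₁.adjMatrix ℝ) (G₂.adjMatrix ℝ) (G₃.adjMatrix ℝ)
    (n₁:ℝ) (n₂:ℝ) (n₃:ℝ) (r₁:ℝ) (r₂:ℝ) (r₃:ℝ) w₁ w₂ w₃ hcn₁ hcn₂ hcn₃ hN hs
    hrow1 hrow2 hrow3 hdiag1 hdiag2 hdiag3
    (distLaplacian (joinGraph G₁ (disjUnionGraph G₂ G₃)))
    hL11 hL12 hL21 hL22 hL23 hL32 hL33
  rw [defl_charpoly_prod (G₁.adjMatrix ℝ) w₁ (r₁:ℝ) (2*(n₁:ℝ)+(n₂:ℝ)+(n₃:ℝ)-(r₁:ℝ))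
      hrow1 lam hlam hw₁,
    defl_charpoly_prod (G₂.adjMatrix ℝ) w₂ (r₂:ℝ) ((n₁:ℝ)+2*(n₂:ℝ)+2*(n₃:ℝ)-(r₂:ℝ))
      hrow2 mu hmu hw₂,
    defl_charpoly_prod (G₃.adjMatrix ℝ) w₃ (r₃:ℝ) ((n₁:ℝ)+2*(n₂:ℝ)+2*(n₃:ℝ)-(r₃:ℝ))
      hrow3 del hdel hw₃] at key
  rw [key, roots_of_prod_form]
end

section
/- Let G be a simple connected graph on n ≥ 2 vertices and let 0 ≤ α ≤ 1. Then the generalized distance spectral radius satisfies ρ(G) ≥ (α·Tr_min + √(α²·Tr_min² + 4(1 − α)·T_min))/2, where Tr_min is the minimum transmission degree and T_min is the minimum second transmission degree of G. Moreover, equality holds if and only if G is transmission regular. -/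
open Finset

section Helpers

open Matrix

lemma rayleigh_vecMul_eigU {W : Type*} [Fintype W] [DecidableEq W] {A : Matrix W W ℝ}
    (hA : A.IsHermitian) (x : W → ℝ) :
    x ᵥ* (hA.eigenvectorUnitary : Matrix W W ℝ)
      = (star (hA.eigenvectorUnitary : Matrix W W ℝ)) *ᵥ x := by
  rw [Matrix.star_eq_conjTranspose, Matrix.conjTranspose_eq_transpose_of_trivial,
    Matrix.mulVec_transpose]

lemma rayleigh_decomp {W : Type*} [Fintype W] [DecidableEq W] {A : Matrix W W ℝ}
    (hA : A.IsHermitian) (x : W → ℝ) :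
    x ⬝ᵥ (A *ᵥ x)
      = ∑ i, hA.eigenvalues i *
          (((star (hA.eigenvectorUnitary : Matrix W W ℝ)) *ᵥ x) i *
            ((star (hA.eigenvectorUnitary : Matrix W W ℝ)) *ᵥ x) i) := by
  conv_lhs => rw [hA.spectral_theorem]
  rw [Unitary.conjStarAlgAut_apply, ← Matrix.mulVec_mulVec, ← Matrix.mulVec_mulVec, Matrix.dotProduct_mulVec,
    rayleigh_vecMul_eigU]
  rw [dotProduct]
  refine Finset.sum_congr rfl fun i _ => ?_
  rw [Matrix.mulVec_diagonal]
  simp only [Function.comp_apply, RCLike.ofReal_real_eq_id, id_eq]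
  ring

lemma rayleigh_norm {W : Type*} [Fintype W] [DecidableEq W] {A : Matrix W W ℝ}
    (hA : A.IsHermitian) (x : W → ℝ) :
    x ⬝ᵥ x
      = ∑ i, (((star (hA.eigenvectorUnitary : Matrix W W ℝ)) *ᵥ x) i *
            ((star (hA.eigenvectorUnitary : Matrix W W ℝ)) *ᵥ x) i) := by
  set U : Matrix W W ℝ := (hA.eigenvectorUnitary : Matrix W W ℝ) with hUdef
  have hU : U * star U = 1 := Matrix.mem_unitaryGroup_iff.mp hA.eigenvectorUnitary.2
  calc x ⬝ᵥ x = x ⬝ᵥ ((U * star U) *ᵥ x) := by rw [hU, Matrix.one_mulVec]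
    _ = x ⬝ᵥ (U *ᵥ (star U *ᵥ x)) := by rw [← Matrix.mulVec_mulVec]
    _ = (x ᵥ* U) ⬝ᵥ (star U *ᵥ x) := by rw [Matrix.dotProduct_mulVec]
    _ = _ := by rw [rayleigh_vecMul_eigU]; rfl

lemma rayleigh_le {W : Type*} [Fintype W] [DecidableEq W] {A : Matrix W W ℝ}
    (hA : A.IsHermitian) {r : ℝ} (hr : ∀ i, hA.eigenvalues i ≤ r) (x : W → ℝ) :
    x ⬝ᵥ (A *ᵥ x) ≤ r * (x ⬝ᵥ x) := by
  rw [rayleigh_decomp hA x, rayleigh_norm hA x, Finset.mul_sum]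
  refine Finset.sum_le_sum fun i _ => ?_
  exact mul_le_mul_of_nonneg_right (hr i) (mul_self_nonneg _)

lemma eigen_basis_dot {W : Type*} [Fintype W] [DecidableEq W] {A : Matrix W W ℝ}
    (hA : A.IsHermitian) (i : W) :
    ⇑(hA.eigenvectorBasis i) ⬝ᵥ ⇑(hA.eigenvectorBasis i) = 1 := by
  have hn := hA.eigenvectorBasis.orthonormal.1 i
  rw [EuclideanSpace.norm_eq, Real.sqrt_eq_one] at hn
  rw [dotProduct]
  calc ∑ j, hA.eigenvectorBasis i j * hA.eigenvectorBasis i j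
      = ∑ j, ‖hA.eigenvectorBasis i j‖ ^ 2 := by
        refine Finset.sum_congr rfl fun j _ => ?_
        rw [Real.norm_eq_abs, sq_abs, sq]
    _ = 1 := hn

lemma mem_spectrum_of_eigen {W : Type*} [Fintype W] [DecidableEq W] {A : Matrix W W ℝ}
    {k : ℝ} {z : W → ℝ} (hz : A *ᵥ z = k • z) (hz0 : z ≠ 0) : k ∈ spectrum ℝ A := by
  rw [spectrum.mem_iff]
  intro h
  have h2 : (algebraMap ℝ (Matrix W W ℝ) k - A) *ᵥ z = 0 := by
    rw [Matrix.sub_mulVec, hz, Algebra.algebraMap_eq_smul_one, Matrix.smul_mulVec,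
      Matrix.one_mulVec, sub_self]
  obtain ⟨B, hB⟩ := h.exists_left_inv
  apply hz0
  calc z = (B * (algebraMap ℝ (Matrix W W ℝ) k - A)) *ᵥ z := by rw [hB, Matrix.one_mulVec]
    _ = B *ᵥ ((algebraMap ℝ (Matrix W W ℝ) k - A) *ᵥ z) := by rw [← Matrix.mulVec_mulVec]
    _ = 0 := by rw [h2, Matrix.mulVec_zero]

lemma quad_bound {W : Type*} [Fintype W] [DecidableEq W] {A : Matrix W W ℝ} {k : ℝ}
    (hnn : ∀ u w, 0 ≤ A u w) (hsym : ∀ u w, A u w = A w u)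
    (hrow : ∀ u, ∑ w, A u w = k) (x : W → ℝ) :
    x ⬝ᵥ (A *ᵥ x) ≤ k * (x ⬝ᵥ x) := by
  have h1 : x ⬝ᵥ (A *ᵥ x) = ∑ u, ∑ w, x u * (A u w * x w) := by
    rw [dotProduct]
    refine Finset.sum_congr rfl fun u _ => ?_
    rw [Matrix.mulVec, dotProduct, Finset.mul_sum]
  have h2 : ∑ u, ∑ w, x u * (A u w * x w)
      ≤ ∑ u, ∑ w, (A u w * (x u * x u) / 2 + A u w * (x w * x w) / 2) := by
    refine Finset.sum_le_sum fun u _ => Finset.sum_le_sum fun w _ => ?_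
    nlinarith [mul_nonneg (hnn u w) (sq_nonneg (x u - x w))]
  have h3 : ∑ u, ∑ w, (A u w * (x u * x u) / 2 + A u w * (x w * x w) / 2)
      = k * (x ⬝ᵥ x) := by
    rw [Finset.sum_congr rfl fun (u : W) _ => Finset.sum_add_distrib]
    rw [Finset.sum_add_distrib]
    have ha : ∑ u : W, ∑ w : W, A u w * (x u * x u) / 2 = k * (x ⬝ᵥ x) / 2 := by
      rw [dotProduct, Finset.mul_sum, Finset.sum_div]
      refine Finset.sum_congr rfl fun u _ => ?_
      have h4 : ∑ w : W, A u w * (x u * x u) / 2 = (∑ w : W, A u w) * (x u * x u) / 2 := by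
        rw [Finset.sum_mul, Finset.sum_div]
      rw [h4, hrow u]
    have hb : ∑ u : W, ∑ w : W, A u w * (x w * x w) / 2 = k * (x ⬝ᵥ x) / 2 := by
      rw [Finset.sum_comm, dotProduct, Finset.mul_sum, Finset.sum_div]
      refine Finset.sum_congr rfl fun w _ => ?_
      have h4 : ∑ u : W, A u w * (x w * x w) / 2 = (∑ u : W, A u w) * (x w * x w) / 2 := by
        rw [Finset.sum_mul, Finset.sum_div]
      have hcol : ∑ u : W, A u w = k := by
        rw [Finset.sum_congr rfl fun u _ => hsym u w]; exact hrow w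
      rw [h4, hcol]
    rw [ha, hb]; ring
  linarith [h1 ▸ le_of_le_of_eq h2 h3]

lemma abs_eigenvector {W : Type*} [Fintype W] [DecidableEq W] {A : Matrix W W ℝ}
    (hA : A.IsHermitian) (hnn : ∀ u w, 0 ≤ A u w) {r : ℝ}
    (hub : ∀ i, hA.eigenvalues i ≤ r) {v : W → ℝ} (hv : A *ᵥ v = r • v) :
    A *ᵥ (fun u => |v u|) = r • (fun u => |v u|) := by
  set y : W → ℝ := fun u => |v u| with hy
  have hyy : y ⬝ᵥ y = v ⬝ᵥ v := by
    refine Finset.sum_congr rfl fun u _ => ?_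
    simp only [hy, abs_mul_abs_self]
  have hvMv : v ⬝ᵥ (A *ᵥ v) = r * (v ⬝ᵥ v) := by
    rw [hv, dotProduct_smul, smul_eq_mul]
  have hge : r * (y ⬝ᵥ y) ≤ y ⬝ᵥ (A *ᵥ y) := by
    have e1 : y ⬝ᵥ (A *ᵥ y) = ∑ u, ∑ w, y u * (A u w * y w) := by
      rw [dotProduct]
      refine Finset.sum_congr rfl fun u _ => ?_
      rw [Matrix.mulVec, dotProduct, Finset.mul_sum]
    have e2 : v ⬝ᵥ (A *ᵥ v) = ∑ u, ∑ w, v u * (A u w * v w) := by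
      rw [dotProduct]
      refine Finset.sum_congr rfl fun u _ => ?_
      rw [Matrix.mulVec, dotProduct, Finset.mul_sum]
    rw [hyy, ← hvMv, e1, e2]
    refine Finset.sum_le_sum fun u _ => Finset.sum_le_sum fun w _ => ?_
    calc v u * (A u w * v w) ≤ |v u * (A u w * v w)| := le_abs_self _
      _ = |v u| * (A u w * |v w|) := by
          rw [abs_mul, abs_mul, abs_of_nonneg (hnn u w)]
      _ = y u * (A u w * y w) := rfl
  have hPSD : (r • (1 : Matrix W W ℝ) - A).PosSemidef := by
    refine Matrix.PosSemidef.of_dotProduct_mulVec_nonneg ?_ ?_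
    · have h1 : (r • (1 : Matrix W W ℝ)).IsHermitian := by
        unfold Matrix.IsHermitian
        rw [Matrix.conjTranspose_smul]
        simp
      exact h1.sub hA
    · intro z
      have hz : star z = z := by simp
      rw [hz, Matrix.sub_mulVec, Matrix.smul_mulVec, Matrix.one_mulVec,
        dotProduct_sub, dotProduct_smul, smul_eq_mul]
      have := rayleigh_le hA hub z
      linarith
  have hzero : y ⬝ᵥ ((r • (1 : Matrix W W ℝ) - A) *ᵥ y) = 0 := by
    have hle : y ⬝ᵥ ((r • (1 : Matrix W W ℝ) - A) *ᵥ y) ≤ 0 := by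
      rw [Matrix.sub_mulVec, Matrix.smul_mulVec, Matrix.one_mulVec,
        dotProduct_sub, dotProduct_smul, smul_eq_mul]
      linarith
    have hge0 := hPSD.dotProduct_mulVec_nonneg y
    rw [show star y = y by simp] at hge0
    linarith
  have hker : (r • (1 : Matrix W W ℝ) - A) *ᵥ y = 0 := by
    rw [← hPSD.dotProduct_mulVec_zero_iff y, show star y = y by simp]
    exact hzero
  rw [Matrix.sub_mulVec, Matrix.smul_mulVec, Matrix.one_mulVec, sub_eq_zero] at hker
  exact hker.symm

variable {V : Type*} [Fintype V] [DecidableEq V] (G : SimpleGraph V) (a : ℝ)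

lemma genDist_isHermitian : (genDistMatrix a G).IsHermitian := by
  unfold Matrix.IsHermitian
  rw [Matrix.conjTranspose_eq_transpose_of_trivial]
  ext u v
  simp only [genDistMatrix, Matrix.transpose_apply, Matrix.add_apply, Matrix.smul_apply,
    Matrix.diagonal_apply, distMatrix, Matrix.of_apply, smul_eq_mul]
  rw [SimpleGraph.dist_comm]
  by_cases h : u = v <;> simp [h, eq_comm]

lemma genDist_mulVec (x : V → ℝ) (u : V) :
    (genDistMatrix a G *ᵥ x) u
      = a * (transmission G u * x u) + (1 - a) * ∑ v, (G.dist u v : ℝ) * x v := by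
  rw [genDistMatrix, Matrix.add_mulVec, Matrix.smul_mulVec, Matrix.smul_mulVec]
  simp only [Pi.add_apply, Pi.smul_apply, Matrix.mulVec_diagonal, smul_eq_mul]
  simp only [Matrix.mulVec, dotProduct, distMatrix, Matrix.of_apply, Finset.mul_sum]

lemma genDist_entry_nonneg (ha0 : 0 ≤ a) (ha1 : a ≤ 1) (u v : V) :
    0 ≤ genDistMatrix a G u v := by
  simp only [genDistMatrix, Matrix.add_apply, Matrix.smul_apply, Matrix.diagonal_apply,
    distMatrix, Matrix.of_apply, smul_eq_mul]
  have h1 : 0 ≤ transmission G u := Finset.sum_nonneg fun v _ => by positivity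
  have hd : (0:ℝ) ≤ (G.dist u v : ℝ) := by positivity
  have h2 : (0:ℝ) ≤ 1 - a := by linarith
  split <;> nlinarith

end Helpers

open Matrix in
set_option maxHeartbeats 3000000 in
theorem stmt13 {V : Type*} [Fintype V] [DecidableEq V] (G : SimpleGraph V)
    (hconn : G.Connected) (n : ℕ) (hn : Fintype.card V = n) (hn2 : 2 ≤ n)
    (a : ℝ) (ha0 : 0 ≤ a) (ha1 : a ≤ 1)
    (Trmin Tmin : ℝ)
    (hTrmin : IsLeast (Set.range (transmission G)) Trmin)
    (hTmin : IsLeast (Set.range (secondTransmission G)) Tmin) :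
    (a * Trmin + Real.sqrt (a ^ 2 * Trmin ^ 2 + 4 * (1 - a) * Tmin)) / 2 ≤
      sSup (spectrum ℝ (genDistMatrix a G)) ∧
    (sSup (spectrum ℝ (genDistMatrix a G)) =
        (a * Trmin + Real.sqrt (a ^ 2 * Trmin ^ 2 + 4 * (1 - a) * Tmin)) / 2 ↔
      ∃ k, ∀ u, transmission G u = k) := by
  classical
  have hcard2 : 1 < Fintype.card V := by omega
  have hNV : Nonempty V := by
    rw [← Fintype.card_pos_iff]; omega
  have hdnn : ∀ u v : V, (0:ℝ) ≤ (G.dist u v : ℝ) := fun u v => Nat.cast_nonneg _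
  have htr_nn : ∀ u, 0 ≤ transmission G u := fun u => Finset.sum_nonneg fun v _ => hdnn u v
  have htr_pos : ∀ u, 0 < transmission G u := by
    intro u
    obtain ⟨w, hw⟩ := Fintype.exists_ne_of_one_lt_card hcard2 u
    have h1 : 0 < G.dist u w := hconn.pos_dist_of_ne (Ne.symm hw)
    have h1' : (0:ℝ) < (G.dist u w : ℝ) := by exact_mod_cast h1
    calc (0:ℝ) < (G.dist u w : ℝ) := h1'
      _ ≤ transmission G u := Finset.single_le_sum (fun v _ => hdnn u v) (Finset.mem_univ w)
  have hst_nn : ∀ u, 0 ≤ secondTransmission G u :=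
    fun u => Finset.sum_nonneg fun v _ => mul_nonneg (hdnn u v) (htr_nn v)
  obtain ⟨u₁, hu₁⟩ := hTrmin.1
  obtain ⟨u₂, hu₂⟩ := hTmin.1
  have hTrmin_pos : 0 < Trmin := hu₁ ▸ htr_pos u₁
  have hTmin_nn : 0 ≤ Tmin := hu₂ ▸ hst_nn u₂
  have hTrle : ∀ u, Trmin ≤ transmission G u := fun u => hTrmin.2 ⟨u, rfl⟩
  have hTle : ∀ u, Tmin ≤ secondTransmission G u := fun u => hTmin.2 ⟨u, rfl⟩
  set M := genDistMatrix a G with hMdef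
  have hM : M.IsHermitian := genDist_isHermitian G a
  have hMnn : ∀ u w, 0 ≤ M u w := genDist_entry_nonneg G a ha0 ha1
  have hMsym : ∀ u w : V, M u w = M w u := by
    intro u w
    have h := hM.apply w u
    rwa [star_trivial] at h
  have hrow : ∀ u, ∑ w, M u w = transmission G u := by
    intro u
    have h := genDist_mulVec G a (fun _ => (1:ℝ)) u
    rw [← hMdef] at h
    simp only [mul_one] at h
    have h2 : (M *ᵥ fun _ => (1:ℝ)) u = ∑ w, M u w := by
      simp [Matrix.mulVec, dotProduct]
    have h3 : ∑ v, (G.dist u v : ℝ) = transmission G u := rfl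
    rw [h2, h3] at h
    rw [h]; ring
  have hspec : spectrum ℝ M = Set.range hM.eigenvalues :=
    Matrix.IsHermitian.spectrum_real_eq_range_eigenvalues hM
  set ρ := sSup (spectrum ℝ M) with hρdef
  have hbdd : BddAbove (spectrum ℝ M) := by
    rw [hspec]; exact (Set.finite_range _).bddAbove
  have hρmem : ρ ∈ spectrum ℝ M := by
    have hfin : (spectrum ℝ M).Finite := by rw [hspec]; exact Set.finite_range _
    have hne : (spectrum ℝ M).Nonempty := by rw [hspec]; exact Set.range_nonempty _
    exact hne.csSup_mem hfin
  obtain ⟨i₀, hi₀⟩ : ∃ i, hM.eigenvalues i = ρ := by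
    have h := hρmem; rw [hspec] at h; exact h
  have hub : ∀ i, hM.eigenvalues i ≤ ρ := fun i => le_csSup hbdd (by rw [hspec]; exact ⟨i, rfl⟩)
  clear_value ρ
  -- the common backward direction
  have BWD : (∃ k, ∀ u, transmission G u = k) →
      ρ = (a * Trmin + Real.sqrt (a ^ 2 * Trmin ^ 2 + 4 * (1 - a) * Tmin)) / 2 := by
    rintro ⟨k, hk⟩
    have hkpos : 0 < k := hk u₁ ▸ htr_pos u₁
    have hTrmin_k : Trmin = k := by rw [← hu₁, hk u₁]
    have hTmin_k : Tmin = k ^ 2 := by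
      rw [← hu₂, secondTransmission]
      rw [Finset.sum_congr rfl fun v _ => by rw [hk v]]
      rw [← Finset.sum_mul]
      have h3 : ∑ v, (G.dist u₂ v : ℝ) = transmission G u₂ := rfl
      rw [h3, hk u₂]; ring
    have hone : M *ᵥ (fun _ => (1:ℝ)) = k • (fun _ => (1:ℝ)) := by
      funext u
      rw [hMdef, genDist_mulVec]
      simp only [mul_one, Pi.smul_apply, smul_eq_mul]
      have h3 : ∑ v, (G.dist u v : ℝ) = transmission G u := rfl
      rw [h3, hk u]; ring
    have hone0 : (fun _ => (1:ℝ)) ≠ (0 : V → ℝ) := by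
      intro h
      simpa using congrFun h (Classical.arbitrary V)
    have hkmem : k ∈ spectrum ℝ M := mem_spectrum_of_eigen hone hone0
    have hle1 : k ≤ ρ := hρdef ▸ le_csSup hbdd hkmem
    have hle2 : ρ ≤ k := by
      rw [hρdef]
      apply csSup_le ⟨k, hkmem⟩
      intro x hx
      rw [hspec] at hx
      obtain ⟨i, rfl⟩ := hx
      have hw := hM.mulVec_eigenvectorBasis i
      have hq := quad_bound hMnn hMsym (fun u => (hrow u).trans (hk u))
        ⇑(hM.eigenvectorBasis i)
      rw [hw, dotProduct_smul, smul_eq_mul, eigen_basis_dot hM i] at hq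
      simpa using hq
    have hρk : ρ = k := le_antisymm hle2 hle1
    rw [hρk, hTrmin_k, hTmin_k]
    rw [show a ^ 2 * k ^ 2 + 4 * (1 - a) * k ^ 2 = ((2 - a) * k) ^ 2 by ring,
      Real.sqrt_sq (by nlinarith : (0:ℝ) ≤ (2 - a) * k)]
    ring
  by_cases hA1 : a = 1
  · -- diagonal case
    subst hA1
    have hTru_mem : ∀ u, transmission G u ∈ spectrum ℝ M := by
      intro u
      apply mem_spectrum_of_eigen (z := Pi.single u 1)
      · funext w
        rw [hMdef, genDist_mulVec]
        by_cases hw : w = u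
        · subst hw; simp
        · simp [Pi.single_apply, hw]
      · intro h
        simpa using congrFun h u
    have hform : (1 * Trmin + Real.sqrt (1 ^ 2 * Trmin ^ 2 + 4 * (1 - 1) * Tmin)) / 2
        = Trmin := by
      rw [show (1:ℝ) ^ 2 * Trmin ^ 2 + 4 * (1 - 1) * Tmin = Trmin ^ 2 by ring,
        Real.sqrt_sq hTrmin_pos.le]
      ring
    constructor
    · rw [hform]
      calc Trmin = transmission G u₁ := hu₁.symm
        _ ≤ ρ := hρdef ▸ le_csSup hbdd (hTru_mem u₁)
    · constructor
      · intro hEq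
        refine ⟨Trmin, fun u => le_antisymm ?_ (hTrle u)⟩
        calc transmission G u ≤ ρ := hρdef ▸ le_csSup hbdd (hTru_mem u)
          _ = Trmin := by rw [hEq, hform]
      · exact BWD
  · -- a < 1
    have hA1' : a < 1 := lt_of_le_of_ne ha1 hA1
    have h1a : (0:ℝ) < 1 - a := by linarith
    set v : V → ℝ := ⇑(hM.eigenvectorBasis i₀) with hvdef
    have hv : M *ᵥ v = ρ • v := by
      rw [← hvdef] at *
      rw [show M *ᵥ v = hM.eigenvalues i₀ • v from hM.mulVec_eigenvectorBasis i₀, hi₀]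
    have hvv : v ⬝ᵥ v = 1 := eigen_basis_dot hM i₀
    set y : V → ℝ := fun u => |v u| with hydef
    have hyM : M *ᵥ y = ρ • y := abs_eigenvector hM hMnn hub hv
    have hynn : ∀ u, 0 ≤ y u := fun u => abs_nonneg _
    have hyy : y ⬝ᵥ y = 1 := by
      rw [← hvv]
      exact Finset.sum_congr rfl fun u _ => abs_mul_abs_self _
    have hMy : ∀ u, ρ * y u
        = a * (transmission G u * y u) + (1 - a) * ∑ w, (G.dist u w : ℝ) * y w := by
      intro u
      have h1 := congrFun hyM u
      rw [hMdef] at h1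
      rw [genDist_mulVec] at h1
      rw [Pi.smul_apply, smul_eq_mul] at h1
      linarith [h1]
    clear_value v y
    have hoff : ∀ u w : V, u ≠ w → 0 < M u w := by
      intro u w huw
      have he : M u w = (1 - a) * (G.dist u w : ℝ) := by
        rw [hMdef]
        simp [genDistMatrix, distMatrix, Matrix.diagonal_apply_ne _ huw]
      have hd : 0 < G.dist u w := hconn.pos_dist_of_ne huw
      have hd' : (0:ℝ) < (G.dist u w : ℝ) := by exact_mod_cast hd
      rw [he]; positivity
    have hypos : ∀ u, 0 < y u := by
      by_contra hcon
      push_neg at hcon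
      obtain ⟨u, hu⟩ := hcon
      have hu0 : y u = 0 := le_antisymm hu (hynn u)
      have hsum0 : ∑ w, M u w * y w = 0 := by
        have h1 := congrFun hyM u
        rw [Pi.smul_apply, smul_eq_mul, hu0, mul_zero] at h1
        calc ∑ w, M u w * y w = (M *ᵥ y) u := rfl
          _ = 0 := h1
      have hall := (Finset.sum_eq_zero_iff_of_nonneg
        (fun w _ => mul_nonneg (hMnn u w) (hynn w))).mp hsum0
      have hy_all : ∀ w, y w = 0 := by
        intro w
        by_cases hw : u = w
        · rw [← hw]; exact hu0
        · exact (mul_eq_zero.mp (hall w (Finset.mem_univ w))).resolve_left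
            (ne_of_gt (hoff u w hw))
      have hdz : y ⬝ᵥ y = 0 := by
        simp [dotProduct, hy_all]
      rw [hyy] at hdz
      norm_num at hdz
    obtain ⟨p, -, hpmin⟩ := Finset.exists_min_image Finset.univ y
      ⟨Classical.arbitrary V, Finset.mem_univ _⟩
    have hp' : ∀ w, y p ≤ y w := fun w => hpmin w (Finset.mem_univ w)
    have key1 : ∀ j, transmission G j * y p ≤ ρ * y j := by
      intro j
      have h1 : transmission G j * y p ≤ ∑ w, (G.dist j w : ℝ) * y w := by
        rw [transmission, Finset.sum_mul]
        exact Finset.sum_le_sum fun w _ => mul_le_mul_of_nonneg_left (hp' w) (hdnn j w)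
      have h2 : transmission G j * y p ≤ transmission G j * y j :=
        mul_le_mul_of_nonneg_left (hp' j) (htr_nn j)
      have h3 := hMy j
      nlinarith [mul_le_mul_of_nonneg_left h2 ha0,
        mul_le_mul_of_nonneg_left h1 (le_of_lt h1a)]
    have hρTr : transmission G p ≤ ρ := by
      have h := key1 p
      exact le_of_mul_le_mul_right h (hypos p)
    have hρpos : 0 < ρ := lt_of_lt_of_le (htr_pos p) hρTr
    have hgap_split : ∑ w, (G.dist p w : ℝ) * (ρ * y w - transmission G w * y p)
        = ρ * (∑ w, (G.dist p w : ℝ) * y w) - secondTransmission G p * y p := by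
      rw [secondTransmission, Finset.mul_sum, Finset.sum_mul, ← Finset.sum_sub_distrib]
      exact Finset.sum_congr rfl fun w _ => by ring
    have hSgap_nn : 0 ≤ ∑ w, (G.dist p w : ℝ) * (ρ * y w - transmission G w * y p) :=
      Finset.sum_nonneg fun w _ => mul_nonneg (hdnn p w) (by linarith [key1 w])
    have keyid : a * transmission G p * ρ * y p + (1 - a) * (secondTransmission G p * y p)
        + (1 - a) * ∑ w, (G.dist p w : ℝ) * (ρ * y w - transmission G w * y p)
        = ρ ^ 2 * y p := by
      rw [hgap_split]
      have h3 := hMy p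
      nlinarith [h3]
    have key2 : a * transmission G p * ρ + (1 - a) * secondTransmission G p ≤ ρ ^ 2 := by
      have h6 : (a * transmission G p * ρ + (1 - a) * secondTransmission G p) * y p
          ≤ ρ ^ 2 * y p := by
        nlinarith [mul_nonneg (le_of_lt h1a) hSgap_nn]
      exact le_of_mul_le_mul_right h6 (hypos p)
    have key3 : a * Trmin * ρ + (1 - a) * Tmin ≤ ρ ^ 2 := by
      have l1 : a * Trmin * ρ ≤ a * transmission G p * ρ :=
        mul_le_mul_of_nonneg_right (mul_le_mul_of_nonneg_left (hTrle p) ha0) hρpos.le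
      have l2 : (1 - a) * Tmin ≤ (1 - a) * secondTransmission G p :=
        mul_le_mul_of_nonneg_left (hTle p) h1a.le
      linarith
    have hdisc_nn : (0:ℝ) ≤ a ^ 2 * Trmin ^ 2 + 4 * (1 - a) * Tmin := by
      have := mul_nonneg (mul_nonneg (by norm_num : (0:ℝ) ≤ 4) h1a.le) hTmin_nn
      nlinarith [sq_nonneg (a * Trmin)]
    have h2ρ : 0 ≤ 2 * ρ - a * Trmin := by
      have h0 : 0 ≤ (1 - a) * Trmin := mul_nonneg h1a.le hTrmin_pos.le
      have h9 := hTrle p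
      nlinarith
    have hsqrt : Real.sqrt (a ^ 2 * Trmin ^ 2 + 4 * (1 - a) * Tmin) ≤ 2 * ρ - a * Trmin := by
      rw [show (2 * ρ - a * Trmin) = Real.sqrt ((2 * ρ - a * Trmin) ^ 2) from
        (Real.sqrt_sq h2ρ).symm]
      apply Real.sqrt_le_sqrt
      have hexp : (2 * ρ - a * Trmin) ^ 2
          = 4 * (ρ ^ 2 - (a * Trmin * ρ + (1 - a) * Tmin))
            + (a ^ 2 * Trmin ^ 2 + 4 * (1 - a) * Tmin) := by ring
      rw [hexp]
      linarith
    constructor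
    · linarith
    · constructor
      · intro hEq
        -- forward direction: equality implies transmission regular
        rcases eq_or_lt_of_le hn2 with hc2 | hc3
        · -- n = 2 : always transmission regular
          have u₀ : V := Classical.arbitrary V
          obtain ⟨w₀, hw₀⟩ := Fintype.exists_ne_of_one_lt_card hcard2 u₀
          have huniv : (Finset.univ : Finset V) = {u₀, w₀} := by
            symm
            apply Finset.eq_of_subset_of_card_le (Finset.subset_univ _)
            rw [Finset.card_univ, hn, Finset.card_insert_of_notMem (by simpa using (Ne.symm hw₀)),
              Finset.card_singleton]
            omega
          have hpair : ∀ x z : V, x ≠ z → (Finset.univ : Finset V) = {x, z} →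
              transmission G x = (G.dist x z : ℝ) := by
            intro x z hxz huv
            have hns : x ∉ ({z} : Finset V) := by simpa using hxz
            rw [transmission, show ∑ v, (G.dist x v : ℝ)
              = ∑ v ∈ (Finset.univ : Finset V), (G.dist x v : ℝ) from rfl, huv,
              Finset.sum_insert hns, Finset.sum_singleton]
            simp
          refine ⟨(G.dist u₀ w₀ : ℝ), fun u => ?_⟩
          have hu : u = u₀ ∨ u = w₀ := by
            have hm := Finset.mem_univ u
            rw [huniv] at hm
            simpa using hm
          rcases hu with h | h
          · rw [h]; exact hpair u₀ w₀ (Ne.symm hw₀) huniv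
          · rw [h, hpair w₀ u₀ hw₀ (by rw [huniv, Finset.pair_comm]), SimpleGraph.dist_comm]
        · -- n ≥ 3
          have hroot : ρ ^ 2 = a * Trmin * ρ + (1 - a) * Tmin := by
            have hs2 : Real.sqrt (a ^ 2 * Trmin ^ 2 + 4 * (1 - a) * Tmin) ^ 2
                = a ^ 2 * Trmin ^ 2 + 4 * (1 - a) * Tmin := Real.sq_sqrt hdisc_nn
            have h2s : 2 * ρ - a * Trmin
                = Real.sqrt (a ^ 2 * Trmin ^ 2 + 4 * (1 - a) * Tmin) := by
              rw [hEq]; ring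
            have h4 : (2 * ρ - a * Trmin) ^ 2 = a ^ 2 * Trmin ^ 2 + 4 * (1 - a) * Tmin := by
              rw [h2s, hs2]
            linear_combination h4 / 4
          have hmid : a * transmission G p * ρ + (1 - a) * secondTransmission G p = ρ ^ 2 := by
            have l1 : a * Trmin * ρ ≤ a * transmission G p * ρ :=
              mul_le_mul_of_nonneg_right (mul_le_mul_of_nonneg_left (hTrle p) ha0) hρpos.le
            have l2 : (1 - a) * Tmin ≤ (1 - a) * secondTransmission G p :=
              mul_le_mul_of_nonneg_left (hTle p) h1a.le
            linarith
          have hSgap0 : ∑ w, (G.dist p w : ℝ) * (ρ * y w - transmission G w * y p) = 0 := by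
            have hz : (1 - a) * ∑ w, (G.dist p w : ℝ) * (ρ * y w - transmission G w * y p)
                = 0 := by
              linear_combination keyid - y p * hmid
            exact (mul_eq_zero.mp hz).resolve_left (ne_of_gt h1a)
          have eqB : ∀ j, j ≠ p → ρ * y j = transmission G j * y p := by
            intro j hj
            have hterm := (Finset.sum_eq_zero_iff_of_nonneg
              (fun w _ => mul_nonneg (hdnn p w) (by linarith [key1 w]))).mp hSgap0 j
              (Finset.mem_univ j)
            have hd : 0 < G.dist p j := hconn.pos_dist_of_ne (Ne.symm hj)
            have hd' : (0:ℝ) < (G.dist p j : ℝ) := by exact_mod_cast hd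
            have h5 := (mul_eq_zero.mp hterm).resolve_left (ne_of_gt hd')
            linarith
          have eqC : ∀ j, j ≠ p → ∀ k, k ≠ j → y k = y p := by
            intro j hj k hk
            have h3 := hMy j
            have hB := eqB j hj
            have hTrj_sum : ∑ w, (G.dist j w : ℝ) * y p = transmission G j * y p := by
              rw [transmission, Finset.sum_mul]
            have hS2split : ∑ w, (G.dist j w : ℝ) * (y w - y p)
                = (∑ w, (G.dist j w : ℝ) * y w) - transmission G j * y p := by
              rw [← hTrj_sum, ← Finset.sum_sub_distrib]
              exact Finset.sum_congr rfl fun w _ => by ring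
            have hS2nn : 0 ≤ ∑ w, (G.dist j w : ℝ) * (y w - y p) :=
              Finset.sum_nonneg fun w _ => mul_nonneg (hdnn j w) (by linarith [hp' w])
            have hTnn : 0 ≤ transmission G j * (y j - y p) :=
              mul_nonneg (htr_nn j) (by linarith [hp' j])
            have hzero2 : a * (transmission G j * (y j - y p))
                + (1 - a) * (∑ w, (G.dist j w : ℝ) * (y w - y p)) = 0 := by
              rw [hS2split]
              linear_combination hB - h3
            have hS20 : ∑ w, (G.dist j w : ℝ) * (y w - y p) = 0 := by
              have ha' : 0 ≤ a * (transmission G j * (y j - y p)) := mul_nonneg ha0 hTnn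
              refine le_antisymm ?_ hS2nn
              nlinarith
            have hterm := (Finset.sum_eq_zero_iff_of_nonneg
              (fun w _ => mul_nonneg (hdnn j w) (by linarith [hp' w]))).mp hS20 k
              (Finset.mem_univ k)
            have hd : 0 < G.dist j k := hconn.pos_dist_of_ne (Ne.symm hk)
            have hd' : (0:ℝ) < (G.dist j k : ℝ) := by exact_mod_cast hd
            have h5 := (mul_eq_zero.mp hterm).resolve_left (ne_of_gt hd')
            linarith
          have hconst : ∀ w, y w = y p := by
            intro w
            by_cases hw : w = p
            · rw [hw]
            · obtain ⟨j, hj⟩ : ∃ j, j ∉ ({p, w} : Finset V) := by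
                by_contra hcon2
                push_neg at hcon2
                have hsub : (Finset.univ : Finset V) ⊆ {p, w} := fun x _ => hcon2 x
                have hc := Finset.card_le_card hsub
                rw [Finset.card_univ, hn] at hc
                have hc2' := Finset.card_insert_le p ({w} : Finset V)
                rw [Finset.card_singleton] at hc2'
                omega
              simp only [Finset.mem_insert, Finset.mem_singleton, not_or] at hj
              exact eqC j hj.1 w (fun h => hj.2 h.symm)
          have hTr_all : ∀ u, transmission G u = ρ := by
            intro u
            have h3 := hMy u
            rw [Finset.sum_congr rfl (fun w _ => by rw [hconst w]), hconst u] at h3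
            rw [← Finset.sum_mul] at h3
            have hTru : ∑ w, (G.dist u w : ℝ) = transmission G u := rfl
            rw [hTru] at h3
            have h7 : ρ * y p = transmission G u * y p := by linear_combination h3
            exact (mul_right_cancel₀ (ne_of_gt (hypos p)) h7).symm
          exact ⟨ρ, hTr_all⟩
      · exact BWD
end
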